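/- arXiv:math/0407096 — 6 statements merged into one kernel-verified Lean document; each statement's English description precedes it below -/
import Mathlib

section
/- Let π : G̃ → G be a surjective group homomorphism, let G have a partial action on a set T, let X be a generating subset of G̃, and suppose there exists a map f : T → G̃ such that f(t•π(x)) = f(t)·x holds for every x ∈ X and every t ∈ T for which t•π(x) is defined. Then π is an isomorphism. -/
/-- A partial (right) action of a group `G` on a set `T`. -/
structure PartialAction (G : Type*) (T : Type*) [Group G] where
  act : T → G → Option T
  inj : ∀ (g : G) (t₁ t₂ u : T), act t₁ g = some u → act t₂ g = some u → t₁ = t₂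
  pa1 : ∀ t : T, act t 1 = some t
  pa2 : ∀ (g h : G) (t t' : T), act t g = some t' → act t' h = act t (g * h)
  pa3 : ∀ L : List G, ∃ t : T, ∀ g ∈ L, (act t g).isSome

/-- Proposition 1.3: if `π : G̃ → G` is a surjective group homomorphism, `G` acts
partially on `T`, `X` generates `G̃`, and `f : T → G̃` satisfies
`f(t • π x) = f t * x` for every generator `x ∈ X` whenever `t • π x` is defined,
then `π` is an isomorphism. -/
theorem stmt1 {G' G T : Type*} [Group G'] [Group G] (π : G' →* G)
    (hsurj : Function.Surjective π) (φ : PartialAction G T)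
    (X : Set G') (hX : Subgroup.closure X = ⊤)
    (f : T → G')
    (hf : ∀ x ∈ X, ∀ (t t' : T), φ.act t (π x) = some t' → f t' = f t * x) :
    Function.Bijective π := by
  refine ⟨(injective_iff_map_eq_one π).mpr ?_, hsurj⟩
  have key : ∀ l : List G', (∀ x ∈ l, x ∈ X ∨ x⁻¹ ∈ X) → ∀ t t' : T,
      φ.act t (π l.prod) = some t' →
      (∀ p ∈ l.inits, (φ.act t (π p.prod)).isSome) → f t' = f t * l.prod := by
    intro l
    induction l with
    | nil =>
      intro _ t t' h _
      simp only [List.prod_nil, map_one, φ.pa1 t, Option.some.injEq] at h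
      simp [← h]
    | cons x tl ih =>
      intro hl t t' h hpre
      have hx1 : [x] ∈ (x :: tl).inits := by simp [List.inits]
      have hsx := hpre [x] hx1
      simp only [List.prod_cons, List.prod_nil, mul_one] at hsx
      obtain ⟨t₁, ht₁⟩ := Option.isSome_iff_exists.mp hsx
      have hft₁ : f t₁ = f t * x := by
        rcases hl x (by simp) with hx | hx
        · exact hf x hx t t₁ ht₁
        · have h2 : φ.act t₁ (π x⁻¹) = some t := by
            rw [φ.pa2 (π x) (π x⁻¹) t t₁ ht₁, ← map_mul, mul_inv_cancel, map_one, φ.pa1]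
          have := hf x⁻¹ hx t₁ t h2
          rw [this]; group
      have h2 : φ.act t₁ (π tl.prod) = some t' := by
        rw [φ.pa2 (π x) (π tl.prod) t t₁ ht₁, ← map_mul, ← List.prod_cons]
        exact h
      have hpre₁ : ∀ p ∈ tl.inits, (φ.act t₁ (π p.prod)).isSome := by
        intro p hp
        rw [φ.pa2 (π x) (π p.prod) t t₁ ht₁, ← map_mul, ← List.prod_cons]
        exact hpre (x :: p) (by rw [List.inits_cons]; exact List.mem_cons.mpr (Or.inr (List.mem_map.mpr ⟨p, hp, rfl⟩)))
      have := ih (fun y hy => hl y (by simp [hy])) t₁ t' h2 hpre₁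
      rw [this, hft₁, List.prod_cons, mul_assoc]
  intro g' hg'
  have hg : g' ∈ (Subgroup.closure X).toSubmonoid := hX ▸ Subgroup.mem_top g'
  rw [Subgroup.closure_toSubmonoid] at hg
  obtain ⟨l, hl', hlp⟩ := Submonoid.exists_list_of_mem_closure hg
  have hl : ∀ x ∈ l, x ∈ X ∨ x⁻¹ ∈ X := by
    intro y hy
    rcases hl' y hy with h | h
    · exact Or.inl h
    · exact Or.inr h
  obtain ⟨t, ht⟩ := φ.pa3 (l.inits.map fun p => π p.prod)
  have hact : φ.act t (π l.prod) = some t := by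
    rw [hlp, hg', φ.pa1]
  have hpre : ∀ p ∈ l.inits, (φ.act t (π p.prod)).isSome := by
    intro p hp
    exact ht (π p.prod) (List.mem_map.mpr ⟨p, hp, rfl⟩)
  have := key l hl t t hact hpre
  rw [hlp] at this
  have : f t * 1 = f t * g' := by rw [mul_one]; exact this
  exact (mul_left_cancel this).symm
end

section
/- Let G be a group with a partial action on a set T, let X be a subset of G, and let R be a collection of relations (pairs of words over X ∪ X⁻¹) satisfied in G by the elements of X. Assume S is a discriminating subset of T and that, for each s ∈ S and each t in the G-orbit of s, a word w_t over X ∪ X⁻¹ is chosen so that t = s•w̄_t, where w̄_t is the evaluation of w_t in G. Then (X; R) is a presentation of G (that is, the canonical surjection from the group presented by (X; R) onto G is an isomorphism) if and only if, for all t, t' ∈ S•G and x ∈ X with t' = t•x (t•x defined), the words w_{t'} and w_t·x represent the same element of the group presented by (X; R). -/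
/-- Proposition 1.4: given a partial action of `G` on `T`, a subset `X` of `G`,
a family `R` of relations (pairs of words in `X ∪ X⁻¹`, encoded as elements of the
free group on `X`) satisfied in `G`, a discriminating subset `S` of `T`, and for each
`t` in `S • G` a chosen word `w t` connecting `t` to the element of `S` in its orbit,
the canonical surjection `π` from the group presented by `(X; R)` onto `G` is an
isomorphism if and only if `t' = t • x` implies that `w t'` and `(w t)·x` represent
the same element of the presented group. -/
theorem stmt2 {G T : Type*} [Group G] (φ : PartialAction G T)
    (X : Set G) (R : Set (FreeGroup X × FreeGroup X))
    (hR : ∀ r ∈ R, FreeGroup.lift Subtype.val r.1 = FreeGroup.lift Subtype.val r.2)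
    (S : Set T)
    -- `S` is discriminating:
    (hS1 : ∀ L : List G, ∃ t : T, (∃ s ∈ S, ∃ g : G, φ.act s g = some t) ∧
      ∀ g ∈ L, (φ.act t g).isSome)
    (hS2 : ∀ s ∈ S, ∀ s' ∈ S, (∃ g : G, φ.act s g = some s') → s = s')
    (hS3 : ∀ s ∈ S, ∀ g : G, φ.act s g = some s → g = 1)
    -- chosen words `w t` with `t = s • (evaluation of w t)`:
    (w : T → FreeGroup X)
    (hw : ∀ s ∈ S, ∀ t : T, (∃ g : G, φ.act s g = some t) →
      φ.act s (FreeGroup.lift Subtype.val (w t)) = some t)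
    -- the canonical surjection from the presented group onto `G`:
    (π : PresentedGroup {x : FreeGroup X | ∃ r ∈ R, x = r.1 * r.2⁻¹} →* G)
    (hπ : ∀ x : X, π (PresentedGroup.of x) = x.val) :
    Function.Bijective π ↔
      (∀ t t' : T, (∃ s ∈ S, ∃ g : G, φ.act s g = some t) →
        (∃ s ∈ S, ∃ g : G, φ.act s g = some t') →
        ∀ x : X, φ.act t x.val = some t' →
          PresentedGroup.mk {x : FreeGroup X | ∃ r ∈ R, x = r.1 * r.2⁻¹} (w t') =
          PresentedGroup.mk {x : FreeGroup X | ∃ r ∈ R, x = r.1 * r.2⁻¹}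
            (w t * FreeGroup.of x)) := by
  classical
  revert π hπ
  set E : FreeGroup X →* G := FreeGroup.lift Subtype.val with hE
  set rels : Set (FreeGroup X) := {x : FreeGroup X | ∃ r ∈ R, x = r.1 * r.2⁻¹} with hrels
  intro π hπ
  -- π ∘ mk = E
  have hA : ∀ u : FreeGroup X, π (PresentedGroup.mk rels u) = E u := by
    have h : π.comp (PresentedGroup.mk rels) = E :=
      FreeGroup.ext_hom _ _ (fun a => by
        simpa [PresentedGroup.of, hE] using hπ a)
    intro u
    exact DFunLike.congr_fun h u
  -- cancellation at a base point
  have hcan : ∀ s ∈ S, ∀ (a b : G) (t : T),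
      φ.act s a = some t → φ.act s b = some t → a = b := by
    intro s hs a b t ha hb
    have h1 : φ.act t b⁻¹ = some s := by
      rw [φ.pa2 b b⁻¹ s t hb, mul_inv_cancel, φ.pa1]
    have h2 : φ.act s (a * b⁻¹) = some s := by
      rw [← φ.pa2 a b⁻¹ s t ha, h1]
    exact mul_inv_eq_one.mp (hS3 s hs _ h2)
  -- S•G is closed under the action
  have hPstep : ∀ t t' : T, (∃ s ∈ S, ∃ g : G, φ.act s g = some t) →
      (∃ g : G, φ.act t g = some t') → (∃ s ∈ S, ∃ g : G, φ.act s g = some t') := by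
    rintro t t' ⟨s, hs, g, hg⟩ ⟨h, hh⟩
    exact ⟨s, hs, g * h, by rw [← φ.pa2 g h s t hg, hh]⟩
  -- evaluation of chosen words transforms correctly
  have hword : ∀ (t t₁ : T), ∀ s ∈ S, (∃ g : G, φ.act s g = some t) →
      ∀ g : G, φ.act t g = some t₁ → E (w t₁) = E (w t) * g := by
    intro t t₁ s hs hex g hg
    have ht : φ.act s (E (w t)) = some t := hw s hs t hex
    have ht1 : φ.act s (E (w t) * g) = some t₁ := by
      rw [← φ.pa2 (E (w t)) g s t ht, hg]
    have ht1' : φ.act s (E (w t₁)) = some t₁ := hw s hs t₁ ⟨E (w t) * g, ht1⟩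
    exact hcan s hs _ _ t₁ ht1' ht1
  constructor
  · -- π bijective → the word condition
    rintro ⟨hinj, -⟩ t t' hPt hPt' x hx
    obtain ⟨s, hs, g, hg⟩ := hPt
    have hEw : E (w t') = E (w t) * x.val := hword t t' s hs ⟨g, hg⟩ x.val hx
    apply hinj
    rw [hA, hA, hEw, map_mul]
    simp [hE]
  · -- word condition → π bijective
    intro H
    -- one-letter step
    have hstep : ∀ (p : X × Bool) (t t₁ : T), (∃ s ∈ S, ∃ g : G, φ.act s g = some t) →
        φ.act t (E (FreeGroup.mk [p])) = some t₁ →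
        PresentedGroup.mk rels (w t₁) =
          PresentedGroup.mk rels (w t) * PresentedGroup.mk rels (FreeGroup.mk [p]) := by
      rintro ⟨x, b⟩ t t₁ hPt ht₁
      have hPt₁ : ∃ s ∈ S, ∃ g : G, φ.act s g = some t₁ :=
        hPstep t t₁ hPt ⟨_, ht₁⟩
      cases b with
      | true =>
        have hof : FreeGroup.mk [(x, true)] = FreeGroup.of x := rfl
        rw [hof] at ht₁ ⊢
        have hEx : E (FreeGroup.of x) = x.val := by simp [hE]
        rw [hEx] at ht₁
        have := H t t₁ hPt hPt₁ x ht₁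
        rw [this, map_mul]
      | false =>
        have hof : FreeGroup.mk [(x, false)] = (FreeGroup.of x)⁻¹ := by
          rw [show FreeGroup.of x = FreeGroup.mk [(x, true)] from rfl,
            FreeGroup.inv_mk]
          rfl
        rw [hof] at ht₁ ⊢
        have hEx : E (FreeGroup.of x)⁻¹ = (x.val)⁻¹ := by simp [hE]
        rw [hEx] at ht₁
        have ht₁x : φ.act t₁ x.val = some t := by
          rw [φ.pa2 (x.val)⁻¹ x.val t t₁ ht₁, inv_mul_cancel, φ.pa1]
        have := H t₁ t hPt₁ hPt x ht₁x
        rw [map_mul] at this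
        rw [map_inv, eq_comm, mul_inv_eq_iff_eq_mul, ← this]
    -- main claim, by induction on words
    have claim : ∀ ℓ : List (X × Bool), ∀ t : T, (∃ s ∈ S, ∃ g : G, φ.act s g = some t) →
        (∀ p ∈ ℓ.inits, (φ.act t (E (FreeGroup.mk p))).isSome) →
        ∀ t', φ.act t (E (FreeGroup.mk ℓ)) = some t' →
        PresentedGroup.mk rels (w t') =
          PresentedGroup.mk rels (w t) * PresentedGroup.mk rels (FreeGroup.mk ℓ) := by
      intro ℓ
      induction ℓ with
      | nil =>
        intro t hPt _ t' ht'
        have h1 : FreeGroup.mk ([] : List (X × Bool)) = 1 := FreeGroup.one_eq_mk.symm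
        rw [h1, map_one, φ.pa1] at ht'
        obtain rfl : t = t' := by injection ht'
        rw [h1, map_one, mul_one]
      | cons p ℓ' ih =>
        intro t hPt hpre t' ht'
        have hsplit : ∀ q : List (X × Bool),
            FreeGroup.mk (p :: q) = FreeGroup.mk [p] * FreeGroup.mk q := by
          intro q
          rw [FreeGroup.mul_mk]
          rfl
        have h1 : (φ.act t (E (FreeGroup.mk [p]))).isSome :=
          hpre [p] ((List.mem_inits _ _).2 ⟨ℓ', rfl⟩)
        obtain ⟨t₁, ht₁⟩ := Option.isSome_iff_exists.mp h1
        have hPt₁ : ∃ s ∈ S, ∃ g : G, φ.act s g = some t₁ :=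
          hPstep t t₁ hPt ⟨_, ht₁⟩
        have hpre' : ∀ q ∈ ℓ'.inits, (φ.act t₁ (E (FreeGroup.mk q))).isSome := by
          intro q hq
          have hq' : (φ.act t (E (FreeGroup.mk (p :: q)))).isSome := by
            apply hpre (p :: q)
            rw [List.mem_inits]
            obtain ⟨r, hr⟩ := (List.mem_inits _ _).1 hq
            exact ⟨r, by simp [hr]⟩
          rw [hsplit q, map_mul] at hq'
          rw [φ.pa2 (E (FreeGroup.mk [p])) (E (FreeGroup.mk q)) t t₁ ht₁]
          exact hq'
        have ht'' : φ.act t₁ (E (FreeGroup.mk ℓ')) = some t' := by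
          rw [φ.pa2 (E (FreeGroup.mk [p])) (E (FreeGroup.mk ℓ')) t t₁ ht₁,
            ← map_mul, ← hsplit]
          exact ht'
        have hrec := ih t₁ hPt₁ hpre' t' ht''
        rw [hrec, hstep p t t₁ hPt ht₁, hsplit ℓ', map_mul, mul_assoc]
    constructor
    · -- injective
      rw [injective_iff_map_eq_one]
      intro k hk
      obtain ⟨u, rfl⟩ := PresentedGroup.mk_surjective rels k
      have hEu : E u = 1 := by rw [← hA]; exact hk
      obtain ⟨t, hPt, hL⟩ := hS1 (u.toWord.inits.map fun p => E (FreeGroup.mk p))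
      have hpre : ∀ p ∈ u.toWord.inits, (φ.act t (E (FreeGroup.mk p))).isSome :=
        fun p hp => hL _ (List.mem_map_of_mem hp)
      have htl : φ.act t (E (FreeGroup.mk u.toWord)) = some t := by
        rw [FreeGroup.mk_toWord, hEu, φ.pa1]
      have hmain := claim u.toWord t hPt hpre t htl
      rw [FreeGroup.mk_toWord] at hmain
      exact mul_eq_left.mp hmain.symm
    · -- surjective
      intro g
      obtain ⟨t, hPt, hL⟩ := hS1 [g]
      have hg : (φ.act t g).isSome := hL g (by simp)
      obtain ⟨t'', ht''⟩ := Option.isSome_iff_exists.mp hg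
      obtain ⟨s, hs, h, hh⟩ := hPt
      have hEw : E (w t'') = E (w t) * g := hword t t'' s hs ⟨h, hh⟩ g ht''
      refine ⟨(PresentedGroup.mk rels (w t))⁻¹ * PresentedGroup.mk rels (w t''), ?_⟩
      rw [map_mul, map_inv, hA, hA, hEw]
      group
end

section
/- Every element of the geometry monoid 𝒢(A) admits a seed consisting of injective coloured trees; that is, for each g ∈ 𝒢(A) there exists a pair (t, t') of injective coloured trees such that, as a set of pairs, g equals the set of all pairs (t^σ, t'^σ) with σ a substitution. -/
/-- Coloured trees: finite rooted binary trees whose leaves are labelled by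
positive integers. -/
inductive CTree : Type
  | leaf : ℕ+ → CTree
  | node : CTree → CTree → CTree

/-- Partial maps on coloured trees, as a monoid under reversed composition:
`(f * g) t = (f t).bind g`, i.e. `f * g` means "`f` then `g`". -/
abbrev PMap : Type := CTree → Option CTree

instance : Monoid PMap where
  one := fun t => some t
  mul f g := fun t => (f t).bind g
  mul_assoc f g h := by
    funext t
    show ((f t).bind g).bind h = (f t).bind fun u => (g u).bind h
    cases f t <;> rfl
  one_mul f := rfl
  mul_one f := by
    funext t
    show (f t).bind some = f t
    cases f t <;> rfl

/-- The associativity operator `A`: maps `t₁·(t₂·t₃)` to `(t₁·t₂)·t₃`. -/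
def opA : PMap
  | .node t₁ (.node t₂ t₃) => some (.node (.node t₁ t₂) t₃)
  | _ => none

/-- The inverse partial map of `A`: maps `(t₁·t₂)·t₃` to `t₁·(t₂·t₃)`. -/
def opAi : PMap
  | .node (.node t₁ t₂) t₃ => some (.node t₁ (.node t₂ t₃))
  | _ => none

/-- The commutativity operator `C`: maps `t₁·t₂` to `t₂·t₁` (its own inverse
as a partial map). -/
def opC : PMap
  | .node t₁ t₂ => some (.node t₂ t₁)
  | _ => none

/-- The semi-commutativity operator `S`: maps `t₁·(t₂·t₃)` to `t₂·(t₁·t₃)`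
(its own inverse as a partial map). -/
def opS : PMap
  | .node t₁ (.node t₂ t₃) => some (.node t₂ (.node t₁ t₃))
  | _ => none

/-- Addresses: finite words over `{0,1}`, with `false` = 0 (left) and `true` = 1
(right). -/
abbrev Addr := List Bool

/-- `applyAt α f` is the shifted operator `∂_α f`, applying `f` to the
`α`-subtree of its argument. -/
def applyAt : Addr → PMap → PMap
  | [], f => f
  | false :: α, f => fun t => match t with
      | .node t₁ t₂ => (applyAt α f t₁).map (fun s => .node s t₂)
      | _ => none
  | true :: α, f => fun t => match t with
      | .node t₁ t₂ => (applyAt α f t₂).map (fun s => .node t₁ s)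
      | _ => none

/-- Two partial maps are near-equal if they are both defined on at least one common
element, and they agree wherever both are defined. -/
def NearEq (f g : PMap) : Prop :=
  (∃ t, (f t).isSome ∧ (g t).isSome) ∧
  ∀ t, (f t).isSome → (g t).isSome → f t = g t

/-- The generators of the geometry monoid of associativity: the operators `A_α`
and their inverse partial maps. -/
def genA : Set PMap := {f | ∃ α : Addr, f = applyAt α opA ∨ f = applyAt α opAi}

/-- The geometry monoid `𝒢(A)` of associativity. -/
def GeoA : Submonoid PMap := Submonoid.closure genA

/-- Applying a substitution `σ` to a coloured tree: replace each leaf `•ₓ` by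
the tree `σ x`. -/
def subst (σ : ℕ+ → CTree) : CTree → CTree
  | .leaf x => σ x
  | .node t₁ t₂ => .node (subst σ t₁) (subst σ t₂)

/-- The list of leaf labels of a coloured tree, from left to right. -/
def labels : CTree → List ℕ+
  | .leaf x => [x]
  | .node t₁ t₂ => labels t₁ ++ labels t₂

/-- A coloured tree is injective if its labels are pairwise distinct. -/
def InjTree (t : CTree) : Prop := (labels t).Nodup

section Aux

open CTree

lemma subst_subst (σ τ : ℕ+ → CTree) (t : CTree) :
    subst σ (subst τ t) = subst (fun x => subst σ (τ x)) t := by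
  induction t with
  | leaf x => rfl
  | node a b iha ihb => simp [subst, iha, ihb]

lemma subst_congr {σ σ' : ℕ+ → CTree} {t : CTree}
    (h : ∀ x ∈ labels t, σ x = σ' x) : subst σ t = subst σ' t := by
  induction t with
  | leaf x => exact h x (by simp [labels])
  | node a b iha ihb =>
      simp only [subst]
      rw [iha fun x hx => h x (by simp [labels, hx]),
        ihb fun x hx => h x (by simp [labels, hx])]

lemma subst_id (t : CTree) : subst (fun x => CTree.leaf x) t = t := by
  induction t with
  | leaf x => rfl
  | node a b iha ihb => simp [subst, iha, ihb]

lemma labels_subst (σ : ℕ+ → CTree) (t : CTree) :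
    labels (subst σ t) = (labels t).flatMap (fun x => labels (σ x)) := by
  induction t with
  | leaf x => simp [subst, labels]
  | node a b iha ihb => simp [subst, labels, iha, ihb]

end Aux
section Gen

lemma pnat_lt_add (n k : ℕ+) : n < n + k := by
  rw [← PNat.coe_lt_coe]; simp [PNat.add_coe]

lemma pnat_le_add (n k : ℕ+) : n ≤ n + k := le_of_lt (pnat_lt_add n k)

/-- The canonical seed pair for `A_α`, with fresh labels starting at `n`. -/
def skel : Addr → ℕ+ → CTree × CTree
  | [], n => (.node (.leaf n) (.node (.leaf (n+1)) (.leaf (n+2))),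
              .node (.node (.leaf n) (.leaf (n+1))) (.leaf (n+2)))
  | false :: α, n => (.node (skel α (n+1)).1 (.leaf n), .node (skel α (n+1)).2 (.leaf n))
  | true :: α, n => (.node (.leaf n) (skel α (n+1)).1, .node (.leaf n) (skel α (n+1)).2)

lemma skel_labels : ∀ (α : Addr) (n : ℕ+),
    labels (skel α n).2 = labels (skel α n).1 ∧
    (∀ x ∈ labels (skel α n).1, n ≤ x) ∧ (labels (skel α n).1).Nodup
  | [], n => by
      refine ⟨rfl, ?_, ?_⟩
      · intro x hx
        simp [skel, labels] at hx
        rcases hx with rfl | rfl | rfl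
        · exact le_refl _
        · exact pnat_le_add n 1
        · exact pnat_le_add n 2
      · have h1 : (n : ℕ+) ≠ n + 1 := ne_of_lt (pnat_lt_add n 1)
        have h2 : (n : ℕ+) ≠ n + 2 := ne_of_lt (pnat_lt_add n 2)
        have h3 : (n + 1 : ℕ+) ≠ n + 2 := by
          have : n + 1 < n + 2 := by
            rw [← PNat.coe_lt_coe]; simp [PNat.add_coe]
          exact ne_of_lt this
        simp [skel, labels, h1, h2, h3]
  | false :: α, n => by
      obtain ⟨he, hle, hnd⟩ := skel_labels α (n+1)
      refine ⟨by simp [skel, labels, he], ?_, ?_⟩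
      · intro x hx
        simp [skel, labels] at hx
        rcases hx with hx | rfl
        · exact le_trans (pnat_le_add n 1) (hle x hx)
        · exact le_refl _
      · simp only [skel, labels, List.nodup_append]
        refine ⟨hnd, List.nodup_singleton _, ?_⟩
        intro x hx
        have hgt : n < x := lt_of_lt_of_le (pnat_lt_add n 1) (hle x hx)
        simp only [List.mem_singleton]
        intro b hb h; subst hb; subst h; exact lt_irrefl _ hgt
  | true :: α, n => by
      obtain ⟨he, hle, hnd⟩ := skel_labels α (n+1)
      refine ⟨by simp [skel, labels, he], ?_, ?_⟩
      · intro x hx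
        simp [skel, labels] at hx
        rcases hx with rfl | hx
        · exact le_refl _
        · exact le_trans (pnat_le_add n 1) (hle x hx)
      · simp only [skel, labels, List.nodup_cons, List.nil_append, List.singleton_append]
        refine ⟨?_, hnd⟩
        intro hn
        exact absurd (hle n hn) (by
          intro h
          exact absurd (lt_of_lt_of_le (pnat_lt_add n 1) h) (lt_irrefl n))

end Gen
section GenSeed

lemma gen_seedA : ∀ (α : Addr) (n : ℕ+) (u v : CTree),
    applyAt α opA u = some v ↔
      ∃ σ : ℕ+ → CTree, u = subst σ (skel α n).1 ∧ v = subst σ (skel α n).2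
  | [], n, u, v => by
      have h1 : (n + 1 : ℕ+) ≠ n := (ne_of_lt (pnat_lt_add n 1)).symm
      have h2 : (n + 2 : ℕ+) ≠ n := (ne_of_lt (pnat_lt_add n 2)).symm
      have h3 : (n + 2 : ℕ+) ≠ n + 1 := by
        have : n + 1 < n + 2 := by rw [← PNat.coe_lt_coe]; simp [PNat.add_coe]
        exact (ne_of_lt this).symm
      constructor
      · intro h
        match u, h with
        | .node a (.node b c), h =>
          simp only [applyAt, opA, Option.some.injEq] at h
          subst h
          refine ⟨fun x => if x = n then a else if x = n + 1 then b else c, ?_, ?_⟩ <;>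
            simp [skel, subst, h1, h2, h3]
      · rintro ⟨σ, rfl, rfl⟩
        simp [skel, subst, applyAt, opA]
  | false :: α, n, u, v => by
      constructor
      · intro h
        match u with
        | .leaf x => simp [applyAt] at h
        | .node u₁ u₂ =>
          simp only [applyAt, Option.map_eq_some_iff] at h
          obtain ⟨v₁, hv₁, rfl⟩ := h
          obtain ⟨σ, rfl, rfl⟩ := (gen_seedA α (n+1) u₁ v₁).1 hv₁
          obtain ⟨he, hle, -⟩ := skel_labels α (n+1)
          refine ⟨Function.update σ n u₂, ?_, ?_⟩ <;>
          · simp only [skel, subst, Function.update_self]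
            congr 1
            refine subst_congr fun x hx => ?_
            have hne : x ≠ n := by
              rw [he] at *
              intro hh
              exact absurd (lt_of_lt_of_le (pnat_lt_add n 1) (hle x (by rw [← he]; exact (by rwa [he] at hx)))) (by subst hh; exact lt_irrefl x)
            simp [Function.update_of_ne hne]
      · rintro ⟨σ, rfl, rfl⟩
        have := (gen_seedA α (n+1) (subst σ (skel α (n+1)).1) (subst σ (skel α (n+1)).2)).2
          ⟨σ, rfl, rfl⟩
        simp [skel, subst, applyAt, this]
  | true :: α, n, u, v => by
      constructor
      · intro h
        match u with
        | .leaf x => simp [applyAt] at h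
        | .node u₁ u₂ =>
          simp only [applyAt, Option.map_eq_some_iff] at h
          obtain ⟨v₂, hv₂, rfl⟩ := h
          obtain ⟨σ, rfl, rfl⟩ := (gen_seedA α (n+1) u₂ v₂).1 hv₂
          obtain ⟨he, hle, -⟩ := skel_labels α (n+1)
          refine ⟨Function.update σ n u₁, ?_, ?_⟩ <;>
          · simp only [skel, subst, Function.update_self]
            congr 1
            refine subst_congr fun x hx => ?_
            have hne : x ≠ n := by
              intro hh
              have hx' : x ∈ labels (skel α (n+1)).1 := by
                first
                  | exact hx
                  | (rw [← he]; exact hx)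
              exact absurd (lt_of_lt_of_le (pnat_lt_add n 1) (hle x hx'))
                (by subst hh; exact lt_irrefl x)
            simp [Function.update_of_ne hne]
      · rintro ⟨σ, rfl, rfl⟩
        have := (gen_seedA α (n+1) (subst σ (skel α (n+1)).1) (subst σ (skel α (n+1)).2)).2
          ⟨σ, rfl, rfl⟩
        simp [skel, subst, applyAt, this]

end GenSeed
section Flip

lemma applyAt_flip {f g : PMap} (H : ∀ u v, f u = some v ↔ g v = some u) :
    ∀ (α : Addr) (u v : CTree), applyAt α f u = some v ↔ applyAt α g v = some u
  | [], u, v => H u v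
  | false :: α, u, v => by
      match u, v with
      | .leaf _, v => simp [applyAt]; cases v <;> simp [applyAt, Option.map_eq_some_iff]
      | .node u₁ u₂, .leaf _ => simp [applyAt, Option.map_eq_some_iff]
      | .node u₁ u₂, .node v₁ v₂ =>
          simp only [applyAt, Option.map_eq_some_iff]
          constructor
          · rintro ⟨w, hw, h⟩
            cases h
            exact ⟨u₁, (applyAt_flip H α u₁ v₁).1 hw, rfl⟩
          · rintro ⟨w, hw, h⟩
            cases h
            exact ⟨v₁, (applyAt_flip H α u₁ v₁).2 hw, rfl⟩
  | true :: α, u, v => by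
      match u, v with
      | .leaf _, v => simp [applyAt]; cases v <;> simp [applyAt, Option.map_eq_some_iff]
      | .node u₁ u₂, .leaf _ => simp [applyAt, Option.map_eq_some_iff]
      | .node u₁ u₂, .node v₁ v₂ =>
          simp only [applyAt, Option.map_eq_some_iff]
          constructor
          · rintro ⟨w, hw, h⟩
            cases h
            exact ⟨u₂, (applyAt_flip H α u₂ v₂).1 hw, rfl⟩
          · rintro ⟨w, hw, h⟩
            cases h
            exact ⟨v₂, (applyAt_flip H α u₂ v₂).2 hw, rfl⟩

lemma opAi_flip (u v : CTree) : opAi u = some v ↔ opA v = some u := by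
  match u with
  | .leaf _ => simp [opAi]; cases v with
      | leaf => simp [opA]
      | node a b => cases b <;> simp [opA]
  | .node (.leaf _) _ => simp [opAi]; cases v with
      | leaf => simp [opA]
      | node a b => cases b <;> simp [opA] <;> rintro rfl rfl <;> simp
  | .node (.node a b) c =>
      simp only [opAi, Option.some.injEq]
      cases v with
      | leaf => simp [opA]
      | node x y => cases y with
          | leaf => simp [opA]
          | node p q =>
              simp only [opA, Option.some.injEq, CTree.node.injEq]
              constructor
              · rintro ⟨rfl, rfl, rfl⟩; exact ⟨⟨rfl, rfl⟩, rfl⟩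
              · rintro ⟨⟨rfl, rfl⟩, rfl⟩; exact ⟨rfl, rfl, rfl⟩

lemma gen_seedAi (α : Addr) (n : ℕ+) (u v : CTree) :
    applyAt α opAi u = some v ↔
      ∃ σ : ℕ+ → CTree, u = subst σ (skel α n).2 ∧ v = subst σ (skel α n).1 := by
  rw [applyAt_flip opAi_flip α u v, gen_seedA α n v u]
  exact ⟨fun ⟨σ, h1, h2⟩ => ⟨σ, h2, h1⟩, fun ⟨σ, h1, h2⟩ => ⟨σ, h2, h1⟩⟩

end Flip
section Unify

/-- Most general unifier tree of two label-disjoint injective trees. -/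
def unify : CTree → CTree → CTree
  | .leaf _, s => s
  | .node a b, .leaf _ => .node a b
  | .node a b, .node c d => .node (unify a c) (unify b d)

/-- Left unifying substitution. -/
def uL : CTree → CTree → ℕ+ → CTree
  | .leaf x, s => fun y => if y = x then s else .leaf y
  | .node _ _, .leaf _ => fun y => .leaf y
  | .node a b, .node c d => fun y => if y ∈ labels a then uL a c y else uL b d y

/-- Right unifying substitution. -/
def uR : CTree → CTree → ℕ+ → CTree
  | .leaf _, _ => fun y => .leaf y
  | .node a b, .leaf x => fun y => if y = x then .node a b else .leaf y
  | .node a b, .node c d => fun y => if y ∈ labels c then uR a c y else uR b d y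

/-- Label-disjointness of trees. -/
def Disj (t s : CTree) : Prop := ∀ x ∈ labels t, x ∉ labels s

lemma disj_node_left {a b s : CTree} (h : Disj (.node a b) s) : Disj a s ∧ Disj b s := by
  constructor <;> intro x hx <;> exact h x (by simp [labels, hx])

lemma disj_node_right {t c d : CTree} (h : Disj t (.node c d)) : Disj t c ∧ Disj t d := by
  constructor <;> intro x hx <;> have := h x hx <;> simp [labels] at this <;> tauto

lemma nodup_node {a b : CTree} (h : (labels (CTree.node a b)).Nodup) :
    (labels a).Nodup ∧ (labels b).Nodup ∧ Disj a b := by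
  simp only [labels, List.nodup_append] at h
  exact ⟨h.1, h.2.1, fun x hx hx' => h.2.2 x hx x hx' rfl⟩

lemma subst_uL : ∀ (t s : CTree), (labels t).Nodup → subst (uL t s) t = unify t s
  | .leaf x, s, _ => by simp [uL, subst, unify]
  | .node a b, .leaf y, _ => by
      show subst (fun y => CTree.leaf y) (.node a b) = _
      rw [subst_id]; rfl
  | .node a b, .node c d, h => by
      obtain ⟨ha, hb, hab⟩ := nodup_node h
      show CTree.node (subst (uL (.node a b) (.node c d)) a)
        (subst (uL (.node a b) (.node c d)) b) = CTree.node (unify a c) (unify b d)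
      congr 1
      · rw [← subst_uL a c ha]
        exact subst_congr fun x hx => by simp [uL, hx]
      · rw [← subst_uL b d hb]
        refine subst_congr fun x hx => ?_
        have hna : x ∉ labels a := fun hxa => hab x hxa hx
        simp [uL, hna]

lemma subst_uR : ∀ (t s : CTree), (labels s).Nodup → subst (uR t s) s = unify t s
  | .leaf x, s, _ => by
      show subst (fun y => CTree.leaf y) s = _
      rw [subst_id]; cases s <;> rfl
  | .node a b, .leaf y, _ => by simp [uR, subst, unify]
  | .node a b, .node c d, h => by
      obtain ⟨hc, hd, hcd⟩ := nodup_node h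
      show CTree.node (subst (uR (.node a b) (.node c d)) c)
        (subst (uR (.node a b) (.node c d)) d) = CTree.node (unify a c) (unify b d)
      congr 1
      · rw [← subst_uR a c hc]
        exact subst_congr fun x hx => by simp [uR, hx]
      · rw [← subst_uR b d hd]
        refine subst_congr fun x hx => ?_
        have hnc : x ∉ labels c := fun hxc => hcd x hxc hx
        simp [uR, hnc]

lemma mem_labels_unify : ∀ (t s : CTree) (x : ℕ+),
    x ∈ labels (unify t s) → x ∈ labels t ∨ x ∈ labels s
  | .leaf _, s, x => fun h => Or.inr h
  | .node a b, .leaf _, x => fun h => Or.inl h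
  | .node a b, .node c d, x => by
      intro h
      simp only [unify, labels, List.mem_append] at h ⊢
      rcases h with h | h
      · rcases mem_labels_unify a c x h with h | h <;> tauto
      · rcases mem_labels_unify b d x h with h | h <;> tauto

lemma nodup_unify : ∀ (t s : CTree), (labels t).Nodup → (labels s).Nodup → Disj t s →
    (labels (unify t s)).Nodup
  | .leaf _, s, _, hs, _ => hs
  | .node a b, .leaf _, ht, _, _ => ht
  | .node a b, .node c d, ht, hs, hd => by
      obtain ⟨ha, hb, hab⟩ := nodup_node ht
      obtain ⟨hc, hdd, hcd⟩ := nodup_node hs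
      obtain ⟨hdl, hdr⟩ := disj_node_left hd
      obtain ⟨hac, had⟩ := disj_node_right hdl
      obtain ⟨hbc, hbd⟩ := disj_node_right hdr
      show (labels (unify a c) ++ labels (unify b d)).Nodup
      rw [List.nodup_append]
      refine ⟨nodup_unify a c ha hc hac, nodup_unify b d hb hdd hbd, ?_⟩
      intro x hx x' hx' hxx; subst hxx
      rcases mem_labels_unify a c x hx with h | h <;>
        rcases mem_labels_unify b d x hx' with h' | h'
      · exact hab x h h'
      · exact had x h h'
      · exact hbc x h' h
      · exact hcd x h h'

end Unify
section MGU

lemma labels_uL_subset {t s : CTree} (ht : (labels t).Nodup) {x : ℕ+} (hx : x ∈ labels t) :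
    ∀ z ∈ labels (uL t s x), z ∈ labels (unify t s) := by
  intro z hz
  rw [← subst_uL t s ht, labels_subst, List.mem_flatMap]
  exact ⟨x, hx, hz⟩

lemma labels_uR_subset {t s : CTree} (hs : (labels s).Nodup) {y : ℕ+} (hy : y ∈ labels s) :
    ∀ z ∈ labels (uR t s y), z ∈ labels (unify t s) := by
  intro z hz
  rw [← subst_uR t s hs, labels_subst, List.mem_flatMap]
  exact ⟨y, hy, hz⟩

lemma mgu : ∀ (t s : CTree), (labels t).Nodup → (labels s).Nodup → Disj t s →
    ∀ σ₁ σ₂ : ℕ+ → CTree, subst σ₁ t = subst σ₂ s →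
    ∃ σ : ℕ+ → CTree, (∀ x ∈ labels t, σ₁ x = subst σ (uL t s x)) ∧
         (∀ y ∈ labels s, σ₂ y = subst σ (uR t s y))
  | .leaf x, s, _, _, _, σ₁, σ₂, h => by
      refine ⟨σ₂, ?_, ?_⟩
      · intro z hz
        simp only [labels, List.mem_singleton] at hz
        subst hz
        simpa [uL, subst] using h
      · intro y _
        simp [uR, subst]
  | .node a b, .leaf y, _, _, _, σ₁, σ₂, h => by
      refine ⟨σ₁, ?_, ?_⟩
      · intro z _
        simp [uL, subst]
      · intro z hz
        simp only [labels, List.mem_singleton] at hz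
        subst hz
        simpa [uR, subst] using h.symm
  | .node a b, .node c d, ht, hs, hd, σ₁, σ₂, h => by
      obtain ⟨ha, hb, hab⟩ := nodup_node ht
      obtain ⟨hc, hdd, hcd⟩ := nodup_node hs
      obtain ⟨hdl, hdr⟩ := disj_node_left hd
      obtain ⟨hac, had⟩ := disj_node_right hdl
      obtain ⟨hbc, hbd⟩ := disj_node_right hdr
      have h1 : subst σ₁ a = subst σ₂ c := by
        simpa [subst, CTree.node.injEq] using congrArg (fun u => match u with
          | CTree.node p _ => p | _ => u) h
      have h2 : subst σ₁ b = subst σ₂ d := by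
        simpa [subst, CTree.node.injEq] using congrArg (fun u => match u with
          | CTree.node _ q => q | _ => u) h
      obtain ⟨σL, hL1, hL2⟩ := mgu a c ha hc hac σ₁ σ₂ h1
      obtain ⟨σR, hR1, hR2⟩ := mgu b d hb hdd hbd σ₁ σ₂ h2
      classical
      refine ⟨fun z => if z ∈ labels a ∨ z ∈ labels c then σL z else σR z, ?_, ?_⟩
      · intro x hx
        simp only [labels, List.mem_append] at hx
        rcases hx with hx | hx
        · have : uL (.node a b) (.node c d) x = uL a c x := by simp [uL, hx]
          rw [this, hL1 x hx]
          refine subst_congr fun z hz => ?_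
          have := mem_labels_unify a c z (labels_uL_subset ha hx z hz)
          simp [this]
        · have hxa : x ∉ labels a := fun hxa => hab x hxa hx
          have : uL (.node a b) (.node c d) x = uL b d x := by simp [uL, hxa]
          rw [this, hR1 x hx]
          refine subst_congr fun z hz => ?_
          have hz' := mem_labels_unify b d z (labels_uL_subset hb hx z hz)
          have hza : z ∉ labels a := by
            rcases hz' with h' | h'
            · exact fun hza => hab z hza h'
            · exact fun hza => had z hza h'
          have hzc : z ∉ labels c := by
            rcases hz' with h' | h'
            · exact hbc z h'
            · exact fun hzc => hcd z hzc h'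
          simp [hza, hzc]
      · intro y hy
        simp only [labels, List.mem_append] at hy
        rcases hy with hy | hy
        · have : uR (.node a b) (.node c d) y = uR a c y := by simp [uR, hy]
          rw [this, hL2 y hy]
          refine subst_congr fun z hz => ?_
          have := mem_labels_unify a c z (labels_uR_subset hc hy z hz)
          simp [this]
        · have hyc : y ∉ labels c := fun hyc => hcd y hyc hy
          have : uR (.node a b) (.node c d) y = uR b d y := by simp [uR, hyc]
          rw [this, hR2 y hy]
          refine subst_congr fun z hz => ?_
          have hz' := mem_labels_unify b d z (labels_uR_subset hdd hy z hz)
          have hza : z ∉ labels a := by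
            rcases hz' with h' | h'
            · exact fun hza => hab z hza h'
            · exact fun hza => had z hza h'
          have hzc : z ∉ labels c := by
            rcases hz' with h' | h'
            · exact hbc z h'
            · exact fun hzc => hcd z hzc h'
          simp [hza, hzc]

end MGU
section Main

open List

/-- `g` has an injective seed with all labels at least `N`. -/
def Seeded (g : PMap) (N : ℕ+) : Prop :=
  ∃ t t' : CTree, (labels t).Perm (labels t') ∧ (labels t').Nodup ∧
    (∀ x ∈ labels t', N ≤ x) ∧
    ∀ u v : CTree, g u = some v ↔ ∃ σ : ℕ+ → CTree, u = subst σ t ∧ v = subst σ t'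

lemma foldr_bound (l : List ℕ+) (N : ℕ+) :
    N ≤ l.foldr (· + ·) N ∧ ∀ z ∈ l, z < l.foldr (· + ·) N := by
  induction l with
  | nil => exact ⟨le_refl _, by simp⟩
  | cons a l ih =>
      have hle : l.foldr (· + ·) N ≤ a + l.foldr (· + ·) N := by
        rw [← PNat.coe_le_coe]; simp [PNat.add_coe]
      refine ⟨le_trans ih.1 hle, ?_⟩
      intro z hz
      rcases List.mem_cons.1 hz with rfl | hz
      · exact pnat_lt_add z _
      · exact lt_of_lt_of_le (ih.2 z hz) hle

lemma seeded_one (N : ℕ+) : Seeded 1 N := by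
  refine ⟨.leaf N, .leaf N, List.Perm.refl _, List.nodup_singleton _, by simp [labels], ?_⟩
  intro u v
  show some u = some v ↔ _
  constructor
  · rintro ⟨rfl⟩
    exact ⟨fun _ => u, rfl, rfl⟩
  · rintro ⟨σ, rfl, rfl⟩
    rfl

lemma seeded_genA (α : Addr) (N : ℕ+) : Seeded (applyAt α opA) N := by
  obtain ⟨he, hle, hnd⟩ := skel_labels α N
  exact ⟨(skel α N).1, (skel α N).2, by rw [he], by rw [he]; exact hnd,
    fun x hx => hle x (by rwa [he] at hx), fun u v => gen_seedA α N u v⟩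

lemma seeded_genAi (α : Addr) (N : ℕ+) : Seeded (applyAt α opAi) N := by
  obtain ⟨he, hle, hnd⟩ := skel_labels α N
  exact ⟨(skel α N).2, (skel α N).1, by rw [he], hnd, hle, fun u v => gen_seedAi α N u v⟩

lemma seeded_mul {x y : PMap} (hx : ∀ N, Seeded x N) (hy : ∀ N, Seeded y N) (N : ℕ+) :
    Seeded (x * y) N := by
  obtain ⟨t₁, t₁', hperm₁, hnd₁', hle₁, hseed₁⟩ := hx N
  set M : ℕ+ := (labels t₁').foldr (· + ·) N with hM
  obtain ⟨hNM, hltM⟩ := foldr_bound (labels t₁') N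
  obtain ⟨t₂, t₂', hperm₂, hnd₂', hle₂, hseed₂⟩ := hy M
  have hle₂' : ∀ z ∈ labels t₂, M ≤ z := fun z hz => hle₂ z (hperm₂.mem_iff.1 hz)
  have hnd₂ : (labels t₂).Nodup := hperm₂.symm.nodup hnd₂'
  have hdisj : Disj t₁' t₂ := by
    intro z hz hz2
    exact absurd (lt_of_lt_of_le (hltM z hz) (hle₂' z hz2)) (lt_irrefl z)
  have hU1 : subst (uL t₁' t₂) t₁' = unify t₁' t₂ := subst_uL t₁' t₂ hnd₁'
  have hU2 : subst (uR t₁' t₂) t₂ = unify t₁' t₂ := subst_uR t₁' t₂ hnd₂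
  have hndU : (labels (unify t₁' t₂)).Nodup := nodup_unify t₁' t₂ hnd₁' hnd₂ hdisj
  refine ⟨subst (uL t₁' t₂) t₁, subst (uR t₁' t₂) t₂', ?_, ?_, ?_, ?_⟩
  · calc labels (subst (uL t₁' t₂) t₁)
        = (labels t₁).flatMap (fun z => labels (uL t₁' t₂ z)) := labels_subst _ _
      _ ~ (labels t₁').flatMap (fun z => labels (uL t₁' t₂ z)) := hperm₁.flatMap_right _
      _ = labels (unify t₁' t₂) := by rw [← labels_subst, hU1]
      _ = (labels t₂).flatMap (fun z => labels (uR t₁' t₂ z)) := by rw [← labels_subst, hU2]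
      _ ~ (labels t₂').flatMap (fun z => labels (uR t₁' t₂ z)) := hperm₂.flatMap_right _
      _ = labels (subst (uR t₁' t₂) t₂') := (labels_subst _ _).symm
  · have : labels (subst (uR t₁' t₂) t₂') ~ labels (unify t₁' t₂) := by
      calc labels (subst (uR t₁' t₂) t₂')
          = (labels t₂').flatMap (fun z => labels (uR t₁' t₂ z)) := labels_subst _ _
        _ ~ (labels t₂).flatMap (fun z => labels (uR t₁' t₂ z)) := hperm₂.symm.flatMap_right _
        _ = labels (unify t₁' t₂) := by rw [← labels_subst, hU2]
    exact this.symm.nodup hndU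
  · intro z hz
    have : labels (subst (uR t₁' t₂) t₂') ~ labels (unify t₁' t₂) := by
      calc labels (subst (uR t₁' t₂) t₂')
          = (labels t₂').flatMap (fun z => labels (uR t₁' t₂ z)) := labels_subst _ _
        _ ~ (labels t₂).flatMap (fun z => labels (uR t₁' t₂ z)) := hperm₂.symm.flatMap_right _
        _ = labels (unify t₁' t₂) := by rw [← labels_subst, hU2]
    have hz' := this.mem_iff.1 hz
    rcases mem_labels_unify t₁' t₂ z hz' with h | h
    · exact hle₁ z h
    · exact le_trans hNM (hle₂' z h)
  · intro u w
    show (x u).bind y = some w ↔ _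
    constructor
    · intro h
      rw [Option.bind_eq_some_iff] at h
      obtain ⟨v, hxu, hyv⟩ := h
      obtain ⟨σ₁, rfl, hv₁⟩ := (hseed₁ u v).1 hxu
      obtain ⟨σ₂, hv₂, rfl⟩ := (hseed₂ v _).1 hyv
      have heq : subst σ₁ t₁' = subst σ₂ t₂ := by rw [← hv₁, ← hv₂]
      obtain ⟨σ, hσ1, hσ2⟩ := mgu t₁' t₂ hnd₁' hnd₂ hdisj σ₁ σ₂ heq
      refine ⟨σ, ?_, ?_⟩
      · rw [subst_subst]
        exact subst_congr fun z hz => hσ1 z (hperm₁.mem_iff.1 hz)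
      · rw [subst_subst]
        exact subst_congr fun z hz => hσ2 z (hperm₂.symm.mem_iff.1 hz)
    · rintro ⟨σ, rfl, rfl⟩
      have hxu : x (subst σ (subst (uL t₁' t₂) t₁)) = some (subst (fun z => subst σ (uL t₁' t₂ z)) t₁') := by
        rw [(hseed₁ _ _)]
        exact ⟨fun z => subst σ (uL t₁' t₂ z), subst_subst .., rfl⟩
      have hv : subst (fun z => subst σ (uL t₁' t₂ z)) t₁'
          = subst (fun z => subst σ (uR t₁' t₂ z)) t₂ := by
        rw [← subst_subst, ← subst_subst, hU1, hU2]
      have hyv : y (subst (fun z => subst σ (uL t₁' t₂ z)) t₁')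
          = some (subst σ (subst (uR t₁' t₂) t₂')) := by
        rw [(hseed₂ _ _)]
        exact ⟨fun z => subst σ (uR t₁' t₂ z), hv, (subst_subst ..)⟩
      rw [hxu]
      exact hyv

theorem stmt4' (g : PMap) (hg : g ∈ GeoA) (N : ℕ+) : Seeded g N := by
  revert N
  refine Submonoid.closure_induction
    (motive := fun g _ => ∀ N, Seeded g N) ?_ (fun N => seeded_one N) ?_ hg
  · rintro f ⟨α, rfl | rfl⟩ N
    · exact seeded_genA α N
    · exact seeded_genAi α N
  · intro a b _ _ ha hb N
    exact seeded_mul ha hb N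

end Main

/-- Lemma 2.3: each element of the geometry monoid `𝒢(A)` admits a seed consisting
of injective trees: there is a pair `(t, t')` of injective coloured trees such that,
as a set of pairs, `g` is exactly the set of all `(t^σ, t'^σ)` with `σ` a
substitution. -/
theorem stmt4 (g : PMap) (hg : g ∈ GeoA) :
    ∃ t t' : CTree, InjTree t ∧ InjTree t' ∧
      ∀ u v : CTree, (g u = some v ↔ ∃ σ : ℕ+ → CTree, u = subst σ t ∧ v = subst σ t') := by
  obtain ⟨t, t', hperm, hnd', _, hseed⟩ := stmt4' g hg 1
  exact ⟨t, t', hperm.symm.nodup hnd', hnd', hseed⟩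
end

section
/- The relations R_A (the geometric relations for A together with the pentagon relations) make a presentation of the geometry group G(A) in terms of the generators A_α: the canonical homomorphism from the group presented by generators {A_α : α an address} and relations R_A to G(A), sending each generator to the class of the operator A_α, is an isomorphism. -/
theorem memA (α : Addr) : applyAt α opA ∈ GeoA :=
  Submonoid.subset_closure ⟨α, Or.inl rfl⟩

/-- The relations `R_A`, as relators in the free group on the generators `A_α`
(a generator being encoded by its address `α`): for all addresses `α, β, γ`,
`A_{γ0α}·A_{γ1β} = A_{γ1β}·A_{γ0α}`, `A_{γ11α}·A_γ = A_γ·A_{γ1α}`,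
`A_{γ10α}·A_γ = A_γ·A_{γ01α}`, `A_{γ0α}·A_γ = A_γ·A_{γ00α}`, and the pentagon
relations `A_γ·A_γ = A_{γ1}·A_γ·A_{γ0}`. -/
def relsA : Set (FreeGroup Addr) :=
  {x | ∃ γ : Addr,
    (∃ α β : Addr, x = FreeGroup.of (γ ++ false :: α) * FreeGroup.of (γ ++ true :: β) *
        (FreeGroup.of (γ ++ true :: β) * FreeGroup.of (γ ++ false :: α))⁻¹) ∨
    (∃ α : Addr, x = FreeGroup.of (γ ++ true :: true :: α) * FreeGroup.of γ *
        (FreeGroup.of γ * FreeGroup.of (γ ++ true :: α))⁻¹) ∨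
    (∃ α : Addr, x = FreeGroup.of (γ ++ true :: false :: α) * FreeGroup.of γ *
        (FreeGroup.of γ * FreeGroup.of (γ ++ false :: true :: α))⁻¹) ∨
    (∃ α : Addr, x = FreeGroup.of (γ ++ false :: α) * FreeGroup.of γ *
        (FreeGroup.of γ * FreeGroup.of (γ ++ false :: false :: α))⁻¹) ∨
    (x = FreeGroup.of γ * FreeGroup.of γ *
        (FreeGroup.of (γ ++ [true]) * FreeGroup.of γ * FreeGroup.of (γ ++ [false]))⁻¹)}

/-! ### Auxiliary development -/

open CTree

namespace Stmt9Aux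

lemma pmul_apply (f g : PMap) (t : CTree) : (f * g) t = (f t).bind g := rfl

lemma one_apply (t : CTree) : (1 : PMap) t = some t := rfl

lemma applyAt_false (α : Addr) (f : PMap) (a b : CTree) :
    applyAt (false :: α) f (node a b) = (applyAt α f a).map (fun s => node s b) := rfl

lemma applyAt_true (α : Addr) (f : PMap) (a b : CTree) :
    applyAt (true :: α) f (node a b) = (applyAt α f b).map (fun s => node a s) := rfl

lemma applyAt_leaf (b : Bool) (α : Addr) (f : PMap) (n : ℕ+) :
    applyAt (b :: α) f (leaf n) = none := by cases b <;> rfl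

lemma applyAt_append (γ δ : Addr) (f : PMap) :
    applyAt (γ ++ δ) f = applyAt γ (applyAt δ f) := by
  induction γ with
  | nil => rfl
  | cons b γ ih =>
    funext t
    cases b <;> rcases t with n | ⟨a, c⟩ <;>
      simp [applyAt_leaf, applyAt_false, applyAt_true, List.cons_append, ih]

lemma mul_applyAt (γ : Addr) (f g : PMap) :
    applyAt γ f * applyAt γ g = applyAt γ (f * g) := by
  induction γ with
  | nil => rfl
  | cons b γ ih =>
    funext t
    cases b <;> rcases t with n | ⟨a, c⟩ <;>
      simp only [pmul_apply, applyAt_leaf, applyAt_false, applyAt_true, Option.bind_none,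
        Option.bind_fun_none]
    · have := congrFun ih a
      simp only [pmul_apply] at this
      rw [← this]
      cases applyAt γ f a <;> simp [applyAt_false]
    · have := congrFun ih c
      simp only [pmul_apply] at this
      rw [← this]
      cases applyAt γ f c <;> simp [applyAt_true]

lemma opA_eq (a b c : CTree) : opA (node a (node b c)) = some (node (node a b) c) := rfl

/-- E1 : commutation of operators at incomparable addresses. -/
lemma mapE1 (α β : Addr) (f g : PMap) :
    applyAt (false :: α) f * applyAt (true :: β) g
      = applyAt (true :: β) g * applyAt (false :: α) f := by
  funext t
  rcases t with n | ⟨a, c⟩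
  · rfl
  · simp only [pmul_apply, applyAt_false, applyAt_true]
    cases ha : applyAt α f a <;> cases hb : applyAt β g c <;>
      simp [applyAt_false, applyAt_true, ha, hb]

/-- E2. -/
lemma mapE2 (α : Addr) :
    applyAt (true :: true :: α) opA * opA = opA * applyAt (true :: α) opA := by
  funext t
  rcases t with n | ⟨a, z⟩
  · rfl
  · rcases z with n | ⟨b, z⟩
    · simp [pmul_apply, applyAt_true, applyAt_leaf, opA]
    · simp only [pmul_apply, applyAt_true, opA_eq, Option.bind_some]
      cases hz : applyAt α opA z <;> simp [applyAt_true, opA, hz]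

/-- E3. -/
lemma mapE3 (α : Addr) :
    applyAt (true :: false :: α) opA * opA = opA * applyAt (false :: true :: α) opA := by
  funext t
  rcases t with n | ⟨a, z⟩
  · rfl
  · rcases z with n | ⟨b, z⟩
    · simp [pmul_apply, applyAt_true, applyAt_false, applyAt_leaf, opA]
    · simp only [pmul_apply, applyAt_true, applyAt_false, opA_eq, Option.bind_some]
      cases hb : applyAt α opA b <;> simp [applyAt_false, applyAt_true, opA, hb]

/-- E4. -/
lemma mapE4 (α : Addr) :
    applyAt (false :: α) opA * opA = opA * applyAt (false :: false :: α) opA := by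
  funext t
  rcases t with n | ⟨a, z⟩
  · rfl
  · rcases z with n | ⟨b, z⟩
    · simp only [pmul_apply, applyAt_false, opA, Option.bind_some]
      cases ha : applyAt α opA a <;> simp [ha, opA]
    · simp only [pmul_apply, applyAt_false, opA_eq, Option.bind_some]
      cases ha : applyAt α opA a <;> simp [applyAt_false, opA, ha]

/-- E5 : pentagon. -/
lemma mapE5 :
    (opA * opA : PMap) = applyAt [true] opA * opA * applyAt [false] opA := by
  funext t
  rcases t with n | ⟨a, z⟩
  · rfl
  · rcases z with n | ⟨b, z⟩
    · rfl
    · rcases z with n | ⟨c, z⟩ <;> rfl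

end Stmt9Aux

namespace Stmt9Aux

/-! ### Depth and definedness -/

def Deep : ℕ → CTree → Prop
  | 0, _ => True
  | n+1, .leaf _ => False
  | n+1, .node a b => Deep n a ∧ Deep n b

lemma deep_mono : ∀ (t : CTree) (m n : ℕ), m ≤ n → Deep n t → Deep m t := by
  intro t
  induction t with
  | leaf x => intro m n h hd; cases m with
      | zero => trivial
      | succ m => cases n with
        | zero => omega
        | succ n => exact hd.elim
  | node a b iha ihb =>
    intro m n h hd
    cases m with
    | zero => trivial
    | succ m => cases n with
      | zero => omega
      | succ n => exact ⟨iha _ _ (by omega) hd.1, ihb _ _ (by omega) hd.2⟩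

lemma deep_node' {n : ℕ} {a b : CTree} : Deep (n + 1) (node a b) ↔ Deep n a ∧ Deep n b :=
  Iff.rfl

lemma deep_node_of {a b : CTree} : ∀ {n : ℕ}, Deep n a → Deep n b → Deep n (node a b)
  | 0, _, _ => trivial
  | n+1, ha, hb =>
    deep_node'.mpr ⟨deep_mono _ _ _ (Nat.le_succ n) ha, deep_mono _ _ _ (Nat.le_succ n) hb⟩

lemma opA_deep (n : ℕ) (t : CTree) (h : Deep (n + 2) t) :
    ∃ t', opA t = some t' ∧ Deep (n + 1) t' := by
  rcases t with x | ⟨a, z⟩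
  · exact h.elim
  · rcases z with x | ⟨b, c⟩
    · exact h.2.elim
    · exact ⟨node (node a b) c,  rfl,
        deep_node'.mpr ⟨deep_node_of (deep_mono _ _ _ (by omega) h.1) h.2.1, h.2.2⟩⟩

lemma opAi_deep (n : ℕ) (t : CTree) (h : Deep (n + 2) t) :
    ∃ t', opAi t = some t' ∧ Deep (n + 1) t' := by
  rcases t with x | ⟨z, c⟩
  · exact h.elim
  · rcases z with x | ⟨a, b⟩
    · exact h.1.elim
    · exact ⟨node a (node b c), rfl,
        deep_node'.mpr ⟨h.1.1, deep_node_of h.1.2 (deep_mono _ _ _ (by omega) h.2)⟩⟩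

lemma applyAt_deep {f : PMap}
    (hf : ∀ n t, Deep (n + 2) t → ∃ t', f t = some t' ∧ Deep (n + 1) t') :
    ∀ (α : Addr) (n : ℕ) (t : CTree), Deep (n + α.length + 2) t →
      ∃ t', applyAt α f t = some t' ∧ Deep (n + α.length + 1) t' := by
  intro α
  induction α with
  | nil => simpa [applyAt] using hf
  | cons b β ih =>
    intro n t h
    have hlen : (b :: β).length = β.length + 1 := rfl
    rcases t with x | ⟨a, c⟩
    · rw [hlen] at h; exact h.elim
    · rw [hlen] at h
      have h' : Deep (n + β.length + 2 + 1) (node a c) := by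
        have : n + β.length + 2 + 1 = n + (β.length + 1) + 2 := by omega
        rwa [this]
      cases b
      · obtain ⟨a', ha', hd⟩ := ih n a h'.1
        refine ⟨node a' c, ?_, ?_⟩
        · rw [applyAt_false, ha']; rfl
        · simp only [List.length_cons]
          exact deep_node'.mpr ⟨hd, deep_mono _ _ _ (by omega) h'.2⟩
      · obtain ⟨c', hc', hd⟩ := ih n c h'.2
        refine ⟨node a c', ?_, ?_⟩
        · rw [applyAt_true, hc']; rfl
        · simp only [List.length_cons]
          exact deep_node'.mpr ⟨deep_mono _ _ _ (by omega) h'.1, hd⟩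

def full : ℕ → CTree
  | 0 => leaf 1
  | n+1 => node (full n) (full n)

lemma full_deep (n : ℕ) : Deep n (full n) := by
  induction n with
  | zero => trivial
  | succ n ih => exact ⟨ih, ih⟩

lemma geoA_deep {f : PMap} (hf : f ∈ GeoA) :
    ∃ N, ∀ n t, Deep (n + N) t → ∃ t', f t = some t' ∧ Deep n t' := by
  induction hf using Submonoid.closure_induction with
  | mem g hg =>
    obtain ⟨α, hα | hα⟩ := hg <;> subst hα
    · exact ⟨α.length + 2, fun n t h => by
        obtain ⟨t', h1, h2⟩ := applyAt_deep opA_deep α n t (by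
          have : n + α.length + 2 = n + (α.length + 2) := by omega
          rwa [this])
        exact ⟨t', h1, deep_mono _ _ _ (by omega) h2⟩⟩
    · exact ⟨α.length + 2, fun n t h => by
        obtain ⟨t', h1, h2⟩ := applyAt_deep opAi_deep α n t (by
          have : n + α.length + 2 = n + (α.length + 2) := by omega
          rwa [this])
        exact ⟨t', h1, deep_mono _ _ _ (by omega) h2⟩⟩
  | one => exact ⟨0, fun n t h => ⟨t, rfl, by simpa using h⟩⟩
  | mul g g' hg hg' ihg ihg' =>
    obtain ⟨N, hN⟩ := ihg
    obtain ⟨N', hN'⟩ := ihg'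
    refine ⟨N + N', fun n t h => ?_⟩
    obtain ⟨t1, h1, hd1⟩ := hN (n + N') t (by
      have : n + N' + N = n + (N + N') := by omega
      rwa [this])
    obtain ⟨t2, h2, hd2⟩ := hN' n t1 hd1
    exact ⟨t2, by rw [pmul_apply, h1, Option.bind_some, h2], hd2⟩

lemma exists_defined {f : PMap} (hf : f ∈ GeoA) : ∃ t t', f t = some t' := by
  obtain ⟨N, hN⟩ := geoA_deep hf
  obtain ⟨t', h, _⟩ := hN 0 (full N) (by simpa using full_deep N)
  exact ⟨full N, t', h⟩

lemma nearEq_of_eq {f g : PMap} (hfg : f = g) (hf : f ∈ GeoA) : NearEq f g := by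
  subst hfg
  obtain ⟨t, t', h⟩ := exists_defined hf
  exact ⟨⟨t, by simp [h]⟩, fun t _ _ => rfl⟩

/-- inverse relation between `A_α` and `A_α⁻¹`. -/
lemma applyAt_inv : ∀ (α : Addr) (t t' : CTree),
    applyAt α opA t = some t' → applyAt α opAi t' = some t := by
  intro α
  induction α with
  | nil =>
    intro t t' h
    rcases t with x | ⟨a, z⟩
    · exact absurd h (by simp [applyAt, opA])
    · rcases z with x | ⟨b, c⟩
      · exact absurd h (by simp [applyAt, opA])
      · simp only [applyAt, opA_eq] at h
        cases h; rfl
  | cons b β ih =>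
    intro t t' h
    cases b <;> rcases t with x | ⟨a, c⟩ <;>
      first
        | exact absurd h (by simp [applyAt_leaf])
        | skip
    · rw [applyAt_false] at h
      rcases ha : applyAt β opA a with _ | a'
      · rw [ha] at h; exact absurd h (by simp)
      · rw [ha] at h
        cases h
        rw [applyAt_false, ih _ _ ha]; rfl
    · rw [applyAt_true] at h
      rcases hc : applyAt β opA c with _ | c'
      · rw [hc] at h; exact absurd h (by simp)
      · rw [hc] at h
        cases h
        rw [applyAt_true, ih _ _ hc]; rfl

lemma memAi (α : Addr) : applyAt α opAi ∈ GeoA :=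
  Submonoid.subset_closure ⟨α, Or.inr rfl⟩

lemma nearEq_inv_one (α : Addr) :
    NearEq (applyAt α opA * applyAt α opAi) 1 := by
  constructor
  · obtain ⟨t, t', h⟩ := exists_defined (memA α)
    refine ⟨t, ?_, by simp [one_apply]⟩
    rw [pmul_apply, h, Option.bind_some, applyAt_inv α t t' h]
    rfl
  · intro t h1 _
    rw [pmul_apply] at h1 ⊢
    rcases ht : applyAt α opA t with _ | s
    · simp [ht] at h1
    · simp [ht, applyAt_inv α t s ht, one_apply]

end Stmt9Aux

namespace Stmt9Aux

/-! ### The five relations as equalities of partial maps -/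

lemma mapR1 (γ α β : Addr) :
    applyAt (γ ++ false :: α) opA * applyAt (γ ++ true :: β) opA
      = applyAt (γ ++ true :: β) opA * applyAt (γ ++ false :: α) opA := by
  rw [applyAt_append, applyAt_append, mul_applyAt, mul_applyAt, mapE1]

lemma mapR2 (γ α : Addr) :
    applyAt (γ ++ true :: true :: α) opA * applyAt γ opA
      = applyAt γ opA * applyAt (γ ++ true :: α) opA := by
  rw [applyAt_append, mul_applyAt, mapE2, ← mul_applyAt, ← applyAt_append]

lemma mapR3 (γ α : Addr) :
    applyAt (γ ++ true :: false :: α) opA * applyAt γ opA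
      = applyAt γ opA * applyAt (γ ++ false :: true :: α) opA := by
  rw [applyAt_append, mul_applyAt, mapE3, ← mul_applyAt, ← applyAt_append]

lemma mapR4 (γ α : Addr) :
    applyAt (γ ++ false :: α) opA * applyAt γ opA
      = applyAt γ opA * applyAt (γ ++ false :: false :: α) opA := by
  rw [applyAt_append, mul_applyAt, mapE4, ← mul_applyAt, ← applyAt_append]

lemma mapR5 (γ : Addr) :
    applyAt γ opA * applyAt γ opA
      = applyAt (γ ++ [true]) opA * applyAt γ opA * applyAt (γ ++ [false]) opA := by
  rw [applyAt_append, applyAt_append, mul_applyAt, mul_applyAt, mul_applyAt, mapE5]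

section Hom

variable {G : Type*} [Group G] (q : GeoA →* G)

/-- the images of the generators. -/
def fgen : Addr → G := fun α => q ⟨applyAt α opA, memA α⟩

lemma q_eq_of_mapeq (hiff : ∀ f g : GeoA, q f = q g ↔ NearEq f.1 g.1) {f g f' g' : PMap} (hf : f ∈ GeoA) (hg : g ∈ GeoA)
    (hf' : f' ∈ GeoA) (hg' : g' ∈ GeoA) (h : f * g = f' * g') :
    q ⟨f, hf⟩ * q ⟨g, hg⟩ = q ⟨f', hf'⟩ * q ⟨g', hg'⟩ := by
  rw [← map_mul, ← map_mul]
  exact (hiff _ _).mpr (by simpa using nearEq_of_eq h (mul_mem hf hg))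

lemma relcheck (hiff : ∀ f g : GeoA, q f = q g ↔ NearEq f.1 g.1) : ∀ r ∈ relsA, FreeGroup.lift (fgen q) r = 1 := by
  intro r hr
  obtain ⟨γ, h1 | h2 | h3 | h4 | h5⟩ := hr
  · obtain ⟨α, β, rfl⟩ := h1
    simp only [map_mul, map_inv, FreeGroup.lift_apply_of, fgen, mul_inv_eq_one]
    exact q_eq_of_mapeq q hiff _ _ _ _ (mapR1 γ α β)
  · obtain ⟨α, rfl⟩ := h2
    simp only [map_mul, map_inv, FreeGroup.lift_apply_of, fgen, mul_inv_eq_one]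
    exact q_eq_of_mapeq q hiff _ _ _ _ (mapR2 γ α)
  · obtain ⟨α, rfl⟩ := h3
    simp only [map_mul, map_inv, FreeGroup.lift_apply_of, fgen, mul_inv_eq_one]
    exact q_eq_of_mapeq q hiff _ _ _ _ (mapR3 γ α)
  · obtain ⟨α, rfl⟩ := h4
    simp only [map_mul, map_inv, FreeGroup.lift_apply_of, fgen, mul_inv_eq_one]
    exact q_eq_of_mapeq q hiff _ _ _ _ (mapR4 γ α)
  · subst h5
    simp only [map_mul, map_inv, FreeGroup.lift_apply_of, fgen, mul_inv_eq_one]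
    calc q ⟨applyAt γ opA, memA γ⟩ * q ⟨applyAt γ opA, memA γ⟩
        = q (⟨applyAt γ opA, memA γ⟩ * ⟨applyAt γ opA, memA γ⟩) := (map_mul q _ _).symm
      _ = q ((⟨applyAt (γ ++ [true]) opA, memA _⟩ * ⟨applyAt γ opA, memA γ⟩)
            * ⟨applyAt (γ ++ [false]) opA, memA _⟩) :=
          (hiff _ _).mpr (by simpa using nearEq_of_eq (mapR5 γ) (mul_mem (memA γ) (memA γ)))
      _ = _ := by rw [map_mul, map_mul]

/-- The canonical homomorphism from the presented group. -/
noncomputable def φ (hiff : ∀ f g : GeoA, q f = q g ↔ NearEq f.1 g.1) : PresentedGroup relsA →* G := PresentedGroup.toGroup (relcheck q hiff)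

lemma φ_of (hiff : ∀ f g : GeoA, q f = q g ↔ NearEq f.1 g.1) (α : Addr) : φ q hiff (PresentedGroup.of α) = q ⟨applyAt α opA, memA α⟩ :=
  PresentedGroup.toGroup.of _

lemma q_inv_gen (hiff : ∀ f g : GeoA, q f = q g ↔ NearEq f.1 g.1) (α : Addr) :
    q ⟨applyAt α opAi, memAi α⟩ = (q ⟨applyAt α opA, memA α⟩)⁻¹ := by
  have h : q (⟨applyAt α opA, memA α⟩ * ⟨applyAt α opAi, memAi α⟩) = q 1 :=
    (hiff _ _).mpr (by simpa using nearEq_inv_one α)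
  rw [map_mul, map_one] at h
  exact (inv_eq_of_mul_eq_one_right h).symm

lemma φ_surj (hiff : ∀ f g : GeoA, q f = q g ↔ NearEq f.1 g.1) (hsurj : Function.Surjective q) : Function.Surjective (φ q hiff) := by
  intro g
  obtain ⟨⟨f, hf⟩, rfl⟩ := hsurj g
  have : ∃ x, φ q hiff x = q ⟨f, hf⟩ := by
    induction hf using Submonoid.closure_induction with
    | mem g hg =>
      obtain ⟨α, hα | hα⟩ := hg <;> subst hα
      · exact ⟨PresentedGroup.of α, φ_of q hiff α⟩
      · exact ⟨(PresentedGroup.of α)⁻¹, by rw [map_inv, φ_of, ← q_inv_gen q hiff]⟩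
    | one => exact ⟨1, by rw [map_one, ← map_one q]; rfl⟩
    | mul f f' hf hf' ihf ihf' =>
      obtain ⟨x, hx⟩ := ihf
      obtain ⟨x', hx'⟩ := ihf'
      exact ⟨x * x', by rw [map_mul, hx, hx', ← map_mul]; rfl⟩
  exact this

end Hom

end Stmt9Aux

namespace Stmt9Aux

/-! ### Trees, labels, subtrees, block lists -/

def labs : CTree → Set ℕ+
  | leaf x => {x}
  | node a b => labs a ∪ labs b

lemma labs_nonempty (t : CTree) : ∃ z, z ∈ labs t := by
  induction t with
  | leaf x => exact ⟨x, rfl⟩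
  | node a b iha ihb => obtain ⟨z, hz⟩ := iha; exact ⟨z, Or.inl hz⟩

inductive Sub : CTree → CTree → Prop
  | refl (t : CTree) : Sub t t
  | left {s a b : CTree} : Sub s a → Sub s (node a b)
  | right {s a b : CTree} : Sub s b → Sub s (node a b)

lemma sub_labs {s t : CTree} (h : Sub s t) : labs s ⊆ labs t := by
  induction h with
  | refl => exact fun z hz => hz
  | left _ ih => exact fun z hz => Or.inl (ih hz)
  | right _ ih => exact fun z hz => Or.inr (ih hz)

def labsU : List CTree → Set ℕ+
  | [] => ∅
  | t :: l => labs t ∪ labsU l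

lemma mem_labsU {z : ℕ+} : ∀ {m : List CTree}, z ∈ labsU m ↔ ∃ e ∈ m, z ∈ labs e := by
  intro m
  induction m with
  | nil => simp [labsU]
  | cons t l ih => simp [labsU, ih]

lemma labsU_append (u v : List CTree) : labsU (u ++ v) = labsU u ∪ labsU v := by
  induction u with
  | nil => simp [labsU]
  | cons t l ih => simp [labsU, ih, Set.union_assoc]

def PD (l : List CTree) : Prop := l.Pairwise (fun s t => ∀ z ∈ labs s, z ∉ labs t)

def step : ℕ → List CTree → List CTree
  | 0, x :: y :: r => node x y :: r
  | c+1, x :: r => x :: step c r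
  | _, l => l

def run : List ℕ → List CTree → List CTree
  | [], l => l
  | a :: w, l => run w (step a l)

def comb : List CTree → CTree
  | [] => leaf 1
  | [t] => t
  | t :: l => node t (comb l)

lemma comb_cons (t : CTree) {l : List CTree} (h : l ≠ []) :
    comb (t :: l) = node t (comb l) := by
  cases l with
  | nil => exact absurd rfl h
  | cons a r => rfl

/-! ### step lemmas -/

lemma getLast?_cons' {x : CTree} {l : List CTree} (h : l ≠ []) :
    (x :: l).getLast? = l.getLast? := by
  cases l with
  | nil => exact absurd rfl h
  | cons a r => exact List.getLast?_cons_cons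

lemma step_length {c : ℕ} : ∀ {l : List CTree}, c + 2 ≤ l.length →
    (step c l).length + 1 = l.length := by
  induction c with
  | zero =>
    intro l h
    match l with
    | x :: y :: r => show (node x y :: r).length + 1 = _; simp
  | succ c ih =>
    intro l h
    match l with
    | x :: r =>
      show (x :: step c r).length + 1 = (x :: r).length
      have h2 := ih (l := r) (by simpa [Nat.succ_le_succ_iff] using h)
      simp only [List.length_cons]
      omega

lemma step_ne_nil {c : ℕ} {l : List CTree} (h : l ≠ []) : step c l ≠ [] := by
  cases c with
  | zero => match l with
    | [x] => simpa [step]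
    | x :: y :: r => simp [step]
  | succ c => match l with
    | x :: r => simp [step]

lemma step_append_left {c : ℕ} : ∀ {u : List CTree} (r : List CTree), c + 2 ≤ u.length →
    step c (u ++ r) = step c u ++ r := by
  induction c with
  | zero =>
    intro u r h
    match u with
    | x :: y :: u' => rfl
  | succ c ih =>
    intro u r h
    match u with
    | x :: u' =>
      show x :: step c (u' ++ r) = x :: step c u' ++ r
      rw [ih r (by simpa [Nat.succ_le_succ_iff] using h)]
      rfl

lemma step_append_right : ∀ (u : List CTree) {c : ℕ} (r : List CTree), u.length ≤ c →
    step c (u ++ r) = u ++ step (c - u.length) r := by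
  intro u
  induction u with
  | nil => intro c r _; simp
  | cons x u' ih =>
    intro c r h
    match c, h with
    | c+1, h =>
      show x :: step c (u' ++ r) = (x :: u') ++ step (c + 1 - (x :: u').length) r
      rw [ih r (by simpa [Nat.succ_le_succ_iff] using h)]
      simp

lemma step_at : ∀ (u : List CTree) (x y : CTree) (r : List CTree),
    step u.length (u ++ x :: y :: r) = u ++ node x y :: r := by
  intro u
  induction u with
  | nil => intro x y r; simp [step]
  | cons a u' ih =>
    intro x y r
    show a :: step u'.length (u' ++ x :: y :: r) = a :: (u' ++ node x y :: r)
    rw [ih]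

lemma step_last {c : ℕ} : ∀ {l : List CTree}, c + 3 ≤ l.length →
    (step c l).getLast? = l.getLast? := by
  induction c with
  | zero => intro l h; match l with
    | x :: y :: z :: r => simp [step]
  | succ c ih => intro l h; match l with
    | x :: r =>
      have hr : c + 3 ≤ r.length := by simpa [Nat.succ_le_succ_iff] using h
      have hne : r ≠ [] := by
        intro he; rw [he] at hr; simp at hr
      show (x :: step c r).getLast? = (x :: r).getLast?
      rw [getLast?_cons' (step_ne_nil hne), getLast?_cons' hne]
      exact ih hr

lemma mem_step {c : ℕ} : ∀ {l : List CTree} {e : CTree}, e ∈ step c l →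
    e ∈ l ∨ ∃ x y u r, l = u ++ x :: y :: r ∧ e = node x y := by
  induction c with
  | zero =>
    intro l e he
    match l with
    | [] => exact Or.inl he
    | [x] => exact Or.inl he
    | x :: y :: r =>
      simp only [step, List.mem_cons] at he
      rcases he with rfl | he
      · exact Or.inr ⟨x, y, [], r, rfl, rfl⟩
      · exact Or.inl (by simp [he])
  | succ c ih =>
    intro l e he
    match l with
    | [] => exact Or.inl he
    | x :: r =>
      simp only [step, List.mem_cons] at he
      rcases he with rfl | he
      · exact Or.inl (List.mem_cons_self)
      · rcases ih he with h | ⟨a, b, u, r', h1, h2⟩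
        · exact Or.inl (List.mem_cons_of_mem _ h)
        · exact Or.inr ⟨a, b, x :: u, r', by simp [h1], h2⟩

lemma step_ranges {c : ℕ} : ∀ {l l₁ l₂ l₃ : List CTree}, step c l = l₁ ++ l₂ ++ l₃ →
    ∃ m₁ m₂ m₃, l = m₁ ++ m₂ ++ m₃ ∧ labsU m₂ = labsU l₂ ∧ (l₁ = [] → m₁ = []) := by
  induction c with
  | zero =>
    intro l l₁ l₂ l₃ h
    match l with
    | [] => exact ⟨l₁, l₂, l₃, h, rfl, fun hh => hh⟩
    | [x] => exact ⟨l₁, l₂, l₃, h, rfl, fun hh => hh⟩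
    | x :: y :: r =>
      simp only [step] at h
      match l₁, l₂, h with
      | [], [], h => exact ⟨[], [], x :: y :: r, rfl, rfl, fun _ => rfl⟩
      | [], e :: l₂', h =>
        obtain ⟨he, hr⟩ : node x y = e ∧ r = l₂' ++ l₃ := by simpa using h
        refine ⟨[], x :: y :: l₂', l₃, by simp [hr], ?_, fun _ => rfl⟩
        rw [← he]
        simp [labsU, labs, Set.union_assoc]
      | e :: l₁', l₂, h =>
        obtain ⟨he, hr⟩ : node x y = e ∧ r = l₁' ++ (l₂ ++ l₃) := by simpa using h
        exact ⟨x :: y :: l₁', l₂, l₃, by simp [hr], rfl, by simp⟩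
  | succ c ih =>
    intro l l₁ l₂ l₃ h
    match l with
    | [] => exact ⟨l₁, l₂, l₃, h, rfl, fun hh => hh⟩
    | x :: r =>
      simp only [step] at h
      match l₁, l₂, h with
      | [], [], h => exact ⟨[], [], x :: r, rfl, rfl, fun _ => rfl⟩
      | [], e :: l₂', h =>
        obtain ⟨he, hr⟩ : x = e ∧ step c r = l₂' ++ l₃ := by simpa using h
        obtain ⟨m₁, m₂, m₃, h1, h2, h3⟩ := ih (l₁ := []) (by simpa using hr)
        rw [h3 rfl] at h1
        refine ⟨[], x :: m₂, m₃, by simp [h1], ?_, fun _ => rfl⟩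
        rw [← he]
        simp [labsU, h2]
      | e :: l₁', l₂, h =>
        obtain ⟨he, hr⟩ : x = e ∧ step c r = l₁' ++ (l₂ ++ l₃) := by simpa using h
        obtain ⟨m₁, m₂, m₃, h1, h2, _⟩ := ih (by simpa using hr)
        exact ⟨x :: m₁, m₂, m₃, by simp [h1], h2, by simp⟩

lemma PD_append_right {u v : List CTree} (h : PD (u ++ v)) : PD v :=
  (List.pairwise_append.mp h).2.1

lemma PD_step {c : ℕ} : ∀ {l : List CTree}, PD l → PD (step c l) := by
  induction c with
  | zero =>
    intro l h
    match l with
    | [] => exact h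
    | [x] => exact h
    | x :: y :: r =>
      simp only [step, PD, List.pairwise_cons] at h ⊢
      refine ⟨fun e he z hz => ?_, h.2.2⟩
      rcases hz with hz | hz
      · exact h.1 e (List.mem_cons_of_mem _ he) z hz
      · exact h.2.1 e he z hz
  | succ c ih =>
    intro l h
    match l with
    | [] => exact h
    | x :: r =>
      simp only [step, PD, List.pairwise_cons] at h ⊢
      refine ⟨fun e he z hz => ?_, ih h.2⟩
      rcases mem_step he with he' | ⟨a, b, u, r', h1, h2⟩
      · exact h.1 e he' z hz
      · subst h1 h2
        intro hze
        rcases hze with hza | hzb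
        · exact h.1 a (by simp) z hz hza
        · exact h.1 b (by simp) z hz hzb

lemma pers_step {c : ℕ} : ∀ {l : List CTree} {e t : CTree}, e ∈ l → Sub t e →
    ∃ e' ∈ step c l, Sub t e' := by
  induction c with
  | zero =>
    intro l e t he hs
    match l with
    | [] => exact ⟨e, he, hs⟩
    | [x] => exact ⟨e, he, hs⟩
    | x :: y :: r =>
      simp only [List.mem_cons] at he
      rcases he with rfl | rfl | he
      · exact ⟨node e y, by simp [step], Sub.left hs⟩
      · exact ⟨node x e, by simp [step], Sub.right hs⟩
      · exact ⟨e, by simp [step, he], hs⟩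
  | succ c ih =>
    intro l e t he hs
    match l with
    | [] => exact ⟨e, he, hs⟩
    | x :: r =>
      simp only [List.mem_cons] at he
      rcases he with rfl | he
      · exact ⟨e, by simp [step], hs⟩
      · obtain ⟨e', he', hs'⟩ := ih he hs
        exact ⟨e', by simp [step, he'], hs'⟩

lemma pers_run : ∀ (w : List ℕ) {l : List CTree} {e t : CTree}, e ∈ l → Sub t e →
    ∃ e' ∈ run w l, Sub t e' := by
  intro w
  induction w with
  | nil => exact fun he hs => ⟨_, he, hs⟩
  | cons a w ih =>
    intro l e t he hs
    obtain ⟨e', he', hs'⟩ := pers_step (c := a) he hs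
    exact ih he' hs'

lemma PD_run : ∀ (w : List ℕ) {l : List CTree}, PD l → PD (run w l) := by
  intro w
  induction w with
  | nil => exact fun h => h
  | cons a w ih => exact fun h => ih (PD_step h)

end Stmt9Aux

namespace Stmt9Aux

/-! ### Evaluation on combs -/

def ones (n : ℕ) : Addr := List.replicate n true

def Sync (w : List ℕ) (n : ℕ) : Prop := ∀ c ∈ w, c + 3 + w.length ≤ n

lemma sync_cons {a : ℕ} {w : List ℕ} {n : ℕ} (h : Sync (a :: w) n) :
    a + 3 ≤ n ∧ Sync w (n - 1) := by
  constructor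
  · have := h a (by simp)
    omega
  · intro c hc
    have := h c (by simp [hc])
    simp only [List.length_cons] at this
    omega

lemma applyAt_ones_comb : ∀ (c : ℕ) {l : List CTree}, c + 3 ≤ l.length →
    applyAt (ones c) opA (comb l) = some (comb (step c l)) := by
  intro c
  induction c with
  | zero =>
    intro l h
    match l with
    | x :: y :: z :: r =>
      show opA (comb (x :: y :: z :: r)) = _
      rw [comb_cons x (by simp), comb_cons y (by simp)]
      rw [opA_eq]
      show _ = some (comb (node x y :: z :: r))
      rw [comb_cons (node x y) (by simp)]
  | succ c ih =>
    intro l h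
    match l with
    | x :: r =>
      have hr : c + 3 ≤ r.length := by simpa [Nat.succ_le_succ_iff] using h
      have hrne : r ≠ [] := by intro he; rw [he] at hr; simp at hr
      show applyAt (true :: ones c) opA (comb (x :: r)) = _
      rw [comb_cons x hrne, applyAt_true, ih hr]
      show _ = some (comb (x :: step c r))
      rw [comb_cons x (step_ne_nil hrne)]
      rfl

lemma run_length : ∀ {w : List ℕ} {l : List CTree}, Sync w l.length →
    (run w l).length + w.length = l.length := by
  intro w
  induction w with
  | nil => intro l _; simp [run]
  | cons a w ih =>
    intro l h
    obtain ⟨h1, h2⟩ := sync_cons h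
    have hs : (step a l).length + 1 = l.length := step_length (by omega)
    have := ih (l := step a l) (by rw [show (step a l).length = l.length - 1 by omega]; exact h2)
    show (run w (step a l)).length + (w.length + 1) = l.length
    omega

lemma run_last : ∀ {w : List ℕ} {l : List CTree}, Sync w l.length →
    (run w l).getLast? = l.getLast? := by
  intro w
  induction w with
  | nil => intro l _; rfl
  | cons a w ih =>
    intro l h
    obtain ⟨h1, h2⟩ := sync_cons h
    have hs : (step a l).length + 1 = l.length := step_length (by omega)
    have hlast : (step a l).getLast? = l.getLast? := step_last h1
    have := ih (l := step a l) (by rw [show (step a l).length = l.length - 1 by omega]; exact h2)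
    show (run w (step a l)).getLast? = _
    rw [this, hlast]

def evalP : List ℕ → PMap
  | [] => 1
  | a :: w => applyAt (ones a) opA * evalP w

lemma evalP_mem (w : List ℕ) : evalP w ∈ GeoA := by
  induction w with
  | nil => exact one_mem _
  | cons a w ih => exact mul_mem (memA (ones a)) ih

lemma evalP_run : ∀ {w : List ℕ} {l : List CTree}, Sync w l.length →
    evalP w (comb l) = some (comb (run w l)) := by
  intro w
  induction w with
  | nil => intro l _; rfl
  | cons a w ih =>
    intro l h
    obtain ⟨h1, h2⟩ := sync_cons h
    have hs : (step a l).length + 1 = l.length := step_length (by omega)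
    show (applyAt (ones a) opA * evalP w) (comb l) = _
    rw [pmul_apply, applyAt_ones_comb a h1, Option.bind_some]
    exact ih (by rw [show (step a l).length = l.length - 1 by omega]; exact h2)

/-- injectivity of `comb` on lists ending with a leaf. -/
lemma comb_inj : ∀ (m m' : List CTree),
    (∃ L, m.getLast? = some (leaf L)) → (∃ L', m'.getLast? = some (leaf L')) →
    comb m = comb m' → m = m' := by
  intro m
  induction m with
  | nil => intro m' h; simp at h
  | cons t r ih =>
    intro m' h h' hc
    match r, m' with
    | _, [] => simp at h'
    | [], [t'] => simpa [comb] using hc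
    | [], t' :: s' :: r' =>
      obtain ⟨L, hL⟩ := h
      simp only [List.getLast?_singleton, Option.some.injEq] at hL
      rw [show comb [t] = t from rfl, comb_cons t' (by simp)] at hc
      rw [hL] at hc
      exact absurd hc (by simp)
    | s :: r'', [t'] =>
      obtain ⟨L, hL⟩ := h'
      simp only [List.getLast?_singleton, Option.some.injEq] at hL
      rw [show comb [t'] = t' from rfl, comb_cons t (by simp)] at hc
      rw [hL] at hc
      exact absurd hc (by simp)
    | s :: r'', t' :: s' :: r' =>
      rw [comb_cons t (by simp), comb_cons t' (by simp)] at hc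
      simp only [node.injEq] at hc
      obtain ⟨rfl, hc2⟩ := hc
      have := ih (s' :: r')
        (by rwa [getLast?_cons' (l := s :: r'') (by simp)] at h)
        (by rwa [getLast?_cons' (l := s' :: r') (by simp)] at h') hc2
      rw [this]

end Stmt9Aux

namespace Stmt9Aux

/-! ### The invariant: no subtree with exactly the labels of a designated pair -/

def NoS (S : Set ℕ+) (l : List CTree) : Prop :=
  (∀ e ∈ l, ∀ s, Sub s e → labs s ≠ S) ∧
  (∀ l₁ l₂ l₃ : List CTree, l = l₁ ++ l₂ ++ l₃ → labsU l₂ ≠ S)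

lemma labs_sub_labsU {e : CTree} {m : List CTree} (he : e ∈ m) : labs e ⊆ labsU m :=
  fun z hz => mem_labsU.mpr ⟨e, he, hz⟩

lemma noS_step {S : Set ℕ+} {c : ℕ} {l : List CTree} (h : NoS S l) : NoS S (step c l) := by
  constructor
  · intro e he s hs
    rcases mem_step he with he' | ⟨a, b, u, r, h1, rfl⟩
    · exact h.1 e he' s hs
    · cases hs with
      | refl =>
        have : labs (node a b) = labsU [a, b] := by
          simp [labs, labsU]
        rw [this]
        exact h.2 u [a, b] r (by simp [h1])
      | left hs => exact h.1 a (by simp [h1]) s hs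
      | right hs => exact h.1 b (by simp [h1]) s hs
  · intro l₁ l₂ l₃ hsp
    obtain ⟨m₁, m₂, m₃, h1, h2, _⟩ := step_ranges hsp
    rw [← h2]
    exact h.2 m₁ m₂ m₃ h1

lemma noS_run {S : Set ℕ+} : ∀ (w : List ℕ) {l : List CTree}, NoS S l → NoS S (run w l) := by
  intro w
  induction w with
  | nil => exact fun h => h
  | cons a w ih => exact fun h => ih (noS_step h)

lemma noS_point {l' : List CTree} {S : Set ℕ+} {estar : CTree} {qq zz : ℕ+}
    (hq : qq ∈ labs estar) (hqS : qq ∈ S) (hz : zz ∈ labs estar)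
    (hzS : zz ∉ S) (huni : ∀ e ∈ l', qq ∈ labs e → e = estar)
    (hK1 : ∀ e ∈ l', ∀ s, Sub s e → labs s ≠ S) : NoS S l' := by
  refine ⟨hK1, fun l₁ l₂ l₃ hsp hlab => ?_⟩
  have hq2 : qq ∈ labsU l₂ := hlab ▸ hqS
  obtain ⟨e, he2, hqe⟩ := mem_labsU.mp hq2
  have heq : e = estar := huni e (by subst hsp; simp [he2]) hqe
  subst heq
  exact hzS (hlab ▸ labs_sub_labsU he2 hz)

/-- disjointness facts for a list of the form `m₁ ++ x :: y :: m₂`. -/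
lemma PD_facts {m₁ : List CTree} {x y : CTree} {m₂ : List CTree}
    (h : PD (m₁ ++ x :: y :: m₂)) :
    (∀ z ∈ labs x, z ∉ labs y) ∧
    (∀ e ∈ m₁, ∀ z ∈ labs e, (z ∉ labs x ∧ z ∉ labs y)) ∧
    (∀ e ∈ m₂, (∀ z ∈ labs x, z ∉ labs e) ∧ (∀ z ∈ labs y, z ∉ labs e)) := by
  have h2 := PD_append_right h
  have hcross := (List.pairwise_append.mp h).2.2
  rw [PD, List.pairwise_cons] at h2
  have h3 := h2.2
  rw [List.pairwise_cons] at h3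
  refine ⟨h2.1 y (by simp), fun e he z hz => ?_, fun e he => ?_⟩
  · exact ⟨hcross e he x (by simp) z hz, hcross e he y (by simp) z hz⟩
  · exact ⟨fun z hz => h2.1 e (by simp [he]) z hz, fun z hz => h3.1 e (by simp [he]) z hz⟩

lemma entries_noS {m₁ : List CTree} {x y : CTree} {m₂ : List CTree}
    (h : PD (m₁ ++ x :: y :: m₂)) :
    ∀ e ∈ m₁ ++ x :: y :: m₂, ∀ s, Sub s e → labs s ≠ labs x ∪ labs y := by
  obtain ⟨hxy, hm1, hm2⟩ := PD_facts h
  obtain ⟨qx, hqx⟩ := labs_nonempty x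
  obtain ⟨qy, hqy⟩ := labs_nonempty y
  intro e he s hs hlab
  have hsub := sub_labs hs
  rcases List.mem_append.mp he with he | he
  · exact (hm1 e he qx (hsub (hlab ▸ Or.inl hqx))).1 hqx
  · rcases List.mem_cons.mp he with rfl | he
    · exact hxy qy (hsub (hlab ▸ Or.inr hqy)) hqy
    · rcases List.mem_cons.mp he with rfl | he
      · exact hxy qx hqx (hsub (hlab ▸ Or.inl hqx))
      · exact (hm2 e he).1 qx hqx (hsub (hlab ▸ Or.inl hqx))

/-- after merging the left neighbour of `x` with `x`, the pair labels can never occur. -/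
lemma noS_mergeLeft {u' : List CTree} {e₀ x y : CTree} {m₂ : List CTree}
    (h : PD (u' ++ e₀ :: x :: y :: m₂)) :
    NoS (labs x ∪ labs y) (u' ++ node e₀ x :: y :: m₂) := by
  obtain ⟨he0x, hu'0, hrest0⟩ := PD_facts (m₁ := u') (x := e₀) (y := x) h
  have h' : PD ((u' ++ [e₀]) ++ x :: y :: m₂) := by
    rwa [List.append_assoc, List.singleton_append]
  obtain ⟨hxy, hm1, hm2⟩ := PD_facts h'
  have he0y : ∀ z ∈ labs e₀, z ∉ labs y := fun z hz => (hm1 e₀ (by simp) z hz).2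
  obtain ⟨qx, hqx⟩ := labs_nonempty x
  obtain ⟨qy, hqy⟩ := labs_nonempty y
  obtain ⟨z0, hz0⟩ := labs_nonempty e₀
  have hz0S : z0 ∉ labs x ∪ labs y := by
    rintro (hc | hc)
    · exact he0x z0 hz0 hc
    · exact he0y z0 hz0 hc
  have hK1 : ∀ e ∈ u' ++ node e₀ x :: y :: m₂, ∀ s, Sub s e → labs s ≠ labs x ∪ labs y := by
    intro e he s hs hlab
    have hsub := sub_labs hs
    rcases List.mem_append.mp he with he | he
    · exact (hm1 e (by simp [he]) qx (hsub (hlab ▸ Or.inl hqx))).1 hqx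
    · rcases List.mem_cons.mp he with rfl | he
      · cases hs with
        | refl =>
          have : z0 ∈ labs x ∪ labs y := hlab ▸ (Or.inl hz0)
          exact hz0S this
        | left hs => exact he0x qx (sub_labs hs (hlab ▸ Or.inl hqx)) hqx
        | right hs => exact hxy qy (sub_labs hs (hlab ▸ Or.inr hqy)) hqy
      · rcases List.mem_cons.mp he with rfl | he
        · exact hxy qx hqx (hsub (hlab ▸ Or.inl hqx))
        · exact (hm2 e he).1 qx hqx (hsub (hlab ▸ Or.inl hqx))
  refine noS_point (estar := node e₀ x) (qq := qx) (zz := z0)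
    (Or.inr hqx) (Or.inl hqx) (Or.inl hz0) hz0S ?_ hK1
  intro e he hqe
  rcases List.mem_append.mp he with he | he
  · exact absurd hqx ((hm1 e (by simp [he]) qx hqe).1)
  · rcases List.mem_cons.mp he with rfl | he
    · rfl
    · rcases List.mem_cons.mp he with rfl | he
      · exact absurd hqe (hxy qx hqx)
      · exact absurd hqe ((hm2 e he).1 qx hqx)

/-- after merging `y` with its right neighbour, the pair labels can never occur. -/
lemma noS_mergeRight {m₁ : List CTree} {x y e₂ : CTree} {r : List CTree}
    (h : PD (m₁ ++ x :: y :: e₂ :: r)) :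
    NoS (labs x ∪ labs y) (m₁ ++ x :: node y e₂ :: r) := by
  obtain ⟨hxy, hm1, hm2⟩ := PD_facts (m₂ := e₂ :: r) h
  have h' : PD ((m₁ ++ [x]) ++ y :: e₂ :: r) := by
    rwa [List.append_assoc, List.singleton_append]
  obtain ⟨hye2, hm1', hm2'⟩ := PD_facts h'
  obtain ⟨qx, hqx⟩ := labs_nonempty x
  obtain ⟨qy, hqy⟩ := labs_nonempty y
  obtain ⟨z2, hz2⟩ := labs_nonempty e₂
  have hz2S : z2 ∉ labs x ∪ labs y := by
    rintro (hc | hc)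
    · exact (hm2 e₂ (by simp)).1 z2 hc hz2
    · exact hye2 z2 hc hz2
  have hK1 : ∀ e ∈ m₁ ++ x :: node y e₂ :: r, ∀ s, Sub s e → labs s ≠ labs x ∪ labs y := by
    intro e he s hs hlab
    have hsub := sub_labs hs
    rcases List.mem_append.mp he with he | he
    · exact (hm1 e he qx (hsub (hlab ▸ Or.inl hqx))).1 hqx
    · rcases List.mem_cons.mp he with rfl | he
      · exact hxy qy (hsub (hlab ▸ Or.inr hqy)) hqy
      · rcases List.mem_cons.mp he with rfl | he
        · cases hs with
          | refl =>
            have : z2 ∈ labs x ∪ labs y := hlab ▸ (Or.inr hz2)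
            exact hz2S this
          | left hs => exact hxy qx hqx (sub_labs hs (hlab ▸ Or.inl hqx))
          | right hs => exact hye2 qy hqy (sub_labs hs (hlab ▸ Or.inr hqy))
        · exact (hm2' e (by simp [he])).1 qy hqy (hsub (hlab ▸ Or.inr hqy))
  refine noS_point (estar := node y e₂) (qq := qy) (zz := z2)
    (Or.inl hqy) (Or.inr hqy) (Or.inr hz2) hz2S ?_ hK1
  intro e he hqe
  rcases List.mem_append.mp he with he | he
  · exact absurd hqy ((hm1 e he qy hqe).2)
  · rcases List.mem_cons.mp he with rfl | he
    · exact absurd hqe (fun hc => hxy qy hc hqy)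
    · rcases List.mem_cons.mp he with rfl | he
      · rfl
      · exact absurd hqe (fun hc => (hm2' e (by simp [he])).1 qy hqy hc)

lemma exists_split : ∀ (p : ℕ) (m : List CTree), p + 3 ≤ m.length →
    ∃ m₁ x y m₂, m = m₁ ++ x :: y :: m₂ ∧ m₁.length = p ∧ m₂ ≠ [] := by
  intro p
  induction p with
  | zero =>
    intro m h
    match m with
    | x :: y :: z :: r => exact ⟨[], x, y, z :: r, rfl, rfl, by simp⟩
  | succ p ih =>
    intro m h
    match m with
    | t :: m' =>
      obtain ⟨m₁, x, y, m₂, h1, h2, h3⟩ := ih m' (by simpa [Nat.succ_le_succ_iff] using h)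
      exact ⟨t :: m₁, x, y, m₂, by simp [h1], by simp [h2], h3⟩

end Stmt9Aux

namespace Stmt9Aux

lemma yrel' {P : Type*} [Group P] (yy : ℕ → P)
    (hrel : ∀ i k, yy (i+k+2) * yy i = yy i * yy (i+k+1)) {i j : ℕ} (h : i + 2 ≤ j) :
    yy j * yy i = yy i * yy (j - 1) := by
  have e1 : i + (j - i - 2) + 2 = j := by omega
  have e2 : i + (j - i - 2) + 1 = j - 1 := by omega
  have := hrel i (j - i - 2)
  rw [e1, e2] at this
  exact this

lemma pullMerge {P : Type*} [Group P] (yy : ℕ → P)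
    (hrel : ∀ i k, yy (i+k+2) * yy i = yy i * yy (i+k+1)) :
    ∀ (w : List ℕ) (m₁ : List CTree) (x y : CTree) (m₂ : List CTree),
    PD (m₁ ++ x :: y :: m₂) → m₂ ≠ [] → Sync w (m₁ ++ x :: y :: m₂).length →
    (∃ e ∈ run w (m₁ ++ x :: y :: m₂), ∃ s, Sub s e ∧ labs s = labs x ∪ labs y) →
    ∃ w' : List ℕ,
      ((w.map yy).prod = yy m₁.length * (w'.map yy).prod) ∧
      run w (m₁ ++ x :: y :: m₂) = run w' (step m₁.length (m₁ ++ x :: y :: m₂)) ∧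
      w'.length + 1 = w.length ∧ (∀ c ∈ w', ∃ d ∈ w, c ≤ d) := by
  intro w
  induction w with
  | nil =>
    intro m₁ x y m₂ hPD _ _ H
    obtain ⟨e, he, s, hs, hlab⟩ := H
    exact absurd hlab (entries_noS hPD e he s hs)
  | cons c w'' ih =>
    intro m₁ x y m₂ hPD hne hsync H
    have hm2len : 1 ≤ m₂.length := List.length_pos_iff.mpr hne
    have hmlen : (m₁ ++ x :: y :: m₂).length = m₁.length + 2 + m₂.length := by
      simp; omega
    obtain ⟨hc3, hsync''⟩ := sync_cons hsync
    have hcm : c + 2 ≤ (m₁ ++ x :: y :: m₂).length := by omega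
    have hsteplen : (step c (m₁ ++ x :: y :: m₂)).length = (m₁ ++ x :: y :: m₂).length - 1 := by
      have := step_length hcm
      omega
    have hsync2 : Sync w'' ((step c (m₁ ++ x :: y :: m₂)).length) := by
      rw [hsteplen]; exact hsync''
    have Hrun : ∃ e ∈ run w'' (step c (m₁ ++ x :: y :: m₂)),
        ∃ s, Sub s e ∧ labs s = labs x ∪ labs y := H
    by_cases hc1 : c = m₁.length
    · subst hc1
      refine ⟨w'', by simp, rfl, by simp, fun c' hc' => ⟨c', by simp [hc'], le_rfl⟩⟩
    · by_cases hc2 : c + 1 = m₁.length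
      · -- merge with left neighbour of x : contradiction
        rcases List.eq_nil_or_concat m₁ with rfl | ⟨u', e₀, rfl⟩
        · simp at hc2
        · exfalso
          have hconcat : u'.concat e₀ = u' ++ [e₀] := List.concat_eq_append
          rw [hconcat] at hPD Hrun hc2
          have hm' : (u' ++ [e₀]) ++ x :: y :: m₂ = u' ++ e₀ :: x :: y :: m₂ := by simp
          have hcu : c = u'.length := by
            have h9 : (u' ++ [e₀]).length = u'.length + 1 := by simp
            omega
          have hstep : step c ((u' ++ [e₀]) ++ x :: y :: m₂)
              = u' ++ node e₀ x :: y :: m₂ := by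
            rw [hm', hcu]
            exact step_at u' e₀ x (y :: m₂)
          rw [hstep] at Hrun
          obtain ⟨e, he, s, hs, hlab⟩ := Hrun
          have hnos := noS_run w'' (noS_mergeLeft (by rwa [hm'] at hPD))
          exact absurd hlab (hnos.1 e he s hs)
      · by_cases hc3' : c + 1 < m₁.length
        · -- disjoint step strictly inside m₁
          have hcm1 : c + 2 ≤ m₁.length := by omega
          have hstep : step c (m₁ ++ x :: y :: m₂) = step c m₁ ++ x :: y :: m₂ :=
            step_append_left _ hcm1
          have hlen1 : (step c m₁).length + 1 = m₁.length := step_length hcm1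
          have hPD' : PD (step c m₁ ++ x :: y :: m₂) := by
            rw [← hstep]; exact PD_step hPD
          have hsync3 : Sync w'' ((step c m₁ ++ x :: y :: m₂)).length := by
            rw [← hstep]; exact hsync2
          rw [hstep] at Hrun
          obtain ⟨w₃, hprod3, hrun3, hlen3, hlet3⟩ := ih (step c m₁) x y m₂ hPD' hne hsync3 Hrun
          refine ⟨c :: w₃, ?_, ?_, by simp; omega, ?_⟩
          · have hswap : yy m₁.length * yy c = yy c * yy (m₁.length - 1) :=
              yrel' yy hrel (by omega)
            have h1 : (step c m₁).length = m₁.length - 1 := by omega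
            rw [h1] at hprod3
            calc ((c :: w'').map yy).prod = yy c * (w''.map yy).prod := by simp
              _ = yy c * (yy (m₁.length - 1) * (w₃.map yy).prod) := by rw [hprod3]
              _ = (yy c * yy (m₁.length - 1)) * (w₃.map yy).prod := by rw [mul_assoc]
              _ = (yy m₁.length * yy c) * (w₃.map yy).prod := by rw [hswap]
              _ = yy m₁.length * ((c :: w₃).map yy).prod := by simp [mul_assoc]
          · have hkey : step (step c m₁).length (step c m₁ ++ x :: y :: m₂)
                = step c (step m₁.length (m₁ ++ x :: y :: m₂)) := by
              rw [step_at, step_at]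
              exact (step_append_left _ hcm1).symm
            show run w'' (step c (m₁ ++ x :: y :: m₂))
                = run w₃ (step c (step m₁.length (m₁ ++ x :: y :: m₂)))
            rw [hstep, hrun3, hkey]
          · intro c' hc'
            rcases List.mem_cons.mp hc' with rfl | hc'
            · exact ⟨c', by simp, le_rfl⟩
            · obtain ⟨d, hd, hcd⟩ := hlet3 c' hc'
              exact ⟨d, by simp [hd], hcd⟩
        · by_cases hc4 : c = m₁.length + 1
          · -- merge of y with its right neighbour : contradiction
            exfalso
            match m₂, hne with
            | e₂ :: r, _ =>
              have hm' : m₁ ++ x :: y :: e₂ :: r = (m₁ ++ [x]) ++ y :: e₂ :: r := by simp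
              have hcu : c = (m₁ ++ [x]).length := by simp; omega
              have hstep : step c (m₁ ++ x :: y :: e₂ :: r)
                  = m₁ ++ x :: node y e₂ :: r := by
                rw [hm', hcu, step_at]
                simp
              rw [hstep] at Hrun
              obtain ⟨e, he, s, hs, hlab⟩ := Hrun
              have hnos := noS_run w'' (noS_mergeRight hPD)
              exact absurd hlab (hnos.1 e he s hs)
          · -- disjoint step strictly inside m₂
            have hc5 : m₁.length + 2 ≤ c := by omega
            have hm' : m₁ ++ x :: y :: m₂ = (m₁ ++ [x, y]) ++ m₂ := by simp
            have hulen : (m₁ ++ [x, y]).length = m₁.length + 2 := by simp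
            have hstep : step c (m₁ ++ x :: y :: m₂)
                = m₁ ++ x :: y :: step (c - (m₁.length + 2)) m₂ := by
              rw [hm', step_append_right _ _ (by omega)]
              simp [hulen]
            have hne' : step (c - (m₁.length + 2)) m₂ ≠ [] := step_ne_nil hne
            have hPD' : PD (m₁ ++ x :: y :: step (c - (m₁.length + 2)) m₂) := by
              rw [← hstep]; exact PD_step hPD
            have hsync3 : Sync w'' ((m₁ ++ x :: y :: step (c - (m₁.length + 2)) m₂)).length := by
              rw [← hstep]; exact hsync2
            rw [hstep] at Hrun
            obtain ⟨w₃, hprod3, hrun3, hlen3, hlet3⟩ :=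
              ih m₁ x y (step (c - (m₁.length + 2)) m₂) hPD' hne' hsync3 Hrun
            refine ⟨(c - 1) :: w₃, ?_, ?_, by simp; omega, ?_⟩
            · have hswap : yy c * yy m₁.length = yy m₁.length * yy (c - 1) :=
                yrel' yy hrel (by omega)
              calc ((c :: w'').map yy).prod = yy c * (w''.map yy).prod := by simp
                _ = yy c * (yy m₁.length * (w₃.map yy).prod) := by rw [hprod3]
                _ = (yy c * yy m₁.length) * (w₃.map yy).prod := by rw [mul_assoc]
                _ = (yy m₁.length * yy (c - 1)) * (w₃.map yy).prod := by rw [hswap]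
                _ = yy m₁.length * (((c-1) :: w₃).map yy).prod := by simp [mul_assoc]
            · have hkey : step m₁.length (m₁ ++ x :: y :: step (c - (m₁.length + 2)) m₂)
                  = step (c - 1) (step m₁.length (m₁ ++ x :: y :: m₂)) := by
                rw [step_at, step_at]
                have h2 : m₁ ++ node x y :: m₂ = (m₁ ++ [node x y]) ++ m₂ := by simp
                rw [h2, step_append_right _ _ (by simp; omega)]
                have h3 : c - 1 - (m₁ ++ [node x y]).length = c - (m₁.length + 2) := by
                  simp; omega
                rw [h3]
                simp
              show run w'' (step c (m₁ ++ x :: y :: m₂))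
                  = run w₃ (step (c - 1) (step m₁.length (m₁ ++ x :: y :: m₂)))
              rw [hstep, hrun3, hkey]
            · intro c' hc'
              rcases List.mem_cons.mp hc' with rfl | hc'
              · exact ⟨c, by simp, by omega⟩
              · obtain ⟨d, hd, hcd⟩ := hlet3 c' hc'
                exact ⟨d, by simp [hd], hcd⟩

end Stmt9Aux

namespace Stmt9Aux

lemma runEq {P : Type*} [Group P] (yy : ℕ → P)
    (hrel : ∀ i k, yy (i+k+2) * yy i = yy i * yy (i+k+1)) :
    ∀ (n : ℕ) (u v : List ℕ) (m : List CTree), u.length ≤ n → PD m →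
      Sync u m.length → Sync v m.length → u.length = v.length → run u m = run v m →
      (u.map yy).prod = (v.map yy).prod := by
  intro n
  induction n with
  | zero =>
    intro u v m hlen _ _ _ hlv _
    match u, v, hlv with
    | [], [], _ => rfl
    | a :: u', v, hlv => simp at hlen
  | succ n ih =>
    intro u v m hlen hPD hsu hsv hlv hrun
    match u, v, hlv with
    | [], [], _ => rfl
    | a :: u', b :: v', hlv =>
      have core : ∀ (a b : ℕ) (u' v' : List ℕ), b < a →
          (a::u').length ≤ n+1 → Sync (a::u') m.length → Sync (b::v') m.length →
          (a::u').length = (b::v').length → run (a::u') m = run (b::v') m →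
          ((a::u').map yy).prod = ((b::v').map yy).prod := by
        intro a b u' v' hba hl hsa hsb hl2 hr
        have hb3 : b + 3 ≤ m.length := by
          have := hsb b (by simp)
          simp only [List.length_cons] at this
          omega
        obtain ⟨m₁, x, y, m₂, rfl, hm₁, hm₂⟩ := exists_split b m hb3
        have hnode : node x y ∈ step b (m₁ ++ x :: y :: m₂) := by
          rw [← hm₁, step_at]
          simp
        obtain ⟨e, he, hsube⟩ := pers_run v' hnode (Sub.refl _)
        have H : ∃ e ∈ run (a::u') (m₁ ++ x :: y :: m₂),
            ∃ s, Sub s e ∧ labs s = labs x ∪ labs y := by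
          refine ⟨e, ?_, node x y, hsube, rfl⟩
          rw [hr]
          exact he
        by_cases hab1 : a = b + 1
        · exfalso
          match m₂, hm₂ with
          | e₂ :: r, _ =>
            have hm' : m₁ ++ x :: y :: e₂ :: r = (m₁ ++ [x]) ++ y :: e₂ :: r := by simp
            have hca : a = (m₁ ++ [x]).length := by simp; omega
            have hstep : step a (m₁ ++ x :: y :: e₂ :: r)
                = m₁ ++ x :: node y e₂ :: r := by
              rw [hm', hca, step_at]
              simp
            obtain ⟨e', he', s, hs, hlab⟩ := H
            have he'' : e' ∈ run u' (m₁ ++ x :: node y e₂ :: r) := by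
              rw [← hstep]
              exact he'
            have hnos := noS_run u' (noS_mergeRight hPD)
            exact absurd hlab (hnos.1 e' he'' s hs)
        · have hab2 : b + 2 ≤ a := by omega
          obtain ⟨w₃, hprod, hrun3, hlen3, hlet3⟩ :=
            pullMerge yy hrel (a :: u') m₁ x y m₂ hPD hm₂ hsa H
          rw [hm₁] at hprod hrun3
          have hsteplen : (step b (m₁ ++ x :: y :: m₂)).length
              = (m₁ ++ x :: y :: m₂).length - 1 := by
            have := step_length (l := m₁ ++ x :: y :: m₂) (c := b) (by simp; omega)
            omega
          have hlw3 : w₃.length = u'.length := by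
            simp only [List.length_cons] at hlen3
            omega
          have hsync3 : Sync w₃ ((step b (m₁ ++ x :: y :: m₂)).length) := by
            intro c hc
            obtain ⟨d, hd, hcd⟩ := hlet3 c hc
            have := hsa d hd
            simp only [List.length_cons] at this
            rw [hsteplen, hlw3]
            omega
          have hsync4 : Sync v' ((step b (m₁ ++ x :: y :: m₂)).length) := by
            rw [hsteplen]
            exact (sync_cons hsb).2
          have hrec := ih w₃ v' (step b (m₁ ++ x :: y :: m₂))
            (by simp only [List.length_cons] at hl; omega)
            (PD_step hPD) hsync3 hsync4
            (by simp only [List.length_cons] at hl2; omega)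
            (by rw [← hrun3, hr]; rfl)
          calc ((a :: u').map yy).prod = yy b * (w₃.map yy).prod := hprod
            _ = yy b * (v'.map yy).prod := by rw [hrec]
            _ = ((b :: v').map yy).prod := by simp
      by_cases hab : a = b
      · subst hab
        have ha2 : a + 2 ≤ m.length := by
          have := hsu a (by simp)
          simp only [List.length_cons] at this
          omega
        have hsteplen : (step a m).length = m.length - 1 := by
          have := step_length ha2
          omega
        have hrec := ih u' v' (step a m)
          (by simp only [List.length_cons] at hlen; omega)
          (PD_step hPD)
          (by rw [hsteplen]; exact (sync_cons hsu).2)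
          (by rw [hsteplen]; exact (sync_cons hsv).2)
          (by simp only [List.length_cons] at hlv; omega)
          hrun
        simp only [List.map_cons, List.prod_cons, hrec]
      · rcases Nat.lt_or_ge a b with hlt | hge
        · exact (core b a v' u' hlt (by simp only [List.length_cons] at hlv hlen ⊢; omega)
            hsv hsu (by simp only [List.length_cons] at hlv ⊢; omega) hrun.symm).symm
        · exact core a b u' v' (by omega) hlen hsu hsv hlv hrun

end Stmt9Aux

namespace Stmt9Aux

/-! ### The presented group side -/

lemma rel_one {r : FreeGroup Addr} (hr : r ∈ relsA) : PresentedGroup.mk relsA r = 1 :=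
  (QuotientGroup.eq_one_iff r).mpr (Subgroup.subset_normalClosure hr)

lemma rel_pair {a b c d : Addr}
    (h : FreeGroup.of a * FreeGroup.of b * (FreeGroup.of c * FreeGroup.of d)⁻¹ ∈ relsA) :
    (PresentedGroup.of a : PresentedGroup relsA) * PresentedGroup.of b
      = PresentedGroup.of c * PresentedGroup.of d := by
  have h1 := rel_one h
  rw [map_mul, map_inv, map_mul, mul_inv_eq_one] at h1
  exact h1

lemma rel_penta (γ : Addr) :
    (PresentedGroup.of γ : PresentedGroup relsA) * PresentedGroup.of γ
      = PresentedGroup.of (γ ++ [true]) * PresentedGroup.of γ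
        * PresentedGroup.of (γ ++ [false]) := by
  have h1 := rel_one (r := FreeGroup.of γ * FreeGroup.of γ *
    (FreeGroup.of (γ ++ [true]) * FreeGroup.of γ * FreeGroup.of (γ ++ [false]))⁻¹)
    ⟨γ, Or.inr (Or.inr (Or.inr (Or.inr rfl)))⟩
  rw [map_mul, map_inv, map_mul, map_mul, mul_inv_eq_one] at h1
  exact h1

/-- the generator `y_n = A_{1^n}` of the presented group. -/
def yg (n : ℕ) : PresentedGroup relsA := PresentedGroup.of (ones n)

lemma ones_cons_eq (k : ℕ) (rest : Addr) : ones k ++ true :: rest = ones (k + 1) ++ rest := by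
  show List.replicate k true ++ true :: rest = List.replicate (k+1) true ++ rest
  rw [List.replicate_succ', List.append_assoc]
  rfl

lemma ones_append_two (i k : ℕ) : ones i ++ true :: true :: ones k = ones (i + k + 2) := by
  show List.replicate i true ++ true :: true :: List.replicate k true = _
  have : true :: true :: List.replicate k true = List.replicate (k + 2) true := rfl
  rw [this, ← List.replicate_add]
  show List.replicate (i + (k + 2)) true = List.replicate (i + k + 2) true
  rw [show i + (k + 2) = i + k + 2 by omega]

lemma ones_append_one (i k : ℕ) : ones i ++ true :: ones k = ones (i + k + 1) := by
  show List.replicate i true ++ true :: List.replicate k true = _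
  have : true :: List.replicate k true = List.replicate (k + 1) true := rfl
  rw [this, ← List.replicate_add]
  show List.replicate (i + (k + 1)) true = List.replicate (i + k + 1) true
  rw [show i + (k + 1) = i + k + 1 by omega]

lemma relY : ∀ i k : ℕ, yg (i + k + 2) * yg i = yg i * yg (i + k + 1) := by
  intro i k
  have := rel_pair (a := ones i ++ true :: true :: ones k) (b := ones i)
    (c := ones i) (d := ones i ++ true :: ones k)
    ⟨ones i, Or.inr (Or.inl ⟨ones k, rfl⟩)⟩
  rwa [ones_append_two, ones_append_one] at this

lemma yswap1 {j m : ℕ} (h : m + 1 ≤ j) : yg j * (yg m)⁻¹ = (yg m)⁻¹ * yg (j + 1) := by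
  have E := yrel' yg relY (i := m) (j := j + 1) (by omega)
  rw [show j + 1 - 1 = j from rfl] at E
  have h2 : yg j = (yg m)⁻¹ * (yg (j+1) * yg m) := by rw [E]; group
  rw [h2]; group

lemma yswap2 {j m : ℕ} (h : j < m) : yg j * (yg m)⁻¹ = (yg (m + 1))⁻¹ * yg j := by
  have E := yrel' yg relY (i := j) (j := m + 1) (by omega)
  rw [show m + 1 - 1 = m from rfl] at E
  have h2 : yg j = (yg (m+1))⁻¹ * (yg j * yg m) := by rw [← E]; group
  calc yg j * (yg m)⁻¹ = (yg (m+1))⁻¹ * (yg j * yg m) * (yg m)⁻¹ := by rw [← h2]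
    _ = (yg (m+1))⁻¹ * yg j := by group

/-- product of a positive word in the `y` generators. -/
def pw (u : List ℕ) : PresentedGroup relsA := (u.map yg).prod

lemma pw_nil : pw [] = 1 := rfl

lemma pw_cons (a : ℕ) (u : List ℕ) : pw (a :: u) = yg a * pw u := by simp [pw]

lemma pw_append (u v : List ℕ) : pw (u ++ v) = pw u * pw v := by simp [pw]

lemma push : ∀ (v : List ℕ) (i : ℕ),
    (∃ v', pw v * (yg i)⁻¹ = pw v') ∨ (∃ m v', pw v * (yg i)⁻¹ = (yg m)⁻¹ * pw v') := by
  intro v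
  induction v with
  | nil => exact fun i => Or.inr ⟨i, [], by simp [pw]⟩
  | cons j v ih =>
    intro i
    rcases ih i with ⟨v', hv'⟩ | ⟨m, v', hv'⟩
    · exact Or.inl ⟨j :: v', by rw [pw_cons, mul_assoc, hv', pw_cons]⟩
    · rcases Nat.lt_trichotomy j m with hjm | rfl | hjm
      · refine Or.inr ⟨m + 1, j :: v', ?_⟩
        rw [pw_cons, mul_assoc, hv', ← mul_assoc, yswap2 hjm, pw_cons, mul_assoc]
      · exact Or.inl ⟨v', by rw [pw_cons, mul_assoc, hv', ← mul_assoc]; group⟩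
      · refine Or.inr ⟨m, (j + 1) :: v', ?_⟩
        rw [pw_cons, mul_assoc, hv', ← mul_assoc, yswap1 (by omega), pw_cons, mul_assoc]

/-- evaluation of abstract words in the `y`s. -/
noncomputable def Φy : FreeGroup ℕ →* PresentedGroup relsA := FreeGroup.lift yg

/-- every generator of the presented group lies in the subgroup generated by the `y`s. -/
lemma claim1_aux : ∀ (n : ℕ) (k : ℕ) (τ : Addr), τ.length ≤ n →
    ∃ g : FreeGroup ℕ, (PresentedGroup.of (ones k ++ false :: τ) : PresentedGroup relsA)
      = Φy g := by
  intro n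
  induction n with
  | zero =>
    intro k τ hτ
    match τ, hτ with
    | [], _ =>
      have hp := rel_penta (ones k)
      rw [show ones k ++ [true] = ones (k+1) by
        simpa using ones_cons_eq k []] at hp
      refine ⟨(FreeGroup.of k)⁻¹ * (FreeGroup.of (k+1))⁻¹ * FreeGroup.of k * FreeGroup.of k, ?_⟩
      have : (PresentedGroup.of (ones k ++ [false]) : PresentedGroup relsA)
          = (yg k)⁻¹ * ((yg (k+1))⁻¹ * (yg k * yg k)) := by
        rw [show yg k * yg k = _ from hp]
        show _ = (yg k)⁻¹ * ((yg (k+1))⁻¹ *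
          (yg (k+1) * yg k * PresentedGroup.of (ones k ++ [false])))
        group
      rw [this]
      simp [Φy, map_mul, map_inv, FreeGroup.lift_apply_of, yg, mul_assoc]
  | succ n ih =>
    intro k τ hτ
    match τ with
    | [] =>
      exact ih k [] (by simp)
    | false :: τ' =>
      have hr := rel_pair (a := ones k ++ false :: τ') (b := ones k) (c := ones k)
        (d := ones k ++ false :: false :: τ') ⟨ones k, Or.inr (Or.inr (Or.inr (Or.inl ⟨τ', rfl⟩)))⟩
      obtain ⟨g', hg'⟩ := ih k τ' (by simpa [Nat.succ_le_succ_iff] using hτ)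
      refine ⟨(FreeGroup.of k)⁻¹ * g' * FreeGroup.of k, ?_⟩
      have hkey : (PresentedGroup.of (ones k ++ false :: false :: τ') : PresentedGroup relsA)
          = (yg k)⁻¹ * (PresentedGroup.of (ones k ++ false :: τ') * yg k) := by
        calc (PresentedGroup.of (ones k ++ false :: false :: τ') : PresentedGroup relsA)
            = (yg k)⁻¹ * (yg k * PresentedGroup.of (ones k ++ false :: false :: τ')) := by group
          _ = (yg k)⁻¹ * (PresentedGroup.of (ones k ++ false :: τ') * yg k) := by
              rw [show (yg k : PresentedGroup relsA) *
                PresentedGroup.of (ones k ++ false :: false :: τ')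
                = PresentedGroup.of (ones k ++ false :: τ') * yg k from hr.symm]
      rw [hkey, hg']
      simp [Φy, map_mul, map_inv, FreeGroup.lift_apply_of, yg, mul_assoc]
    | true :: τ' =>
      have hr := rel_pair (a := ones k ++ true :: false :: τ') (b := ones k) (c := ones k)
        (d := ones k ++ false :: true :: τ') ⟨ones k, Or.inr (Or.inr (Or.inl ⟨τ', rfl⟩))⟩
      rw [ones_cons_eq k (false :: τ')] at hr
      obtain ⟨g', hg'⟩ := ih (k + 1) τ' (by simpa [Nat.succ_le_succ_iff] using hτ)
      refine ⟨(FreeGroup.of k)⁻¹ * g' * FreeGroup.of k, ?_⟩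
      have hkey : (PresentedGroup.of (ones k ++ false :: true :: τ') : PresentedGroup relsA)
          = (yg k)⁻¹ * (PresentedGroup.of (ones (k+1) ++ false :: τ') * yg k) := by
        calc (PresentedGroup.of (ones k ++ false :: true :: τ') : PresentedGroup relsA)
            = (yg k)⁻¹ * (yg k * PresentedGroup.of (ones k ++ false :: true :: τ')) := by group
          _ = (yg k)⁻¹ * (PresentedGroup.of (ones (k+1) ++ false :: τ') * yg k) := by
              rw [show (yg k : PresentedGroup relsA) *
                PresentedGroup.of (ones k ++ false :: true :: τ')
                = PresentedGroup.of (ones (k+1) ++ false :: τ') * yg k from hr.symm]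
      rw [hkey, hg']
      simp [Φy, map_mul, map_inv, FreeGroup.lift_apply_of, yg, mul_assoc]

lemma claim1 : ∀ δ : Addr, ∃ g : FreeGroup ℕ,
    (PresentedGroup.of δ : PresentedGroup relsA) = Φy g := by
  have decomp : ∀ δ : Addr, (∃ k, δ = ones k) ∨ (∃ k τ, δ = ones k ++ false :: τ) := by
    intro δ
    induction δ with
    | nil => exact Or.inl ⟨0, rfl⟩
    | cons b δ' ih =>
      cases b
      · exact Or.inr ⟨0, δ', rfl⟩
      · rcases ih with ⟨k, rfl⟩ | ⟨k, τ, rfl⟩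
        · exact Or.inl ⟨k + 1, rfl⟩
        · exact Or.inr ⟨k + 1, τ, rfl⟩
  intro δ
  rcases decomp δ with ⟨k, rfl⟩ | ⟨k, τ, rfl⟩
  · exact ⟨FreeGroup.of k, by simp [Φy, FreeGroup.lift_apply_of, yg]⟩
  · exact claim1_aux τ.length k τ le_rfl

/-- every element of the presented group is a fraction of positive `y`-words. -/
lemma frac_mul_y (u v : List ℕ) (i : ℕ) :
    ∃ u' v', ((pw u)⁻¹ * pw v) * yg i = (pw u')⁻¹ * pw v' :=
  ⟨u, v ++ [i], by rw [pw_append, mul_assoc]; simp [pw]⟩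

lemma frac_mul_yinv (u v : List ℕ) (i : ℕ) :
    ∃ u' v', ((pw u)⁻¹ * pw v) * (yg i)⁻¹ = (pw u')⁻¹ * pw v' := by
  rcases push v i with ⟨v', hv'⟩ | ⟨m, v', hv'⟩
  · exact ⟨u, v', by rw [mul_assoc, hv']⟩
  · refine ⟨m :: u, v', ?_⟩
    rw [mul_assoc, hv', pw_cons]
    group

lemma frac_mul_Phi : ∀ (g : FreeGroup ℕ) (u v : List ℕ),
    ∃ u' v', ((pw u)⁻¹ * pw v) * Φy g = (pw u')⁻¹ * pw v' := by
  intro g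
  induction g using FreeGroup.induction_on with
  | C1 => exact fun u v => ⟨u, v, by simp⟩
  | of i =>
    intro u v
    have h0 : Φy (FreeGroup.of i) = yg i := FreeGroup.lift_apply_of
    rw [h0]
    exact frac_mul_y u v i
  | inv_of i _ =>
    intro u v
    have h0 : Φy ((FreeGroup.of i)⁻¹) = (yg i)⁻¹ := by
      rw [map_inv]
      exact congrArg _ FreeGroup.lift_apply_of
    rw [h0]
    exact frac_mul_yinv u v i
  | mul g₁ g₂ ih₁ ih₂ =>
    intro u v
    rw [map_mul, ← mul_assoc]
    obtain ⟨u', v', h1⟩ := ih₁ u v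
    rw [h1]
    exact ih₂ u' v'

lemma T_all : ∀ x : PresentedGroup relsA, ∃ u v, x = (pw u)⁻¹ * pw v := by
  intro x
  induction x using PresentedGroup.induction_on with
  | H z =>
    have key : ∀ (z : FreeGroup Addr) (u v : List ℕ),
        ∃ u' v', ((pw u)⁻¹ * pw v) * PresentedGroup.mk relsA z = (pw u')⁻¹ * pw v' := by
      intro z
      induction z using FreeGroup.induction_on with
      | C1 => exact fun u v => ⟨u, v, by simp⟩
      | of δ =>
        intro u v
        obtain ⟨g, hg⟩ := claim1 δ
        have h0 : PresentedGroup.mk relsA (FreeGroup.of δ) = Φy g := hg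
        rw [h0]
        exact frac_mul_Phi g u v
      | inv_of δ _ =>
        intro u v
        obtain ⟨g, hg⟩ := claim1 δ
        have h0 : PresentedGroup.mk relsA ((FreeGroup.of δ)⁻¹) = Φy g⁻¹ := by
          rw [map_inv, map_inv]
          exact congrArg _ hg
        rw [h0]
        exact frac_mul_Phi g⁻¹ u v
      | mul z₁ z₂ ih₁ ih₂ =>
        intro u v
        rw [map_mul, ← mul_assoc]
        obtain ⟨u', v', h1⟩ := ih₁ u v
        rw [h1]
        exact ih₂ u' v'
    obtain ⟨u', v', h⟩ := key z [] []
    refine ⟨u', v', ?_⟩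
    simp only [pw_nil, inv_one, one_mul] at h
    exact h

end Stmt9Aux

namespace Stmt9Aux

lemma le_foldr_max : ∀ {c : ℕ} {u : List ℕ}, c ∈ u → c ≤ u.foldr max 0 := by
  intro c u
  induction u with
  | nil => intro h; simp at h
  | cons a u ih =>
    intro h
    rcases List.mem_cons.mp h with rfl | h
    · exact le_max_left _ _
    · exact le_trans (ih h) (le_max_right _ _)

section Final

variable {G : Type*} [Group G] (q : GeoA →* G)

lemma φ_pw (hiff : ∀ f g : GeoA, q f = q g ↔ NearEq f.1 g.1) (u : List ℕ) :
    φ q hiff (pw u) = q ⟨evalP u, evalP_mem u⟩ := by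
  induction u with
  | nil =>
    rw [pw_nil, map_one]
    exact (map_one q).symm
  | cons a u ih =>
    rw [pw_cons, map_mul, ih]
    have h1 : φ q hiff (yg a) = q ⟨applyAt (ones a) opA, memA (ones a)⟩ := φ_of q hiff (ones a)
    rw [h1]
    exact (map_mul q ⟨applyAt (ones a) opA, memA (ones a)⟩ ⟨evalP u, evalP_mem u⟩).symm

lemma φ_inj (hiff : ∀ f g : GeoA, q f = q g ↔ NearEq f.1 g.1) :
    Function.Injective (φ q hiff) := by
  rw [injective_iff_map_eq_one]
  intro x hx
  obtain ⟨u, v, rfl⟩ := T_all x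
  rw [map_mul, map_inv, inv_mul_eq_one, φ_pw q hiff, φ_pw q hiff] at hx
  have hnear : NearEq (evalP u) (evalP v) := (hiff _ _).mp hx
  -- choose a long generic list of leaves
  set N := u.foldr max 0 + v.foldr max 0 + u.length + v.length + 4 with hN
  set l : List CTree := (List.range N).map (fun k => leaf ⟨k + 1, Nat.succ_pos k⟩) with hl
  have hlen : l.length = N := by simp [hl]
  have hSu : Sync u l.length := by
    intro c hc
    have := le_foldr_max hc
    rw [hlen]
    omega
  have hSv : Sync v l.length := by
    intro c hc
    have := le_foldr_max hc
    rw [hlen]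
    omega
  have hPD : PD l := by
    rw [hl, PD, List.pairwise_map]
    refine (List.pairwise_lt_range (n := N)).imp ?_
    intro a b hab z hza hzb
    simp only [labs, Set.mem_singleton_iff] at hza hzb
    rw [hza] at hzb
    have : a + 1 = b + 1 := congrArg Subtype.val hzb
    omega
  have hlne : l ≠ [] := by
    rw [hl]
    simp [hN]
  have hlast : ∃ L, l.getLast? = some (leaf L) := by
    have h1 : l.getLast? = some (l.getLast hlne) := List.getLast?_eq_getLast_of_ne_nil hlne
    have h2 : l.getLast hlne ∈ l := List.getLast_mem hlne
    have hall : ∀ e ∈ l, ∃ L, e = leaf L := by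
      intro e he
      rw [hl] at he
      obtain ⟨k, _, hk⟩ := List.mem_map.mp he
      exact ⟨_, hk.symm⟩
    obtain ⟨L, hLe⟩ := hall _ h2
    exact ⟨L, by rw [h1, hLe]⟩
  have hu := evalP_run (w := u) (l := l) hSu
  have hv := evalP_run (w := v) (l := l) hSv
  have heq : evalP u (comb l) = evalP v (comb l) :=
    hnear.2 (comb l) (by rw [hu]; rfl) (by rw [hv]; rfl)
  rw [hu, hv, Option.some.injEq] at heq
  have hrunlast_u : (run u l).getLast? = l.getLast? := run_last hSu
  have hrunlast_v : (run v l).getLast? = l.getLast? := run_last hSv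
  obtain ⟨L, hL⟩ := hlast
  have hrun : run u l = run v l :=
    comb_inj (run u l) (run v l) ⟨L, by rw [hrunlast_u, hL]⟩ ⟨L, by rw [hrunlast_v, hL]⟩ heq
  have hlu := run_length hSu
  have hlv := run_length hSv
  have hlen_uv : u.length = v.length := by
    rw [hrun] at hlu
    omega
  have hpw : pw u = pw v :=
    runEq yg relY u.length u v l le_rfl hPD hSu hSv hlen_uv hrun
  rw [hpw]
  group

end Final

end Stmt9Aux

open Stmt9Aux

/-- Proposition 2.13: the relations `R_A` make a presentation of the geometry group
`G(A)` — i.e. of any group `G` obtained from the geometry monoid `𝒢(A)` by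
identifying near-equal elements — in terms of the generators `A_α`: the canonical
homomorphism sending each generator to the class of `A_α` is an isomorphism. -/
theorem stmt9 (G : Type*) [Group G] (q : GeoA →* G)
    (hsurj : Function.Surjective q)
    (hiff : ∀ f g : GeoA, q f = q g ↔ NearEq f.1 g.1) :
    ∃ iso : PresentedGroup relsA ≃* G,
      ∀ α : Addr, iso (PresentedGroup.of α) = q ⟨applyAt α opA, memA α⟩ := by
  refine ⟨MulEquiv.ofBijective (φ q hiff) ⟨φ_inj q hiff, φ_surj q hiff hsurj⟩, fun α => ?_⟩
  show φ q hiff (PresentedGroup.of α) = _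
  exact φ_of q hiff α
end

section
/- The family {a_i : i ≥ 1}, where a_i is the class of the operator A_{1^{i−1}}, generates the geometry group G(A), and the relations a_i·a_{j−1} = a_j·a_i for all j ≥ i+2 make a presentation of G(A) in terms of these generators: the canonical homomorphism from the group presented by generators {a_i : i ≥ 1} and relations {a_i·a_{j−1} = a_j·a_i : j ≥ i+2} to G(A) is an isomorphism. -/
/-- The operator `a_{n+1} = A_{1^n}` (indices are shifted by one: the generator of
index `n : ℕ` is `a_{n+1}`). -/
def opa (n : ℕ) : PMap := applyAt (List.replicate n true) opA

theorem mema (n : ℕ) : opa n ∈ GeoA :=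
  Submonoid.subset_closure ⟨List.replicate n true, Or.inl rfl⟩

/-- The relations `a_i·a_{j-1} = a_j·a_i` for `j ≥ i+2`, as relators in the free
group on generators indexed by `ℕ` (index `n` standing for `a_{n+1}`): with
`i = n+1` and `j = i+2+k`, the relator is
`a_i·a_{j-1}·(a_j·a_i)⁻¹ = of n · of (n+1+k) · (of (n+2+k) · of n)⁻¹`. -/
def relsa : Set (FreeGroup ℕ) :=
  {x | ∃ n k : ℕ, x = FreeGroup.of n * FreeGroup.of (n + 1 + k) *
      (FreeGroup.of (n + 2 + k) * FreeGroup.of n)⁻¹}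
namespace Aux

open CTree

/-! ### Basic simp lemmas -/

theorem mul_app (f g : PMap) (t : CTree) : (f * g) t = (f t).bind g := rfl
theorem one_app (t : CTree) : (1 : PMap) t = some t := rfl

@[simp] theorem applyAt_nil (f : PMap) : applyAt [] f = f := rfl
@[simp] theorem applyAt_false_node (α : Addr) (f : PMap) (t₁ t₂ : CTree) :
    applyAt (false :: α) f (node t₁ t₂) = (applyAt α f t₁).map (fun s => node s t₂) := rfl
@[simp] theorem applyAt_true_node (α : Addr) (f : PMap) (t₁ t₂ : CTree) :
    applyAt (true :: α) f (node t₁ t₂) = (applyAt α f t₂).map (fun s => node t₁ s) := rfl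
@[simp] theorem applyAt_false_leaf (α : Addr) (f : PMap) (c : ℕ+) :
    applyAt (false :: α) f (leaf c) = none := rfl
@[simp] theorem applyAt_true_leaf (α : Addr) (f : PMap) (c : ℕ+) :
    applyAt (true :: α) f (leaf c) = none := rfl

@[simp] theorem opA_leaf (c : ℕ+) : opA (leaf c) = none := rfl
@[simp] theorem opA_node_leaf (t : CTree) (c : ℕ+) : opA (node t (leaf c)) = none := rfl
@[simp] theorem opA_node_node (t₁ t₂ t₃ : CTree) :
    opA (node t₁ (node t₂ t₃)) = some (node (node t₁ t₂) t₃) := rfl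

theorem applyAt_append (γ δ : Addr) (f : PMap) :
    applyAt (γ ++ δ) f = applyAt γ (applyAt δ f) := by
  induction γ with
  | nil => rfl
  | cons b γ ih =>
    cases b <;> · funext t; cases t <;> simp [ih]

theorem applyAt_mul (γ : Addr) (f g : PMap) :
    applyAt γ (f * g) = applyAt γ f * applyAt γ g := by
  induction γ with
  | nil => rfl
  | cons b γ ih =>
    cases b <;>
    · funext t
      cases t with
      | leaf c => rfl
      | node t₁ t₂ =>
        simp only [applyAt_false_node, applyAt_true_node, mul_app, ih]
        cases applyAt γ f t₁ <;> cases applyAt γ f t₂ <;> simp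

/-! ### Root-level literal identities -/

theorem rootI1 (β : Addr) :
    applyAt (false :: β) opA * opA = opA * applyAt (false :: false :: β) opA := by
  funext t
  match t with
  | leaf _ => rfl
  | node t₁ (leaf c) =>
    simp only [mul_app, applyAt_false_node, applyAt_true_node, opA_node_node,
      opA_node_leaf, opA_leaf, Option.bind_some, Option.map_map]
    cases applyAt β opA t₁ <;> simp
  | node t₁ (node t₂ t₃) =>
    simp only [mul_app, applyAt_false_node, applyAt_true_node, opA_node_node,
      opA_node_leaf, opA_leaf, Option.bind_some, Option.map_map]
    cases applyAt β opA t₁ <;> simp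

theorem rootI2 (β : Addr) :
    applyAt (true :: false :: β) opA * opA = opA * applyAt (false :: true :: β) opA := by
  funext t
  match t with
  | leaf _ => rfl
  | node t₁ (leaf c) => rfl
  | node t₁ (node t₂ t₃) =>
    simp only [mul_app, applyAt_false_node, applyAt_true_node, opA_node_node,
      opA_node_leaf, opA_leaf, Option.bind_some, Option.map_map]
    cases applyAt β opA t₂ <;> simp

theorem rootI3 (β : Addr) :
    opA * applyAt (true :: β) opA = applyAt (true :: true :: β) opA * opA := by
  funext t
  match t with
  | leaf _ => rfl
  | node t₁ (leaf c) => rfl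
  | node t₁ (node t₂ t₃) =>
    simp only [mul_app, applyAt_false_node, applyAt_true_node, opA_node_node,
      opA_node_leaf, opA_leaf, Option.bind_some, Option.map_map]
    cases applyAt β opA t₃ <;> simp

theorem rootPent :
    applyAt [true] opA * opA * applyAt [false] opA = opA * opA := by
  funext t
  match t with
  | leaf _ => rfl
  | node t₁ (leaf c) => rfl
  | node t₁ (node t₂ (leaf c)) => rfl
  | node t₁ (node t₂ (node t₃ t₄)) => rfl

end Aux
namespace Aux
open CTree

@[simp] theorem opa_zero : opa 0 = opA := rfl

theorem opa_succ_node (n : ℕ) (t₁ t₂ : CTree) :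
    opa (n+1) (node t₁ t₂) = (opa n t₂).map (fun s => node t₁ s) := rfl

@[simp] theorem opa_leaf (n : ℕ) (c : ℕ+) : opa n (leaf c) = none := by
  cases n <;> rfl

theorem opa_add (a x : ℕ) : opa (a + x) = applyAt (List.replicate a true) (opa x) := by
  unfold opa
  rw [List.replicate_add, applyAt_append]

/-- The key literal relation: `a_{i} a_{j-1} = a_j a_i` for `j ≥ i+2`. -/
theorem opa_swap (a c : ℕ) : opa a * opa (a + 1 + c) = opa (a + 2 + c) * opa a := by
  have root : opA * opa (1 + c) = opa (2 + c) * opA := by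
    have h1 : opa (1 + c) = applyAt (true :: List.replicate c true) opA := by
      unfold opa; rw [Nat.add_comm]; rfl
    have h2 : opa (2 + c) = applyAt (true :: true :: List.replicate c true) opA := by
      unfold opa; rw [Nat.add_comm]; rfl
    rw [h1, h2]; exact rootI3 _
  have e1 : a + 1 + c = a + (1 + c) := by omega
  have e2 : a + 2 + c = a + (2 + c) := by omega
  have e0 : opa a = applyAt (List.replicate a true) opA := rfl
  rw [e1, e2, opa_add a (1+c), opa_add a (2+c), e0]
  rw [← applyAt_mul, ← applyAt_mul, root]

end Aux
namespace Aux
open CTree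

/-! ### Leaves, subtrees, spine -/

def leaves : CTree → List ℕ+
  | leaf c => [c]
  | node t₁ t₂ => leaves t₁ ++ leaves t₂

theorem leaves_ne_nil (t : CTree) : leaves t ≠ [] := by
  induction t with
  | leaf c => simp [leaves]
  | node t₁ t₂ ih₁ ih₂ => simp [leaves]; intro h; exact absurd h ih₁

inductive IsSub : CTree → CTree → Prop
  | refl (t) : IsSub t t
  | left {s l r} : IsSub s l → IsSub s (node l r)
  | right {s l r} : IsSub s r → IsSub s (node l r)

theorem IsSub.trans {a b c : CTree} (h₁ : IsSub a b) (h₂ : IsSub b c) : IsSub a c := by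
  induction h₂ with
  | refl => exact h₁
  | left _ ih => exact .left ih
  | right _ ih => exact .right ih

theorem leaves_subset {s t : CTree} (h : IsSub s t) : ∀ x ∈ leaves s, x ∈ leaves t := by
  induction h with
  | refl => exact fun x hx => hx
  | left _ ih => intro x hx; simp [leaves]; exact Or.inl (ih x hx)
  | right _ ih => intro x hx; simp [leaves]; exact Or.inr (ih x hx)

theorem nodup_leaves_sub {s t : CTree} (h : IsSub s t) :
    (leaves t).Nodup → (leaves s).Nodup := by
  induction h with
  | refl => exact id
  | left _ ih =>
    intro hn; exact ih (List.nodup_append'.mp (by simpa [leaves] using hn)).1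
  | right _ ih =>
    intro hn; exact ih (List.nodup_append'.mp (by simpa [leaves] using hn)).2.1

/-- Two subtrees of a duplicate-free tree sharing a leaf are nested. -/
theorem nested {T s₁ s₂ : CTree} (hn : (leaves T).Nodup) (h₁ : IsSub s₁ T)
    (h₂ : IsSub s₂ T) (hc : ∃ x, x ∈ leaves s₁ ∧ x ∈ leaves s₂) :
    IsSub s₁ s₂ ∨ IsSub s₂ s₁ := by
  induction T with
  | leaf c =>
    cases h₁; cases h₂; exact Or.inl (.refl _)
  | node l r ihl ihr =>
    obtain ⟨hnl, hnr, hd⟩ := List.nodup_append'.mp (by simpa [leaves] using hn)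
    cases h₁ with
    | refl => exact Or.inr h₂
    | left hl₁ =>
      cases h₂ with
      | refl => exact Or.inl (.left hl₁)
      | left hl₂ => exact ihl hnl hl₁ hl₂
      | right hr₂ =>
        obtain ⟨x, hx₁, hx₂⟩ := hc
        exact absurd (leaves_subset hr₂ x hx₂) (hd (leaves_subset hl₁ x hx₁))
    | right hr₁ =>
      cases h₂ with
      | refl => exact Or.inl (.right hr₁)
      | right hr₂ => exact ihr hnr hr₁ hr₂
      | left hl₂ =>
        obtain ⟨x, hx₁, hx₂⟩ := hc
        exact absurd (leaves_subset hr₁ x hx₁) (hd (leaves_subset hl₂ x hx₂))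

/-- Subtree at address `1^m`. -/
def sub1 : ℕ → CTree → Option CTree
  | 0, t => some t
  | _+1, leaf _ => none
  | m+1, node _ t₂ => sub1 m t₂

@[simp] theorem sub1_zero (t : CTree) : sub1 0 t = some t := rfl
@[simp] theorem sub1_succ_node (m : ℕ) (t₁ t₂ : CTree) :
    sub1 (m+1) (node t₁ t₂) = sub1 m t₂ := rfl
@[simp] theorem sub1_succ_leaf (m : ℕ) (c : ℕ+) : sub1 (m+1) (leaf c) = none := rfl

theorem isSub_of_sub1 {m : ℕ} {t w : CTree} (h : sub1 m t = some w) : IsSub w t := by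
  induction m generalizing t with
  | zero => cases h; exact .refl _
  | succ m ih =>
    cases t with
    | leaf c => simp at h
    | node t₁ t₂ => exact .right (ih (by simpa using h))

/-- Right-spine length. -/
def rsl : CTree → ℕ
  | leaf _ => 0
  | node _ t₂ => rsl t₂ + 1

/-! ### How `opa` interacts with the spine -/

theorem opa_sub1 {m : ℕ} {t t' : CTree} (h : opa m t = some t') :
    ∃ a b r, sub1 m t = some (node a (node b r)) ∧ sub1 m t' = some (node (node a b) r) := by
  induction m generalizing t t' with
  | zero =>
    match t with
    | leaf _ => simp at h
    | node _ (leaf _) => simp at h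
    | node a (node b r) =>
      simp at h
      exact ⟨a, b, r, rfl, by subst h; rfl⟩
  | succ m ih =>
    match t with
    | leaf _ => simp at h
    | node t₁ t₂ =>
      rw [opa_succ_node] at h
      obtain ⟨t₂', h₂, hmap⟩ := Option.map_eq_some_iff.mp h
      obtain ⟨a, b, r, hs, hs'⟩ := ih h₂
      exact ⟨a, b, r, by simpa using hs, by rw [← hmap]; simpa using hs'⟩

theorem opa_leaves {m : ℕ} {t t' : CTree} (h : opa m t = some t') :
    leaves t' = leaves t := by
  induction m generalizing t t' with
  | zero =>
    match t with
    | leaf _ => simp at h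
    | node _ (leaf _) => simp at h
    | node a (node b r) => simp at h; rw [← h]; simp [leaves, List.append_assoc]
  | succ m ih =>
    match t with
    | leaf _ => simp at h
    | node t₁ t₂ =>
      rw [opa_succ_node] at h
      obtain ⟨t₂', h₂, hmap⟩ := Option.map_eq_some_iff.mp h
      rw [← hmap]; simp [leaves, ih h₂]

theorem opa_rsl {m : ℕ} {t t' : CTree} (h : opa m t = some t') :
    rsl t' + 1 = rsl t := by
  induction m generalizing t t' with
  | zero =>
    match t with
    | leaf _ => simp at h
    | node _ (leaf _) => simp at h
    | node a (node b r) => simp at h; rw [← h]; simp [rsl]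
  | succ m ih =>
    match t with
    | leaf _ => simp at h
    | node t₁ t₂ =>
      rw [opa_succ_node] at h
      obtain ⟨t₂', h₂, hmap⟩ := Option.map_eq_some_iff.mp h
      rw [← hmap]; simp [rsl]; exact ih h₂

theorem opa_total {n : ℕ} {t : CTree} (h : n + 2 ≤ rsl t) : ∃ t', opa n t = some t' := by
  induction n generalizing t with
  | zero =>
    match t, h with
    | node t₁ (node t₂ t₃), _ => exact ⟨_, rfl⟩
    | leaf _, h => simp [rsl] at h
    | node t₁ (leaf _), h => simp [rsl] at h
  | succ n ih =>
    match t, h with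
    | leaf _, h => simp [rsl] at h
    | node t₁ t₂, h =>
      obtain ⟨t₂', h₂⟩ := ih (t := t₂) (by simp [rsl] at h; omega)
      exact ⟨node t₁ t₂', by rw [opa_succ_node, h₂]; rfl⟩

end Aux
namespace Aux
open CTree

/-- `Pers s t`: `s` is a subtree of the left child of some right-spine node of `t`.
Such subtrees persist under all the `opa` moves. -/
def Pers (s t : CTree) : Prop :=
  ∃ j c z, sub1 j t = some (node c z) ∧ IsSub s c

theorem pers_opa {n : ℕ} {t t' : CTree} (h : opa n t = some t') {s : CTree}
    (hp : Pers s t) : Pers s t' := by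
  induction n generalizing t t' with
  | zero =>
    match t with
    | leaf _ => simp at h
    | node _ (leaf _) => simp at h
    | node α (node β γ) =>
      simp at h; subst h
      obtain ⟨j, c, z, hj, hs⟩ := hp
      match j, hj with
      | 0, hj =>
        simp at hj
        exact ⟨0, node α β, γ, rfl, .left (hj.1 ▸ hs)⟩
      | 1, hj =>
        simp at hj
        exact ⟨0, node α β, γ, rfl, .right (hj.1 ▸ hs)⟩
      | (j+2), hj =>
        exact ⟨j+1, c, z, by simpa using hj, hs⟩
  | succ n ih =>
    match t with
    | leaf _ => simp at h
    | node t₁ t₂ =>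
      rw [opa_succ_node] at h
      obtain ⟨t₂', h₂, hmap⟩ := Option.map_eq_some_iff.mp h
      subst hmap
      obtain ⟨j, c, z, hj, hs⟩ := hp
      match j, hj with
      | 0, hj =>
        simp at hj
        obtain ⟨h1, h2⟩ := hj
        subst h1
        exact ⟨0, t₁, t₂', rfl, hs⟩
      | (j+1), hj =>
        obtain ⟨j', c', z', hj', hs'⟩ := ih h₂ ⟨j, c, z, by simpa using hj, hs⟩
        exact ⟨j'+1, c', z', by simpa using hj', hs'⟩

theorem pers_isSub {s T : CTree} (h : Pers s T) : IsSub s T := by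
  obtain ⟨j, c, z, hj, hs⟩ := h
  exact (IsSub.trans hs (.left (.refl _))).trans (isSub_of_sub1 hj)

/-- Far case `m ≥ n+2`: `sub1` below the modified position is unchanged (reindexed). -/
theorem sub1_far_above {n : ℕ} {t t' : CTree} (h : opa n t = some t') (j : ℕ) :
    sub1 (n + 2 + j) t = sub1 (n + 1 + j) t' := by
  induction n generalizing t t' with
  | zero =>
    match t with
    | leaf _ => simp at h
    | node _ (leaf _) => simp at h
    | node α (node β γ) =>
      simp at h; subst h
      show sub1 (2+j) _ = sub1 (1+j) _
      rw [Nat.add_comm 2 j, Nat.add_comm 1 j]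
      simp
  | succ n ih =>
    match t with
    | leaf _ => simp at h
    | node t₁ t₂ =>
      rw [opa_succ_node] at h
      obtain ⟨t₂', h₂, hmap⟩ := Option.map_eq_some_iff.mp h
      subst hmap
      have g1 : sub1 (n+1+2+j) (node t₁ t₂) = sub1 (n+2+j) t₂ := by
        rw [show n+1+2+j = (n+2+j)+1 from by omega, sub1_succ_node]
      have g2 : sub1 (n+1+1+j) (node t₁ t₂') = sub1 (n+1+j) t₂' := by
        rw [show n+1+1+j = (n+1+j)+1 from by omega, sub1_succ_node]
      rw [g1, g2]
      exact ih h₂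

/-- Far case `m ≤ n-2`: the caret at `1^m` survives, with its tail modified. -/
theorem sub1_far_below {m e : ℕ} {t t' a b r : CTree}
    (hs : sub1 m t = some (node a (node b r))) (h : opa (m + 2 + e) t = some t') :
    ∃ r', sub1 m t' = some (node a (node b r')) ∧ opa e r = some r' := by
  induction m generalizing t t' with
  | zero =>
    simp at hs; subst hs
    rw [show (0+2+e : ℕ) = (e+1)+1 by omega, opa_succ_node] at h
    obtain ⟨x, hx, hmap⟩ := Option.map_eq_some_iff.mp h
    rw [opa_succ_node] at hx
    obtain ⟨y, hy, hmap2⟩ := Option.map_eq_some_iff.mp hx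
    subst hmap; subst hmap2
    exact ⟨y, rfl, hy⟩
  | succ m ih =>
    match t with
    | leaf _ => simp at hs
    | node t₁ t₂ =>
      have e1 : m+1+2+e = (m+2+e)+1 := by omega
      rw [e1, opa_succ_node] at h
      obtain ⟨t₂', h₂, hmap⟩ := Option.map_eq_some_iff.mp h
      subst hmap
      obtain ⟨r', hr₁, hr₂⟩ := ih (by simpa using hs) h₂
      exact ⟨r', by simpa using hr₁, hr₂⟩

/-! ### The action of positive words -/

/-- Composite of the operators `opa` along a list (first element acts first). -/
def Fw : List ℕ → PMap
  | [] => 1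
  | n :: l => opa n * Fw l

@[simp] theorem Fw_nil_app (t : CTree) : Fw [] t = some t := rfl
theorem Fw_cons_app (n : ℕ) (l : List ℕ) (t : CTree) :
    Fw (n :: l) t = (opa n t).bind (Fw l) := rfl

theorem Fw_mem (l : List ℕ) : Fw l ∈ GeoA := by
  induction l with
  | nil => exact one_mem _
  | cons n l ih => exact mul_mem (mema n) ih

theorem Fw_leaves {u : List ℕ} {t T : CTree} (h : Fw u t = some T) :
    leaves T = leaves t := by
  induction u generalizing t with
  | nil => simp at h; rw [h]
  | cons n u ih =>
    rw [Fw_cons_app] at h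
    obtain ⟨t₁, h₁, h₂⟩ := Option.bind_eq_some_iff.mp h
    rw [ih h₂, opa_leaves h₁]

theorem Fw_nodup {u : List ℕ} {t T : CTree} (h : Fw u t = some T)
    (hn : (leaves t).Nodup) : (leaves T).Nodup := by rw [Fw_leaves h]; exact hn

theorem Fw_rsl {u : List ℕ} {t T : CTree} (h : Fw u t = some T) :
    rsl T + u.length = rsl t := by
  induction u generalizing t with
  | nil => simp at h; rw [h]; simp
  | cons n u ih =>
    rw [Fw_cons_app] at h
    obtain ⟨t₁, h₁, h₂⟩ := Option.bind_eq_some_iff.mp h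
    have := ih h₂
    have := opa_rsl h₁
    simp [List.length_cons]; omega

theorem Fw_pers {u : List ℕ} {t T : CTree} (h : Fw u t = some T) {s : CTree}
    (hp : Pers s t) : Pers s T := by
  induction u generalizing t with
  | nil => simp at h; rw [← h]; exact hp
  | cons n u ih =>
    rw [Fw_cons_app] at h
    obtain ⟨t₁, h₁, h₂⟩ := Option.bind_eq_some_iff.mp h
    exact ih h₂ (pers_opa h₁ hp)

/-- A sufficient right-spine length for a word to act. -/
def bnd (u : List ℕ) : ℕ := u.length + u.foldr max 0 + 2

theorem Fw_total {u : List ℕ} {t : CTree} (h : bnd u ≤ rsl t) :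
    ∃ T, Fw u t = some T := by
  induction u generalizing t with
  | nil => exact ⟨t, rfl⟩
  | cons n u ih =>
    have hb : n + 2 ≤ rsl t := by
      simp [bnd, List.length_cons, List.foldr] at h; omega
    obtain ⟨t₁, h₁⟩ := opa_total hb
    have hr := opa_rsl h₁
    obtain ⟨T, hT⟩ := ih (t := t₁) (by simp [bnd, List.length_cons, List.foldr] at h ⊢; omega)
    exact ⟨T, by rw [Fw_cons_app, h₁]; exact hT⟩

/-- Right vines with distinct labels. -/
def vine : ℕ → ℕ → CTree
  | s, 0 => leaf ⟨s+1, Nat.succ_pos s⟩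
  | s, n+1 => node (leaf ⟨s+1, Nat.succ_pos s⟩) (vine (s+1) n)

theorem vine_rsl (s n : ℕ) : rsl (vine s n) = n := by
  induction n generalizing s with
  | zero => rfl
  | succ n ih => simp [vine, rsl, ih]

theorem vine_leaves_lt (s n : ℕ) : ∀ x ∈ leaves (vine s n), s < (x : ℕ) := by
  induction n generalizing s with
  | zero => intro x hx; simp [vine, leaves] at hx; have hx := List.mem_singleton.mp hx; subst hx; exact Nat.lt_succ_self s
  | succ n ih =>
    intro x hx
    simp [vine, leaves] at hx
    rcases hx with h | h
    · have h := List.mem_singleton.mp h; subst h; exact Nat.lt_succ_self s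
    · have := ih (s+1) x h; omega

theorem vine_nodup (s n : ℕ) : (leaves (vine s n)).Nodup := by
  induction n generalizing s with
  | zero => exact List.nodup_singleton _
  | succ n ih =>
    rw [show leaves (vine s (n+1)) = ⟨s+1, Nat.succ_pos s⟩ :: leaves (vine (s+1) n) from rfl]
    refine List.nodup_cons.mpr ⟨fun h => ?_, ih (s+1)⟩
    have := vine_leaves_lt (s+1) n _ h
    exact absurd this (Nat.lt_irrefl _)

end Aux
namespace Aux
open CTree

abbrev Pg := PresentedGroup relsa

def xg (n : ℕ) : Pg := PresentedGroup.of n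

theorem rel_g {a b : ℕ} (h : a < b) : xg a * xg b = xg (b+1) * xg a := by
  have hm : FreeGroup.of a * FreeGroup.of b *
      (FreeGroup.of (b+1) * FreeGroup.of a)⁻¹ ∈ relsa :=
    ⟨a, b - a - 1, by
      rw [show a+1+(b-a-1) = b from by omega, show a+2+(b-a-1) = b+1 from by omega]⟩
  have h1 : PresentedGroup.mk relsa (FreeGroup.of a * FreeGroup.of b *
      (FreeGroup.of (b+1) * FreeGroup.of a)⁻¹) = 1 :=
    (QuotientGroup.eq_one_iff _).mpr (Subgroup.subset_normalClosure hm)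
  rw [map_mul, map_mul, map_inv, map_mul] at h1
  exact mul_inv_eq_one.mp h1

/-- Positive words in the presented group. -/
def pos : List ℕ → Pg
  | [] => 1
  | n :: l => xg n * pos l

@[simp] theorem pos_nil : pos [] = 1 := rfl
theorem pos_cons (n : ℕ) (l : List ℕ) : pos (n :: l) = xg n * pos l := rfl

theorem pos_append (l₁ l₂ : List ℕ) : pos (l₁ ++ l₂) = pos l₁ * pos l₂ := by
  induction l₁ with
  | nil => simp
  | cons n l ih => simp [pos_cons, ih, mul_assoc]

/-- Reversing a positive letter past a negative one. -/
theorem rev_letter (m n : ℕ) :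
    (xg m * (xg n)⁻¹ = 1) ∨ (∃ m' n', xg m * (xg n)⁻¹ = (xg n')⁻¹ * xg m') := by
  rcases lt_trichotomy m n with h | h | h
  · refine Or.inr ⟨m, n+1, mul_left_cancel (a := xg (n+1)) ?_⟩
    rw [mul_inv_cancel_left, ← mul_assoc, ← rel_g h, mul_assoc, mul_inv_cancel, mul_one]
  · exact Or.inl (by rw [h, mul_inv_cancel])
  · refine Or.inr ⟨m+1, n, mul_left_cancel (a := xg n) ?_⟩
    rw [← mul_assoc, rel_g h, mul_inv_cancel_right, mul_inv_cancel_left]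

/-- Reversing one negative letter across a positive word. -/
theorem rev_one (v : List ℕ) (n : ℕ) :
    (∃ b, pos v * (xg n)⁻¹ = pos b) ∨ (∃ n' b, pos v * (xg n)⁻¹ = (xg n')⁻¹ * pos b) := by
  induction v with
  | nil => exact Or.inr ⟨n, [], by simp [pos_cons]⟩
  | cons m v ih =>
    rcases ih with ⟨b, hb⟩ | ⟨n', b, hb⟩
    · exact Or.inl ⟨m :: b, by rw [pos_cons, mul_assoc, hb, ← pos_cons]⟩
    · rcases rev_letter m n' with h1 | ⟨m', n'', h2⟩
      · refine Or.inl ⟨b, ?_⟩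
        rw [pos_cons, mul_assoc, hb, ← mul_assoc, h1, one_mul]
      · refine Or.inr ⟨n'', m' :: b, ?_⟩
        rw [pos_cons, mul_assoc, hb, ← mul_assoc, h2, mul_assoc, ← pos_cons]

/-- Full reversing: every `pos v * (pos u)⁻¹` has the form `(pos a)⁻¹ * pos b`. -/
theorem rev (u v : List ℕ) : ∃ a b, pos v * (pos u)⁻¹ = (pos a)⁻¹ * pos b := by
  induction u generalizing v with
  | nil => exact ⟨[], v, by simp⟩
  | cons n u ih =>
    rcases ih v with ⟨a, b, hab⟩
    have hstep : pos v * (pos (n :: u))⁻¹ = (pos a)⁻¹ * (pos b * (xg n)⁻¹) := by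
      rw [pos_cons, mul_inv_rev, ← mul_assoc, hab, mul_assoc]
    rcases rev_one b n with ⟨c, hc⟩ | ⟨n', c, hc⟩
    · exact ⟨a, c, by rw [hstep, hc]⟩
    · exact ⟨n' :: a, c, by
        rw [hstep, hc, ← mul_assoc, pos_cons, mul_inv_rev]⟩

/-- Every element of the presented group is a left fraction of positive words. -/
theorem frac (g : Pg) : ∃ a b, g = (pos a)⁻¹ * pos b := by
  have htop : g ∈ Subgroup.closure (Set.range (PresentedGroup.of : ℕ → Pg)) := by
    rw [PresentedGroup.closure_range_of]; trivial
  induction htop using Subgroup.closure_induction with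
  | mem x hx =>
    obtain ⟨n, rfl⟩ := hx
    exact ⟨[], [n], by simp [pos_cons, pos_nil, xg]⟩
  | one => exact ⟨[], [], by simp⟩
  | mul x y _ _ hx hy =>
    obtain ⟨a, b, rfl⟩ := hx
    obtain ⟨a', b', rfl⟩ := hy
    obtain ⟨c, d, hcd⟩ := rev a' b
    exact ⟨c ++ a, d ++ b', by
      rw [pos_append, pos_append, mul_inv_rev]
      calc (pos a)⁻¹ * pos b * ((pos a')⁻¹ * pos b')
          = (pos a)⁻¹ * (pos b * (pos a')⁻¹) * pos b' := by group
        _ = (pos a)⁻¹ * ((pos c)⁻¹ * pos d) * pos b' := by rw [hcd]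
        _ = (pos a)⁻¹ * (pos c)⁻¹ * (pos d * pos b') := by group⟩
  | inv x _ hx =>
    obtain ⟨a, b, rfl⟩ := hx
    exact ⟨b, a, by rw [mul_inv_rev, inv_inv]⟩

end Aux
namespace Aux
open CTree

theorem bind_bind (x : Option CTree) (g h : PMap) :
    (x.bind g).bind h = x.bind (fun s => (g s).bind h) := by cases x <;> rfl

theorem sub1_add (n k : ℕ) (t : CTree) : sub1 (n + k) t = (sub1 n t).bind (sub1 k) := by
  induction n generalizing t with
  | zero => simp [Nat.zero_add]
  | succ n ih =>
    cases t with
    | leaf c => rw [show n+1+k = (n+k)+1 from by omega]; simp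
    | node t₁ t₂ =>
      rw [show n+1+k = (n+k)+1 from by omega, sub1_succ_node, ih, sub1_succ_node]

theorem leaves_exists (t : CTree) : ∃ w, w ∈ leaves t := by
  cases hl : leaves t with
  | nil => exact absurd hl (leaves_ne_nil t)
  | cons w l => exact ⟨w, by simp [hl]⟩

/-- Two overlapping carets cannot both be subtrees of a duplicate-free tree. -/
theorem clash {T x y z : CTree} (hn : (leaves T).Nodup)
    (h₁ : IsSub (node x y) T) (h₂ : IsSub (node y z) T)
    (dxy : (leaves x).Disjoint (leaves y)) (dxz : (leaves x).Disjoint (leaves z))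
    (dyz : (leaves y).Disjoint (leaves z)) : False := by
  obtain ⟨w, hw⟩ := leaves_exists y
  have hc : ∃ w, w ∈ leaves (node x y) ∧ w ∈ leaves (node y z) :=
    ⟨w, by simp [leaves]; exact Or.inr hw, by simp [leaves]; exact Or.inl hw⟩
  rcases nested hn h₁ h₂ hc with h | h
  · obtain ⟨w', hw'⟩ := leaves_exists x
    have : w' ∈ leaves (node y z) :=
      leaves_subset h w' (by simp [leaves]; exact Or.inl hw')
    simp [leaves] at this
    rcases this with h' | h'
    · exact dxy hw' h'
    · exact dxz hw' h'
  · obtain ⟨w', hw'⟩ := leaves_exists z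
    have : w' ∈ leaves (node x y) :=
      leaves_subset h w' (by simp [leaves]; exact Or.inr hw')
    simp [leaves] at this
    rcases this with h' | h'
    · exact dxz.symm hw' h'
    · exact dyz.symm hw' h'

theorem nodup4 {la lb lc ld : List ℕ+} (h : (la ++ (lb ++ (lc ++ ld))).Nodup) :
    la.Disjoint lb ∧ la.Disjoint lc ∧ lb.Disjoint lc := by
  obtain ⟨h1, h2, h3⟩ := List.nodup_append'.mp h
  obtain ⟨h4, h5, h6⟩ := List.nodup_append'.mp h2
  refine ⟨fun {x} hx hy => h3 hx (by simp [hy]), fun {x} hx hy => h3 hx (by simp [hy]),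
    fun {x} hx hy => h6 hx (by simp [hy])⟩

/-- A caret available at `1^m` is never already a subtree of the tree itself. -/
theorem no_caret_self {t a b r : CTree} (hn : (leaves t).Nodup) {m : ℕ}
    (hs : sub1 m t = some (node a (node b r))) : ¬ IsSub (node a b) t := by
  intro hab
  have hbig : IsSub (node a (node b r)) t := isSub_of_sub1 hs
  have hctx : (leaves a ++ (leaves b ++ leaves r)).Nodup := by
    have := nodup_leaves_sub hbig hn
    simpa [leaves] using this
  obtain ⟨hna, hbr, hd⟩ := List.nodup_append'.mp hctx
  obtain ⟨hnb, hnr, hdbr⟩ := List.nodup_append'.mp hbr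
  obtain ⟨w, hw⟩ := leaves_exists a
  have hc : ∃ w, w ∈ leaves (node a b) ∧ w ∈ leaves (node a (node b r)) :=
    ⟨w, by simp [leaves]; exact Or.inl hw, by simp [leaves]; exact Or.inl hw⟩
  rcases nested hn hab hbig hc with h | h
  · cases h with
    | left h' =>
      obtain ⟨w', hw'⟩ := leaves_exists b
      have : w' ∈ leaves a := leaves_subset h' w' (by simp [leaves]; exact Or.inr hw')
      exact hd this (by simp [hw'])
    | right h' =>
      obtain ⟨w', hw'⟩ := leaves_exists a
      have : w' ∈ leaves (node b r) := leaves_subset h' w' (by simp [leaves]; exact Or.inl hw')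
      exact hd hw' (by simpa [leaves] using this)
  · obtain ⟨w', hw'⟩ := leaves_exists r
    have : w' ∈ leaves (node a b) :=
      leaves_subset h w' (by simp [leaves]; exact Or.inr (Or.inr hw'))
    simp [leaves] at this
    rcases this with h' | h'
    · exact hd h' (by simp [hw'])
    · exact hdbr h' hw'

/-- The exchange lemma: if a word `u` takes `t` to `T` and the caret of the move
`a_m` at `t` is visible as a subtree of `T`, then modulo the relations `u` can be
rewritten to start with the letter `m`. -/
theorem exchange : ∀ (u : List ℕ) (t T : CTree), (leaves t).Nodup → Fw u t = some T →
    ∀ (m : ℕ) (a b r : CTree), sub1 m t = some (node a (node b r)) →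
    IsSub (node a b) T →
    ∃ u'', ((opa m t).bind (Fw u'') = some T) ∧ pos u = xg m * pos u'' := by
  intro u
  induction u with
  | nil =>
    intro t T hn hu m a b r hs hsub
    simp at hu; subst hu
    exact absurd hsub (no_caret_self hn hs)
  | cons n u' ih =>
    intro t T hn hu m a b r hs hsub
    rw [Fw_cons_app] at hu
    obtain ⟨t', hn1, h2⟩ := Option.bind_eq_some_iff.mp hu
    have hn' : (leaves t').Nodup := by rw [opa_leaves hn1]; exact hn
    rcases Nat.lt_trichotomy n m with hlt | heq | hgt
    · -- n < m
      rcases Nat.lt_or_ge (n+1) m with hlt2 | hge2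
      · -- m ≥ n+2, set e := m - n - 2
        obtain ⟨e, rfl⟩ : ∃ e, m = n + 2 + e := ⟨m - n - 2, by omega⟩
        have hs' : sub1 (n + 1 + e) t' = some (node a (node b r)) := by
          rw [← sub1_far_above hn1 e]; exact hs
        obtain ⟨u''', hsem, hpos⟩ := ih t' T hn' h2 (n+1+e) a b r hs' hsub
        refine ⟨n :: u''', ?_, ?_⟩
        · have key : (opa (n+2+e) t).bind (opa n) = opa (n+1+e) t' := by
            have := congrFun (opa_swap n e).symm t
            simp only [mul_app] at this
            rw [this, hn1]; rfl
          show (opa (n+2+e) t).bind (fun s => (opa n s).bind (Fw u''')) = some T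
          rw [← bind_bind, key]; exact hsem
        · have hI : xg n * xg (n+1+e) = xg (n+2+e) * xg n := by
            have := rel_g (show n < n+1+e by omega)
            rwa [show n+1+e+1 = n+2+e from by omega] at this
          rw [pos_cons, hpos, ← mul_assoc, hI, mul_assoc, ← pos_cons]
      · -- m = n+1 : contradiction
        have hm1 : m = n + 1 := by omega
        subst hm1
        obtain ⟨α, β, γ, hα, hα'⟩ := opa_sub1 hn1
        have hβγ : node β γ = node a (node b r) := by
          have h1 : sub1 (n+1) t = some (node β γ) := by
            rw [sub1_add n 1, hα]; rfl
          rw [h1] at hs; exact Option.some_injective _ hs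
        obtain ⟨hβ, hγ⟩ : β = a ∧ γ = node b r := by
          injection hβγ with e1 e2; exact ⟨e1, e2⟩
        rw [hβ, hγ] at hα'
        have hPers : IsSub (node α a) T :=
          pers_isSub (Fw_pers h2 ⟨n, node α a, node b r, hα', .refl _⟩)
        have hctx : (leaves α ++ (leaves a ++ (leaves b ++ leaves r))).Nodup := by
          have := nodup_leaves_sub (isSub_of_sub1 hα) hn
          rw [hβ, hγ] at this
          simpa [leaves] using this
        obtain ⟨d1, d2, d3⟩ := nodup4 hctx
        exact absurd (clash (Fw_nodup h2 hn') hPers hsub d1 d2 d3) not_false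
    · -- n = m
      subst heq
      exact ⟨u', by rw [hn1]; exact h2, rfl⟩
    · -- n > m
      rcases Nat.lt_or_ge (m+1) n with hlt2 | hge2
      · -- n ≥ m+2, set e := n - m - 2
        obtain ⟨e, rfl⟩ : ∃ e, n = m + 2 + e := ⟨n - m - 2, by omega⟩
        obtain ⟨r', hr1, hr2⟩ := sub1_far_below hs hn1
        obtain ⟨u''', hsem, hpos⟩ := ih t' T hn' h2 m a b r' hr1 hsub
        refine ⟨(m+1+e) :: u''', ?_, ?_⟩
        · have key2 : (opa m t).bind (opa (m+1+e)) = (opa (m+2+e) t).bind (opa m) := by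
            have := congrFun (opa_swap m e) t
            simpa only [mul_app] using this
          show (opa m t).bind (fun s => (opa (m+1+e) s).bind (Fw u''')) = some T
          rw [← bind_bind, key2, hn1, Option.bind_some]; exact hsem
        · have hI : xg m * xg (m+1+e) = xg (m+2+e) * xg m := by
            have := rel_g (show m < m+1+e by omega)
            rwa [show m+1+e+1 = m+2+e from by omega] at this
          rw [pos_cons, hpos, ← mul_assoc, ← hI, mul_assoc, ← pos_cons]
      · -- n = m+1 : contradiction
        have hm1 : n = m + 1 := by omega
        subst hm1
        obtain ⟨β, γ, δ, hβ, hβ'⟩ := opa_sub1 hn1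
        have hbr : node b r = node β (node γ δ) := by
          have h1 : sub1 (m+1) t = some (node b r) := by
            rw [sub1_add m 1, hs]; rfl
          rw [h1] at hβ; exact Option.some_injective _ hβ
        obtain ⟨hb, hr⟩ : b = β ∧ r = node γ δ := by
          injection hbr with e1 e2; exact ⟨e1, e2⟩
        rw [← hb] at hβ'
        have hPers : IsSub (node b γ) T :=
          pers_isSub (Fw_pers h2 ⟨m+1, node b γ, δ, hβ', .refl _⟩)
        have hctx : (leaves a ++ (leaves b ++ (leaves γ ++ leaves δ))).Nodup := by
          have := nodup_leaves_sub (isSub_of_sub1 hs) hn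
          rw [hr] at this
          simpa [leaves] using this
        obtain ⟨d1, d2, d3⟩ := nodup4 hctx
        exact absurd (clash (Fw_nodup h2 hn') hsub hPers d1 d2 d3) not_false

end Aux
namespace Aux
open CTree

/-- Coherence: two positive words acting identically on a duplicate-free tree are
equal in the presented group. -/
theorem coherence : ∀ (v u : List ℕ) (t T : CTree), (leaves t).Nodup →
    Fw u t = some T → Fw v t = some T → pos u = pos v := by
  intro v
  induction v with
  | nil =>
    intro u t T hn hu hv
    simp at hv; subst hv
    have h1 := Fw_rsl hu
    have h2 : u.length = 0 := by omega
    rw [List.length_eq_zero_iff.mp h2]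
  | cons m v ih =>
    intro u t T hn hu hv
    rw [Fw_cons_app] at hv
    obtain ⟨t', hm, hv'⟩ := Option.bind_eq_some_iff.mp hv
    obtain ⟨a, b, r, hs, hs'⟩ := opa_sub1 hm
    have hsub : IsSub (node a b) T :=
      pers_isSub (Fw_pers hv' ⟨m, node a b, r, hs', .refl _⟩)
    obtain ⟨u'', hsem, hpos⟩ := exchange u t T hn hu m a b r hs hsub
    rw [hm, Option.bind_some] at hsem
    have heq : pos u'' = pos v :=
      ih u'' t' T (by rw [opa_leaves hm]; exact hn) hsem hv'
    rw [hpos, heq, pos_cons]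

end Aux
namespace Aux
open CTree

theorem memA (γ : Addr) : applyAt γ opA ∈ GeoA :=
  Submonoid.subset_closure ⟨γ, Or.inl rfl⟩

theorem memAi (γ : Addr) : applyAt γ opAi ∈ GeoA :=
  Submonoid.subset_closure ⟨γ, Or.inr rfl⟩

/-- Grafting a tree at the end of an address. -/
def graft : Addr → CTree → CTree
  | [], s => s
  | false :: γ, s => node (graft γ s) (leaf 1)
  | true :: γ, s => node (leaf 1) (graft γ s)

theorem applyAt_graft (γ : Addr) (f : PMap) (s : CTree) :
    applyAt γ f (graft γ s) = (f s).map (graft γ) := by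
  induction γ with
  | nil => simp [graft]
  | cons b γ ih =>
    cases b <;> (simp [graft, ih, Option.map_map]; try (cases f s <;> rfl))

theorem inv_pt : ∀ (γ : Addr) (t w : CTree), applyAt γ opA t = some w →
    applyAt γ opAi w = some t := by
  intro γ
  induction γ with
  | nil =>
    intro t w h
    match t, h with
    | node t₁ (node t₂ t₃), h =>
      simp at h; rw [← h]; rfl
  | cons b γ ih =>
    intro t w h
    cases b <;>
    · match t, h with
      | node t₁ t₂, h =>
        simp at h
        obtain ⟨s, hs, rfl⟩ := h
        simp [ih _ _ hs]

section Qside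

variable {G : Type*} [Group G] (q : GeoA →* G)

theorem qrel {f g f' g' : PMap} (hf : f ∈ GeoA) (hg : g ∈ GeoA) (hf' : f' ∈ GeoA)
    (hg' : g' ∈ GeoA) (h : f * g = f' * g') :
    q ⟨f, hf⟩ * q ⟨g, hg⟩ = q ⟨f', hf'⟩ * q ⟨g', hg'⟩ := by
  rw [← map_mul, ← map_mul]
  congr 1
  exact Subtype.ext h

theorem q3 {f1 f2 f3 g1 g2 : PMap} (h1 : f1 ∈ GeoA) (h2 : f2 ∈ GeoA) (h3 : f3 ∈ GeoA)
    (hg1 : g1 ∈ GeoA) (hg2 : g2 ∈ GeoA) (h : f1 * (f2 * f3) = g1 * g2) :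
    q ⟨f1, h1⟩ * (q ⟨f2, h2⟩ * q ⟨f3, h3⟩) = q ⟨g1, hg1⟩ * q ⟨g2, hg2⟩ := by
  rw [← map_mul, ← map_mul, ← map_mul]
  congr 1
  exact Subtype.ext h

/-- Lifted identities. -/
theorem liftI1 (k : ℕ) (β : Addr) :
    applyAt (List.replicate k true ++ (false :: β)) opA * opa k =
      opa k * applyAt (List.replicate k true ++ (false :: false :: β)) opA := by
  rw [applyAt_append, applyAt_append]
  show _ * applyAt (List.replicate k true) opA = applyAt (List.replicate k true) opA * _
  rw [← applyAt_mul, ← applyAt_mul, rootI1]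

theorem liftI2 (k : ℕ) (β : Addr) :
    applyAt (List.replicate k true ++ (true :: false :: β)) opA * opa k =
      opa k * applyAt (List.replicate k true ++ (false :: true :: β)) opA := by
  rw [applyAt_append, applyAt_append]
  show _ * applyAt (List.replicate k true) opA = applyAt (List.replicate k true) opA * _
  rw [← applyAt_mul, ← applyAt_mul, rootI2]

theorem liftPent (k : ℕ) :
    opa (k+1) * (opa k * applyAt (List.replicate k true ++ [false]) opA) =
      opa k * opa k := by
  have h1 : opa (k+1) = applyAt (List.replicate k true) (applyAt [true] opA) := by
    unfold opa
    rw [List.replicate_succ' (n := k), applyAt_append]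
  have h2 : opa k = applyAt (List.replicate k true) opA := rfl
  rw [h1, h2, applyAt_append]
  rw [← applyAt_mul, ← applyAt_mul, ← applyAt_mul]
  rw [← mul_assoc, rootPent]

theorem rep_cons (k : ℕ) (δ : Addr) :
    List.replicate k true ++ (true :: δ) = List.replicate (k+1) true ++ δ := by
  rw [List.replicate_succ' (n := k), List.append_assoc]
  rfl

/-- The images of the `a_i` generate everything generated by the `A_α`. -/
theorem keyA : ∀ (N : ℕ) (α : Addr), α.length ≤ N → ∀ (k : ℕ),
    q ⟨applyAt (List.replicate k true ++ α) opA, memA _⟩ ∈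
      Subgroup.closure (Set.range fun n : ℕ => q ⟨opa n, mema n⟩) := by
  intro N
  induction N with
  | zero =>
    intro α hα k
    rw [List.length_eq_zero_iff.mp (Nat.le_zero.mp hα)]
    have he : (⟨applyAt (List.replicate k true ++ []) opA, memA _⟩ : GeoA) =
        ⟨opa k, mema k⟩ := Subtype.ext (by rw [List.append_nil]; rfl)
    rw [he]
    exact Subgroup.subset_closure ⟨k, rfl⟩
  | succ N ihN =>
    intro α hα k
    set H := Subgroup.closure (Set.range fun n : ℕ => q ⟨opa n, mema n⟩) with hH
    match α with
    | [] =>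
      have he : (⟨applyAt (List.replicate k true ++ []) opA, memA _⟩ : GeoA) =
          ⟨opa k, mema k⟩ := Subtype.ext (by rw [List.append_nil]; rfl)
      rw [he]
      exact Subgroup.subset_closure ⟨k, rfl⟩
    | true :: δ =>
      rw [show List.replicate k true ++ (true :: δ) = List.replicate (k+1) true ++ δ
        from rep_cons k δ]
      exact ihN δ (by simp at hα ⊢; omega) (k+1)
    | [false] =>
      -- pentagon
      have hq := q3 q (mema (k+1)) (mema k) (memA _) (mema k) (mema k) (liftPent k)
      have hx : q ⟨applyAt (List.replicate k true ++ [false]) opA, memA _⟩ =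
          (q ⟨opa k, mema k⟩)⁻¹ * ((q ⟨opa (k+1), mema (k+1)⟩)⁻¹ *
            (q ⟨opa k, mema k⟩ * q ⟨opa k, mema k⟩)) := by
        rw [← hq, inv_mul_cancel_left, inv_mul_cancel_left]
      rw [hx]
      have hk : q ⟨opa k, mema k⟩ ∈ H := Subgroup.subset_closure ⟨k, rfl⟩
      have hk1 : q ⟨opa (k+1), mema (k+1)⟩ ∈ H := Subgroup.subset_closure ⟨k+1, rfl⟩
      exact mul_mem (inv_mem hk) (mul_mem (inv_mem hk1) (mul_mem hk hk))
    | false :: false :: ε =>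
      have hq := qrel q (memA _) (mema k) (mema k) (memA _) (liftI1 k ε)
      have hx : q ⟨applyAt (List.replicate k true ++ (false :: false :: ε)) opA, memA _⟩ =
          (q ⟨opa k, mema k⟩)⁻¹ *
            (q ⟨applyAt (List.replicate k true ++ (false :: ε)) opA, memA _⟩ *
              q ⟨opa k, mema k⟩) := by
        rw [hq, inv_mul_cancel_left]
      rw [hx]
      have hk : q ⟨opa k, mema k⟩ ∈ H := Subgroup.subset_closure ⟨k, rfl⟩
      exact mul_mem (inv_mem hk)
        (mul_mem (ihN (false :: ε) (by simp at hα ⊢; omega) k) hk)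
    | false :: true :: ε =>
      have hq := qrel q (memA _) (mema k) (mema k) (memA _) (liftI2 k ε)
      have hx : q ⟨applyAt (List.replicate k true ++ (false :: true :: ε)) opA, memA _⟩ =
          (q ⟨opa k, mema k⟩)⁻¹ *
            (q ⟨applyAt (List.replicate k true ++ (true :: false :: ε)) opA, memA _⟩ *
              q ⟨opa k, mema k⟩) := by
        rw [hq, inv_mul_cancel_left]
      rw [hx]
      have hk : q ⟨opa k, mema k⟩ ∈ H := Subgroup.subset_closure ⟨k, rfl⟩
      have hr : q ⟨applyAt (List.replicate k true ++ (true :: false :: ε)) opA, memA _⟩ ∈ H := by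
        rw [show List.replicate k true ++ (true :: false :: ε) =
          List.replicate (k+1) true ++ (false :: ε) from rep_cons k _]
        exact ihN (false :: ε) (by simp at hα ⊢; omega) (k+1)
      exact mul_mem (inv_mem hk) (mul_mem hr hk)

/-- `A_α * A_α⁻¹` is near-equal to the identity, hence `q` sends the inverse
operator to the group inverse. -/
theorem qAi (hiff : ∀ f g : GeoA, q f = q g ↔ NearEq f.1 g.1) (γ : Addr) :
    q ⟨applyAt γ opAi, memAi γ⟩ = (q ⟨applyAt γ opA, memA γ⟩)⁻¹ := by
  have hne : NearEq (applyAt γ opA * applyAt γ opAi) ((1 : GeoA) : PMap) := by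
    constructor
    · refine ⟨graft γ (node (leaf 1) (node (leaf 1) (leaf 1))), ?_, ?_⟩
      · have h1 : applyAt γ opA (graft γ (node (leaf 1) (node (leaf 1) (leaf 1)))) =
            some (graft γ (node (node (leaf 1) (leaf 1)) (leaf 1))) := by
          rw [applyAt_graft]; rfl
        rw [mul_app, h1, Option.bind_some, inv_pt γ _ _ h1]
        rfl
      · rfl
    · intro t h1 _
      rw [mul_app] at h1
      obtain ⟨s, hs⟩ := Option.isSome_iff_exists.mp h1
      obtain ⟨w, hw, hw2⟩ := Option.bind_eq_some_iff.mp hs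
      show (applyAt γ opA * applyAt γ opAi) t = some t
      rw [mul_app, hw, Option.bind_some, inv_pt γ t w hw]
  have h1 : q (⟨applyAt γ opA, memA γ⟩ * ⟨applyAt γ opAi, memAi γ⟩) = q 1 :=
    (hiff _ _).mpr hne
  rw [map_mul, map_one] at h1
  exact eq_inv_of_mul_eq_one_right h1

end Qside
end Aux
namespace Aux
open CTree

section Main

variable {G : Type*} [Group G] (q : GeoA →* G)

theorem qmem : ∀ (hiff : ∀ f g : GeoA, q f = q g ↔ NearEq f.1 g.1)
    (f : PMap) (hf : f ∈ GeoA),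
    q ⟨f, hf⟩ ∈ Subgroup.closure (Set.range fun n : ℕ => q ⟨opa n, mema n⟩) := by
  intro hiff f hf
  induction hf using Submonoid.closure_induction with
  | mem x hx =>
    obtain ⟨α, rfl | rfl⟩ := hx
    · have := keyA q α.length α le_rfl 0
      have he : (⟨applyAt (List.replicate 0 true ++ α) opA, memA _⟩ : GeoA) =
          ⟨applyAt α opA, memA α⟩ := Subtype.ext (by simp)
      rw [he] at this
      exact this
    · show q ⟨applyAt α opAi, memAi α⟩ ∈ _
      rw [qAi q hiff α]
      refine inv_mem ?_
      have := keyA q α.length α le_rfl 0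
      have he : (⟨applyAt (List.replicate 0 true ++ α) opA, memA _⟩ : GeoA) =
          ⟨applyAt α opA, memA α⟩ := Subtype.ext (by simp)
      rw [he] at this
      exact this
  | one =>
    show q 1 ∈ _
    rw [map_one]
    exact one_mem _
  | mul x y hx hy ihx ihy =>
    show q (⟨x, hx⟩ * ⟨y, hy⟩) ∈ _
    rw [map_mul]
    exact mul_mem ihx ihy

theorem part1 (hsurj : Function.Surjective q)
    (hiff : ∀ f g : GeoA, q f = q g ↔ NearEq f.1 g.1) :
    Subgroup.closure (Set.range fun n : ℕ => q ⟨opa n, mema n⟩) = ⊤ := by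
  rw [eq_top_iff]
  intro g _
  obtain ⟨⟨f, hf⟩, rfl⟩ := hsurj g
  exact qmem q hiff f hf

theorem relq : ∀ r ∈ relsa, FreeGroup.lift (fun n : ℕ => q ⟨opa n, mema n⟩) r = 1 := by
  rintro r ⟨n, k, rfl⟩
  rw [map_mul, map_mul, map_inv, map_mul]
  simp only [FreeGroup.lift_apply_of]
  rw [mul_inv_eq_one]
  exact qrel q (mema n) (mema (n+1+k)) (mema (n+2+k)) (mema n) (opa_swap n k)

noncomputable def phi : Pg →* G := PresentedGroup.toGroup (relq q)

theorem phi_xg (n : ℕ) : phi q (xg n) = q ⟨opa n, mema n⟩ :=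
  PresentedGroup.toGroup.of (relq q)

theorem phi_pos (l : List ℕ) : phi q (pos l) = q ⟨Fw l, Fw_mem l⟩ := by
  induction l with
  | nil =>
    show phi q 1 = q 1
    rw [map_one, map_one]
  | cons n l ih =>
    rw [pos_cons, map_mul, phi_xg, ih]
    show _ = q (⟨opa n, mema n⟩ * ⟨Fw l, Fw_mem l⟩)
    rw [map_mul]

theorem phi_inj (hiff : ∀ f g : GeoA, q f = q g ↔ NearEq f.1 g.1) :
    Function.Injective (phi q) := by
  rw [injective_iff_map_eq_one]
  intro g hg
  obtain ⟨a, b, rfl⟩ := frac g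
  have h2 : phi q (pos a) = phi q (pos b) := by
    rw [map_mul, map_inv] at hg
    exact inv_mul_eq_one.mp hg
  rw [phi_pos, phi_pos] at h2
  have hne := (hiff _ _).mp h2
  set N := max (bnd a) (bnd b) with hN
  set t := vine 0 N with ht
  have hrt : rsl t = N := vine_rsl 0 N
  obtain ⟨Ta, hTa⟩ := Fw_total (u := a) (t := t) (by rw [hrt]; exact le_max_left _ _)
  obtain ⟨Tb, hTb⟩ := Fw_total (u := b) (t := t) (by rw [hrt]; exact le_max_right _ _)
  have heq : Fw a t = Fw b t :=
    hne.2 t (by show (Fw a t).isSome = true; rw [hTa]; rfl)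
      (by show (Fw b t).isSome = true; rw [hTb]; rfl)
  have hco : pos a = pos b := by
    refine coherence b a t Ta (vine_nodup 0 N) hTa ?_
    rw [← heq, hTa]
  rw [hco, inv_mul_cancel]

theorem phi_surj (hsurj : Function.Surjective q)
    (hiff : ∀ f g : GeoA, q f = q g ↔ NearEq f.1 g.1) :
    Function.Surjective (phi q) := by
  rw [← MonoidHom.range_eq_top, eq_top_iff, ← part1 q hsurj hiff,
    Subgroup.closure_le]
  rintro x ⟨n, rfl⟩
  exact ⟨xg n, phi_xg q n⟩

end Main
end Aux

/-- Proposition 2.14: the family `a` generates the geometry group `G(A)` — i.e. any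
group `G` obtained from the geometry monoid `𝒢(A)` by identifying near-equal
elements — and the relations `a_i·a_{j-1} = a_j·a_i` (`j ≥ i+2`) make a presentation
of `G(A)` in terms of these generators. -/
theorem stmt10 (G : Type*) [Group G] (q : GeoA →* G)
    (hsurj : Function.Surjective q)
    (hiff : ∀ f g : GeoA, q f = q g ↔ NearEq f.1 g.1) :
    Subgroup.closure (Set.range fun n : ℕ => q ⟨opa n, mema n⟩) = ⊤ ∧
    ∃ iso : PresentedGroup relsa ≃* G,
      ∀ n : ℕ, iso (PresentedGroup.of n) = q ⟨opa n, mema n⟩ := by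
  refine ⟨Aux.part1 q hsurj hiff,
    MulEquiv.ofBijective (Aux.phi q)
      ⟨Aux.phi_inj q hiff, Aux.phi_surj q hsurj hiff⟩, fun n => ?_⟩
  show Aux.phi q (PresentedGroup.of n) = _
  exact Aux.phi_xg q n
end

section
/- For all disjoint finite sets I, J of positive integers and every coloured tree t, the word c_{I,J}, acting letterwise via the operators c_i = C_{1^{i−1}} and s_i = S_{1^{i−1}}, maps the coloured right vine ⟨I ∪ J⟩ to ⟨I, J⟩, and the word s_{I,J} maps ⟨I ∪ J, t⟩ to ⟨I, J, t⟩. -/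
/-- Letters `c_i` and `s_i` (`i ≥ 1`). -/
inductive CS : Type
  | c : ℕ → CS
  | s : ℕ → CS

/-- Words in the letters `c_i`, `s_i`. -/
abbrev CSWord := List CS

/-- `∂w`: replace each index `i` by `i+1`. -/
def shiftCS (w : CSWord) : CSWord :=
  w.map (fun x => match x with | .c i => .c (i + 1) | .s i => .s (i + 1))

/-- The word `s₁s₂⋯s_p`. -/
def sseq (p : ℕ) : CSWord := (List.range p).map (fun i => CS.s (i + 1))

/-- The word `s₁s₂⋯s_{p-1}c_p` (empty for `p = 0`). -/
def cfin (p : ℕ) : CSWord :=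
  if p = 0 then [] else (List.range (p - 1)).map (fun i => CS.s (i + 1)) ++ [CS.c p]

/-- The words `c_{I,J}` (for `useC = true`) and `s_{I,J}` (for `useC = false`),
defined inductively by removing the least element `ℓ` of `I ∪ J`:
`c_{∅,∅} = s_{∅,∅} = ε`; `c_{{ℓ}∪I,J} = ∂c_{I,J}`; for `I` of cardinality `p`,
`c_{I,{ℓ}∪J} = s₁s₂⋯s_{p-1}c_p` if `J = ∅` and `∂c_{I,J}·s₁s₂⋯s_p` otherwise;
and `s_{I,J}` obeys the same rules except that `s_{I,{ℓ}} = s₁s₂⋯s_p`.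
(For disjoint `I`, `J`, erasing `ℓ` from both arguments agrees with the rules.) -/
def csword (useC : Bool) (I J : Finset ℕ+) : CSWord :=
  if h : (I ∪ J).Nonempty then
    if (I ∪ J).min' h ∈ I then
      shiftCS (csword useC (I.erase ((I ∪ J).min' h)) (J.erase ((I ∪ J).min' h)))
    else if J.erase ((I ∪ J).min' h) = ∅ then
      (if useC then cfin I.card else sseq I.card)
    else
      shiftCS (csword useC (I.erase ((I ∪ J).min' h)) (J.erase ((I ∪ J).min' h))) ++
        sseq I.card
  else []
termination_by (I ∪ J).card
decreasing_by
  all_goals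
    rw [← Finset.erase_union_distrib]
    exact Finset.card_erase_lt_of_mem (Finset.min'_mem _ h)

/-- Interpretation of letters: `c_i = C_{1^{i-1}}` and `s_i = S_{1^{i-1}}`. -/
def interpCS : CS → PMap
  | .c i => applyAt (List.replicate (i - 1) true) opC
  | .s i => applyAt (List.replicate (i - 1) true) opS

/-- Letterwise action of a word on a coloured tree, from left to right. -/
def runCS : CSWord → CTree → Option CTree
  | [], t => some t
  | x :: w, t => (interpCS x t).bind (runCS w)

/-- The coloured right vine on a list of labels (junk value for the empty list). -/
def vineOf : List ℕ+ → CTree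
  | [] => .leaf 1
  | [x] => .leaf x
  | x :: y :: l => .node (.leaf x) (vineOf (y :: l))

/-- `⟨l, t⟩`: the right vine with leaf labels `l` followed by the tree `t`. -/
def vineOfT : List ℕ+ → CTree → CTree
  | [], t => t
  | x :: l, t => .node (.leaf x) (vineOfT l t)

/-! ### Auxiliary lemmas -/

def csIdx : CS → ℕ
  | .c i => i
  | .s i => i

lemma runCS_append (w₁ w₂ : CSWord) (t : CTree) :
    runCS (w₁ ++ w₂) t = (runCS w₁ t).bind (runCS w₂) := by
  induction w₁ generalizing t with
  | nil => rfl
  | cons x w ih =>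
    show (interpCS x t).bind (runCS (w ++ w₂))
      = ((interpCS x t).bind (runCS w)).bind (runCS w₂)
    cases interpCS x t with
    | none => rfl
    | some u => exact ih u

lemma runCS_shift (w : CSWord) (hw : ∀ x ∈ w, 1 ≤ csIdx x) (s t : CTree) :
    runCS (shiftCS w) (.node s t) = (runCS w t).map (.node s) := by
  induction w generalizing t with
  | nil => rfl
  | cons x w ih =>
    have hx : 1 ≤ csIdx x := hw x (by simp)
    have hw' : ∀ y ∈ w, 1 ≤ csIdx y := fun y hy => hw y (by simp [hy])
    have hstep : interpCS ((fun x => match x with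
        | .c i => CS.c (i + 1) | .s i => CS.s (i + 1)) x) (.node s t)
        = (interpCS x t).map (.node s) := by
      cases x with
      | c i =>
        have hi : i - 1 + 1 = i := Nat.succ_pred_eq_of_pos hx
        show applyAt (List.replicate (i + 1 - 1) true) opC (.node s t) = _
        have : i + 1 - 1 = (i - 1) + 1 := by omega
        rw [this, List.replicate_succ]
        rfl
      | s i =>
        have hi : i - 1 + 1 = i := Nat.succ_pred_eq_of_pos hx
        show applyAt (List.replicate (i + 1 - 1) true) opS (.node s t) = _
        have : i + 1 - 1 = (i - 1) + 1 := by omega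
        rw [this, List.replicate_succ]
        rfl
    show (interpCS _ (.node s t)).bind (runCS (shiftCS w))
      = ((interpCS x t).bind (runCS w)).map (.node s)
    rw [hstep]
    cases interpCS x t with
    | none => rfl
    | some u => exact ih hw' u

lemma shiftCS_idx (w : CSWord) : ∀ x ∈ shiftCS w, 1 ≤ csIdx x := by
  intro x hx
  simp only [shiftCS, List.mem_map] at hx
  obtain ⟨y, _, rfl⟩ := hx
  cases y <;> simp [csIdx]

lemma sseq_idx (p : ℕ) : ∀ x ∈ sseq p, 1 ≤ csIdx x := by
  intro x hx
  simp only [sseq, List.mem_map] at hx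
  obtain ⟨y, _, rfl⟩ := hx
  simp [csIdx]

lemma sseq_succ (p : ℕ) : sseq (p + 1) = CS.s 1 :: shiftCS (sseq p) := by
  simp [sseq, shiftCS, List.range_succ_eq_map, List.map_map, Function.comp]

lemma vineOfT_append (l₁ l₂ : List ℕ+) (t : CTree) :
    vineOfT (l₁ ++ l₂) t = vineOfT l₁ (vineOfT l₂ t) := by
  induction l₁ with
  | nil => rfl
  | cons x l ih => simp [vineOfT, ih]

lemma vineOf_cons (x : ℕ+) (l : List ℕ+) (h : l ≠ []) :
    vineOf (x :: l) = .node (.leaf x) (vineOf l) := by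
  cases l with
  | nil => exact absurd rfl h
  | cons y l => rfl

lemma vineOf_append (l₁ l₂ : List ℕ+) (h : l₂ ≠ []) :
    vineOf (l₁ ++ l₂) = vineOfT l₁ (vineOf l₂) := by
  induction l₁ with
  | nil => rfl
  | cons x l ih =>
    have hne : l ++ l₂ ≠ [] := by simp [h]
    rw [List.cons_append, vineOf_cons _ _ hne, ih]
    rfl

lemma runCS_sseq (l : List ℕ+) (m : ℕ+) (t : CTree) :
    runCS (sseq l.length) (.node (.leaf m) (vineOfT l t))
      = some (vineOfT l (.node (.leaf m) t)) := by
  induction l generalizing t with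
  | nil => rfl
  | cons x l ih =>
    rw [List.length_cons, sseq_succ]
    show (interpCS (CS.s 1) _).bind (runCS (shiftCS (sseq l.length)))
      = _
    have h1 : interpCS (CS.s 1) (.node (.leaf m) (vineOfT (x :: l) t))
        = some (.node (.leaf x) (.node (.leaf m) (vineOfT l t))) := rfl
    rw [h1]
    show runCS (shiftCS (sseq l.length)) (.node (.leaf x) (.node (.leaf m) (vineOfT l t))) = _
    rw [runCS_shift _ (sseq_idx _) _ _, ih t]
    rfl

lemma applyAt_trues (f : PMap) (l : List ℕ+) (u : CTree) :
    applyAt (List.replicate l.length true) f (vineOfT l u) = (f u).map (vineOfT l) := by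
  induction l with
  | nil =>
    show f u = (f u).map id
    cases f u <;> rfl
  | cons x l ih =>
    rw [List.length_cons, List.replicate_succ]
    show (applyAt (List.replicate l.length true) f (vineOfT l u)).map _ = _
    rw [ih]
    cases f u <;> rfl

lemma cfin_succ (p : ℕ) : cfin (p + 1) = sseq p ++ [CS.c (p + 1)] := by
  simp [cfin, sseq]

lemma runCS_cfin (l : List ℕ+) (z m : ℕ+) :
    runCS (cfin (l.length + 1)) (.node (.leaf m) (vineOfT l (.leaf z)))
      = some (vineOfT l (.node (.leaf z) (.leaf m))) := by
  rw [cfin_succ, runCS_append, runCS_sseq]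
  show (interpCS (CS.c (l.length + 1)) _).bind (runCS [])
    = _
  have : interpCS (CS.c (l.length + 1))
      (vineOfT l (.node (.leaf m) (.leaf z)))
      = some (vineOfT l (.node (.leaf z) (.leaf m))) := by
    show applyAt (List.replicate (l.length + 1 - 1) true) opC _ = _
    rw [Nat.add_sub_cancel, applyAt_trues]
    rfl
  rw [this]
  rfl

lemma sort_min'_cons (s : Finset ℕ+) (h : s.Nonempty) :
    s.sort (· ≤ ·) = s.min' h :: ((s.erase (s.min' h)).sort (· ≤ ·)) := by
  conv_lhs => rw [← Finset.insert_erase (s.min'_mem h)]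
  rw [Finset.sort_insert]
  · exact fun b hb => s.min'_le b (Finset.mem_of_mem_erase hb)
  · exact Finset.notMem_erase _ _

lemma sort_eq_empty {s : Finset ℕ+} (h : s.sort (· ≤ ·) = []) : s = ∅ := by
  rw [← Finset.card_eq_zero, ← Finset.length_sort (α := ℕ+) (· ≤ ·), h]
  rfl

lemma sort_ne_nil {s : Finset ℕ+} (hs : s ≠ ∅) : s.sort (· ≤ ·) ≠ [] :=
  fun hc => hs (sort_eq_empty hc)

lemma cfin_idx (p : ℕ) : ∀ x ∈ cfin p, 1 ≤ csIdx x := by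
  intro x hx
  simp only [cfin] at hx
  split at hx
  · simp at hx
  · rcases List.mem_append.mp hx with h | h
    · simp only [List.mem_map] at h
      obtain ⟨y, _, rfl⟩ := h
      simp [csIdx]
    · simp only [List.mem_singleton] at h
      subst h
      simp only [csIdx]
      omega

lemma csword_idx (uC : Bool) (I J : Finset ℕ+) : ∀ x ∈ csword uC I J, 1 ≤ csIdx x := by
  rw [csword]
  split
  · split
    · exact shiftCS_idx _
    · split
      · split
        · exact cfin_idx _
        · exact sseq_idx _
      · intro x hx
        rcases List.mem_append.mp hx with h | h
        · exact shiftCS_idx _ x h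
        · exact sseq_idx _ x h
  · simp

lemma stmt12_aux (n : ℕ) : ∀ (I J : Finset ℕ+), (I ∪ J).card ≤ n → Disjoint I J →
    runCS (csword true I J) (vineOf ((I ∪ J).sort (· ≤ ·))) =
      some (vineOf (I.sort (· ≤ ·) ++ J.sort (· ≤ ·))) ∧
    ∀ t : CTree,
      runCS (csword false I J) (vineOfT ((I ∪ J).sort (· ≤ ·)) t) =
        some (vineOfT (I.sort (· ≤ ·) ++ J.sort (· ≤ ·)) t) := by
  induction n with
  | zero =>
    intro I J hcard hdisj
    have hIJ : I ∪ J = ∅ := Finset.card_eq_zero.mp (Nat.le_zero.mp hcard)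
    obtain ⟨hI, hJ⟩ := Finset.union_eq_empty.mp hIJ
    subst hI; subst hJ
    rw [csword, csword]
    simp
    exact ⟨rfl, fun t => rfl⟩
  | succ n ih =>
    intro I J hcard hdisj
    by_cases h : (I ∪ J).Nonempty
    · set ℓ := (I ∪ J).min' h with hℓ
      have hℓmem : ℓ ∈ I ∪ J := Finset.min'_mem _ h
      have hsortIJ : (I ∪ J).sort (· ≤ ·) = ℓ :: (((I ∪ J).erase ℓ).sort (· ≤ ·)) :=
        sort_min'_cons _ h
      have herase : (I ∪ J).erase ℓ = I.erase ℓ ∪ J.erase ℓ := Finset.erase_union_distrib _ _ _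
      have hcard' : ((I.erase ℓ) ∪ (J.erase ℓ)).card ≤ n := by
        rw [← herase]
        have := Finset.card_erase_lt_of_mem hℓmem
        omega
      have hdisj' : Disjoint (I.erase ℓ) (J.erase ℓ) :=
        hdisj.mono (Finset.erase_subset _ _) (Finset.erase_subset _ _)
      by_cases hI : ℓ ∈ I
      · -- ℓ ∈ I, so ℓ ∉ J
        have hJ : ℓ ∉ J := fun hJ => (Finset.disjoint_left.mp hdisj hI) hJ
        have hJe : J.erase ℓ = J := Finset.erase_eq_of_notMem hJ
        have hsortI : I.sort (· ≤ ·) = ℓ :: ((I.erase ℓ).sort (· ≤ ·)) := by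
          have hIne : I.Nonempty := ⟨ℓ, hI⟩
          have : I.min' hIne = ℓ := le_antisymm (I.min'_le _ hI)
            (Finset.min'_le _ _ (Finset.mem_union_left _ (I.min'_mem hIne)))
          rw [← this]
          exact sort_min'_cons _ hIne
        obtain ⟨ihc, ihs⟩ := ih (I.erase ℓ) (J.erase ℓ) hcard' hdisj'
        rw [hJe] at ihc ihs
        constructor
        · rw [csword]
          simp only [dif_pos h, if_pos hI, ← hℓ]
          rw [hsortIJ, herase, hJe]
          by_cases hne : (I.erase ℓ ∪ J) = ∅
          · obtain ⟨hIe2, hJ0⟩ := Finset.union_eq_empty.mp hne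
            have hw : csword true (I.erase ℓ) J = [] := by
              rw [hIe2, hJ0, csword]; simp
            rw [hw, hne, hsortI, hIe2, hJ0]
            simp [shiftCS, runCS, vineOf]
          · have hsne : ((I.erase ℓ ∪ J).sort (· ≤ ·)) ≠ [] := sort_ne_nil hne
            rw [vineOf_cons _ _ hsne, runCS_shift _ (csword_idx _ _ _), ihc, hsortI]
            have hsne2 : (I.erase ℓ).sort (· ≤ ·) ++ J.sort (· ≤ ·) ≠ [] := by
              intro hc
              rcases List.append_eq_nil_iff.mp hc with ⟨h1, h2⟩
              exact hne (by rw [sort_eq_empty h1, sort_eq_empty h2]; simp)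
            rw [List.cons_append, vineOf_cons _ _ hsne2]
            rfl
        · intro t
          rw [csword]
          simp only [dif_pos h, if_pos hI, ← hℓ]
          rw [hsortIJ, herase, hJe]
          show runCS (shiftCS _) (.node (.leaf ℓ) (vineOfT _ t)) = _
          rw [runCS_shift _ (csword_idx _ _ _), ihs t, hsortI]
          rfl
      · -- ℓ ∈ J
        have hJ : ℓ ∈ J := (Finset.mem_union.mp hℓmem).resolve_left hI
        have hIe : I.erase ℓ = I := Finset.erase_eq_of_notMem hI
        have hsortJ : J.sort (· ≤ ·) = ℓ :: ((J.erase ℓ).sort (· ≤ ·)) := by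
          have hJne : J.Nonempty := ⟨ℓ, hJ⟩
          have : J.min' hJne = ℓ := le_antisymm (J.min'_le _ hJ)
            (Finset.min'_le _ _ (Finset.mem_union_right _ (J.min'_mem hJne)))
          rw [← this]
          exact sort_min'_cons _ hJne
        have hlen : I.card = (I.sort (· ≤ ·)).length := (Finset.length_sort _).symm
        by_cases hJe : J.erase ℓ = ∅
        · -- J = {ℓ}
          have hsortJ2 : J.sort (· ≤ ·) = [ℓ] := by rw [hsortJ, hJe]; simp
          have hsIJ : (I ∪ J).sort (· ≤ ·) = ℓ :: I.sort (· ≤ ·) := by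
            rw [hsortIJ, herase, hIe, hJe, Finset.union_empty]
          constructor
          · rw [csword]
            simp only [dif_pos h, if_neg hI, if_pos hJe, ← hℓ, if_true, Bool.true_eq, ite_true]
            rw [hsIJ, hsortJ2]
            rcases hIs : I.sort (· ≤ ·) with _ | ⟨x, l⟩
            · have hI0 : I = ∅ := sort_eq_empty hIs
              rw [hI0]
              simp [cfin, runCS, vineOf]
            · have hcardI : I.card = l.length + 1 := by rw [hlen, hIs]; rfl
              obtain ⟨l', z, hlz⟩ : ∃ l' z, x :: l = l' ++ [z] :=
                ⟨(x :: l).dropLast, (x :: l).getLast (by simp),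
                  (List.dropLast_append_getLast (by simp)).symm⟩
              have hlen' : l'.length + 1 = I.card := by
                rw [hcardI]
                have := congrArg List.length hlz
                simp at this
                omega
              rw [hlz]
              have h1 : vineOf (ℓ :: (l' ++ [z])) = .node (.leaf ℓ) (vineOfT l' (.leaf z)) := by
                rw [vineOf_cons _ _ (by simp), vineOf_append _ _ (by simp)]
                rfl
              rw [h1, ← hlen', runCS_cfin]
              congr 1
              have h2 : vineOf ((l' ++ [z]) ++ [ℓ]) = vineOfT (l' ++ [z]) (vineOf [ℓ]) :=
                vineOf_append _ _ (by simp)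
              rw [h2, vineOfT_append]
              rfl
          · intro t
            rw [csword]
            simp only [dif_pos h, if_neg hI, if_pos hJe, if_neg (Bool.false_ne_true), ← hℓ]
            rw [hsIJ, hsortJ2]
            show runCS (sseq I.card) (.node (.leaf ℓ) (vineOfT (I.sort (· ≤ ·)) t)) = _
            rw [hlen, runCS_sseq, vineOfT_append]
            rfl
        · -- J.erase ℓ ≠ ∅
          obtain ⟨ihc, ihs⟩ := ih (I.erase ℓ) (J.erase ℓ) hcard' hdisj'
          rw [hIe] at ihc ihs
          have hsIJ : (I ∪ J).sort (· ≤ ·) = ℓ :: ((I ∪ J.erase ℓ).sort (· ≤ ·)) := by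
            rw [hsortIJ, herase, hIe]
          have hJsne : (J.erase ℓ).sort (· ≤ ·) ≠ [] := sort_ne_nil hJe
          constructor
          · rw [csword]
            simp only [dif_pos h, if_neg hI, if_neg hJe, ← hℓ]
            rw [hIe, hsIJ, runCS_append]
            have hsne : ((I ∪ J.erase ℓ).sort (· ≤ ·)) ≠ [] := by
              apply sort_ne_nil
              intro hc
              exact hJe (Finset.union_eq_empty.mp hc).2
            rw [vineOf_cons _ _ hsne, runCS_shift _ (csword_idx _ _ _), ihc]
            show runCS (sseq I.card)
              (.node (.leaf ℓ) (vineOf (I.sort (· ≤ ·) ++ (J.erase ℓ).sort (· ≤ ·)))) = _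
            rw [vineOf_append _ _ hJsne, hlen, runCS_sseq]
            congr 1
            rw [hsortJ, vineOf_append _ _ (by simp)]
            congr 1
            rw [vineOf_cons _ _ hJsne]
          · intro t
            rw [csword]
            simp only [dif_pos h, if_neg hI, if_neg hJe, ← hℓ]
            rw [hIe, hsIJ, runCS_append]
            show (runCS (shiftCS _) (.node (.leaf ℓ) (vineOfT _ t))).bind _ = _
            rw [runCS_shift _ (csword_idx _ _ _), ihs t]
            show runCS (sseq I.card)
              (.node (.leaf ℓ) (vineOfT (I.sort (· ≤ ·) ++ (J.erase ℓ).sort (· ≤ ·)) t)) = _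
            rw [vineOfT_append, hlen, runCS_sseq, hsortJ, vineOfT_append]
            rfl
    · have hIJ : I ∪ J = ∅ := Finset.not_nonempty_iff_eq_empty.mp h
      obtain ⟨hI, hJ⟩ := Finset.union_eq_empty.mp hIJ
      subst hI; subst hJ
      rw [csword, csword]
      simp
      exact ⟨rfl, fun t => rfl⟩

/-- Lemma 3.9: for disjoint finite sets `I, J` of positive integers and every
coloured tree `t`, the word `c_{I,J}` maps the coloured right vine `⟨I ∪ J⟩` to
`⟨I, J⟩`, and the word `s_{I,J}` maps `⟨I ∪ J, t⟩` to `⟨I, J, t⟩`. -/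
theorem stmt12 (I J : Finset ℕ+) (hdisj : Disjoint I J) :
    runCS (csword true I J) (vineOf ((I ∪ J).sort (· ≤ ·))) =
      some (vineOf (I.sort (· ≤ ·) ++ J.sort (· ≤ ·))) ∧
    ∀ t : CTree,
      runCS (csword false I J) (vineOfT ((I ∪ J).sort (· ≤ ·)) t) =
        some (vineOfT (I.sort (· ≤ ·) ++ J.sort (· ≤ ·)) t) :=
  stmt12_aux (I ∪ J).card I J le_rfl hdisj
end
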